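/- arXiv:1405.1218 — 6 statements merged into one kernel-verified Lean document; each statement's English description precedes it below -/
import Mathlib

section
/- For all real t, |t - t²/2| · e^{t - t²/2} ≤ 2·min(1, |t|). -/
theorem abs_mul_exp_le (t : ℝ) :
    |t - t ^ 2 / 2| * Real.exp (t - t ^ 2 / 2) ≤ 2 * min 1 |t| := by
  set u := t - t ^ 2 / 2 with hu
  clear_value u
  have hu2 : u ≤ 1/2 := by rw [hu]; nlinarith [sq_nonneg (t - 1)]
  have hexp2 : Real.exp u ≤ 2 := by
    have h1 : Real.exp u ≤ Real.exp (1/2) := Real.exp_le_exp.mpr hu2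
    have h2 : Real.exp (1/2) * Real.exp (1/2) = Real.exp 1 := by
      rw [← Real.exp_add]; norm_num
    nlinarith [Real.exp_pos (1/2 : ℝ), Real.exp_one_lt_d9]
  rcases le_total 1 |t| with h | h
  · rw [min_eq_left h]
    rcases le_total u 0 with hle | hle
    · have h1 : -u + 1 ≤ Real.exp (-u) := Real.add_one_le_exp _
      have h2 : Real.exp (-u) * Real.exp u = 1 := by rw [← Real.exp_add]; simp
      rw [abs_of_nonpos hle]
      nlinarith [Real.exp_pos u]
    · rw [abs_of_nonneg hle]
      have h3 : u * Real.exp u ≤ u * 2 := mul_le_mul_of_nonneg_left hexp2 hle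
      linarith
  · rw [min_eq_right h]
    have habs : |u| = |t| * |1 - t / 2| := by
      rw [show u = t * (1 - t / 2) by rw [hu]; ring, abs_mul]
    rw [habs]
    have key : |1 - t / 2| * Real.exp u ≤ 2 := by
      rcases le_total 0 t with ht | ht
      · have ht1 : t ≤ 1 := le_trans (le_abs_self t) h
        rw [abs_of_nonneg (by linarith : (0:ℝ) ≤ 1 - t / 2)]
        nlinarith [Real.exp_pos u]
      · have ht1 : -1 ≤ t := neg_le_of_abs_le h
        have hune : u ≤ 0 := by rw [hu]; nlinarith
        have he1 : Real.exp u ≤ 1 := by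
          calc Real.exp u ≤ Real.exp 0 := Real.exp_le_exp.mpr hune
          _ = 1 := Real.exp_zero
        rw [abs_of_nonneg (by linarith : (0:ℝ) ≤ 1 - t / 2)]
        nlinarith [Real.exp_pos u]
    nlinarith [abs_nonneg t, abs_nonneg (1 - t / 2), Real.exp_pos u]
end

section
/- Let X be a real random variable with E X = 0, E X² < ∞, and let Y = X - X²/2, Z = X² - E X². Set δ₁₁ = E[X² 1{|X|>1}] and δ₁₂ = E[|X|³ 1{|X|≤1}]. Then |E[Z e^Y]| ≤ 4.2 δ₁₁ + 1.5 δ₁₂. -/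
open MeasureTheory

/-! Auxiliary analytic lemmas -/

private lemma l3aux_lemA {x : ℝ} (h0 : 0 ≤ x) (h1 : x ≤ 1) :
    Real.exp (x - x^2/2) - 1 - x ≤ 0 := by
  have hx1 : x * (1 - x) ≥ 0 := mul_nonneg h0 (by linarith)
  have ht0 : (0:ℝ) ≤ x - x^2/2 := by nlinarith
  have ht1 : |x - x^2/2| ≤ 1 := by rw [abs_of_nonneg ht0]; nlinarith
  have h2 := Real.exp_bound ht1 (n := 3) (by norm_num)
  simp [Finset.sum_range_succ, Nat.factorial] at h2
  rw [abs_of_nonneg ht0] at h2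
  have hub := (abs_le.mp h2).2
  nlinarith [hub, sq_nonneg x, mul_nonneg (mul_nonneg h0 h0) h0,
    mul_nonneg (mul_nonneg (mul_nonneg h0 h0) h0) h0]

private lemma l3aux_lemB {x : ℝ} (h0 : 0 ≤ x) (h1 : x ≤ 1) :
    -(0.38 * x^3) ≤ Real.exp (x - x^2/2) - 1 - x := by
  have hx1 : x * (1 - x) ≥ 0 := mul_nonneg h0 (by linarith)
  have ht0 : (0:ℝ) ≤ x - x^2/2 := by nlinarith
  have h := Real.sum_le_exp_of_nonneg ht0 4
  simp [Finset.sum_range_succ, Nat.factorial] at h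
  nlinarith [h, sq_nonneg x, sq_nonneg (x - 0.6),
    mul_nonneg (mul_nonneg h0 h0) (sq_nonneg (x-0.6)),
    mul_nonneg (mul_nonneg h0 h0) h0,
    mul_nonneg (mul_nonneg (mul_nonneg h0 h0) h0) h0]

private lemma l3aux_lemC {x : ℝ} (h0 : -1 ≤ x) (h1 : x ≤ 0) :
    0 ≤ Real.exp (x - x^2/2) - 1 - x := by
  rcases le_or_gt x (-0.7) with hc | hc
  · have ht3 : (0:ℝ) ≤ 1 + (x - x^2/2)/3 := by nlinarith
    have he : 1 + (x - x^2/2)/3 ≤ Real.exp ((x - x^2/2)/3) := by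
      have := Real.add_one_le_exp ((x - x^2/2)/3); linarith
    have hcube : (1 + (x - x^2/2)/3)^3 ≤ Real.exp ((x - x^2/2)/3)^3 :=
      pow_le_pow_left₀ ht3 he 3
    have hexp3 : Real.exp ((x - x^2/2)/3)^3 = Real.exp (x - x^2/2) := by
      rw [← Real.exp_nat_mul]; push_cast; ring_nf
    have ha : 0 ≤ x + 1 := by linarith
    have hb : 0 ≤ -0.7 - x := by linarith
    have hpoly : 1 + x ≤ (1 + (x - x^2/2)/3)^3 := by
      nlinarith [mul_nonneg ha hb, mul_nonneg (mul_nonneg ha hb) hb,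
        mul_nonneg (mul_nonneg ha ha) hb, mul_nonneg (mul_nonneg (mul_nonneg ha hb) hb) hb,
        mul_nonneg (mul_nonneg (mul_nonneg ha ha) hb) hb, sq_nonneg (x+1), sq_nonneg (x+0.85),
        mul_nonneg (mul_nonneg (mul_nonneg (mul_nonneg ha hb) hb) hb) hb,
        mul_nonneg (mul_nonneg (mul_nonneg (mul_nonneg ha ha) hb) hb) hb]
    rw [hexp3] at hcube
    linarith
  · have ht0 : x - x^2/2 ≤ 0 := by nlinarith
    have ht1 : |x - x^2/2| ≤ 1 := by rw [abs_of_nonpos ht0]; nlinarith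
    have h2 := Real.exp_bound ht1 (n := 3) (by norm_num)
    simp [Finset.sum_range_succ, Nat.factorial] at h2
    rw [abs_of_nonpos ht0] at h2
    have hlb := (abs_le.mp h2).1
    nlinarith [hlb, sq_nonneg x, mul_nonneg (sq_nonneg x) (neg_nonneg.mpr h1), sq_nonneg (x*x),
      mul_nonneg (mul_nonneg (sq_nonneg x) (neg_nonneg.mpr h1)) (neg_nonneg.mpr h1)]

private lemma l3aux_lemD {x : ℝ} (h0 : -1 ≤ x) (h1 : x ≤ 0) :
    Real.exp (x - x^2/2) - 1 - x ≤ -(0.38 * x^3) := by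
  rcases le_or_gt x (-0.7) with hc | hc
  · have hP : 1 + (-(x - x^2/2)) + (-(x - x^2/2))^2/2 ≤ Real.exp (-(x - x^2/2)) :=
      Real.quadratic_le_exp_of_nonneg (by nlinarith)
    have hPpos : (0:ℝ) < 1 - (x - x^2/2) + (x - x^2/2)^2/2 := by nlinarith
    have hepos := Real.exp_pos (x - x^2/2)
    have hmul : Real.exp (x - x^2/2) * (1 - (x - x^2/2) + (x - x^2/2)^2/2) ≤ 1 := by
      have h3 : Real.exp (x - x^2/2) * (1 - (x - x^2/2) + (x - x^2/2)^2/2)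
          ≤ Real.exp (x - x^2/2) * Real.exp (-(x - x^2/2)) := by
        apply mul_le_mul_of_nonneg_left _ hepos.le
        calc 1 - (x - x^2/2) + (x - x^2/2)^2/2
            = 1 + (-(x - x^2/2)) + (-(x - x^2/2))^2/2 := by ring
          _ ≤ Real.exp (-(x - x^2/2)) := hP
      rw [← Real.exp_add] at h3; simp at h3; linarith
    have ha : 0 ≤ x + 1 := by linarith
    have hb : 0 ≤ -0.7 - x := by linarith
    have hR : 1 ≤ (1 - (x - x^2/2) + (x - x^2/2)^2/2) * (1 + x - 0.38*x^3) := by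
      nlinarith [mul_nonneg ha hb, mul_nonneg (mul_nonneg ha hb) hb,
        mul_nonneg (mul_nonneg ha ha) hb, mul_nonneg (mul_nonneg (mul_nonneg ha hb) hb) hb,
        mul_nonneg (mul_nonneg (mul_nonneg ha ha) hb) hb, sq_nonneg (x+1), sq_nonneg (x+0.85),
        mul_nonneg (mul_nonneg (mul_nonneg (mul_nonneg ha hb) hb) hb) hb,
        mul_nonneg (mul_nonneg (mul_nonneg (mul_nonneg ha ha) hb) hb) hb,
        mul_nonneg (mul_nonneg (mul_nonneg (mul_nonneg ha ha) ha) hb) hb]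
    have hfin : Real.exp (x - x^2/2) ≤ 1 + x - 0.38*x^3 := by
      by_contra hcon
      push_neg at hcon
      have hgt : (1 - (x - x^2/2) + (x - x^2/2)^2/2) * (1 + x - 0.38*x^3)
          < (1 - (x - x^2/2) + (x - x^2/2)^2/2) * Real.exp (x - x^2/2) :=
        mul_lt_mul_of_pos_left hcon hPpos
      nlinarith [hmul, hR]
    linarith
  · have ht0 : x - x^2/2 ≤ 0 := by nlinarith
    have ht1 : |x - x^2/2| ≤ 1 := by rw [abs_of_nonpos ht0]; nlinarith
    have h2 := Real.exp_bound ht1 (n := 4) (by norm_num)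
    simp [Finset.sum_range_succ, Nat.factorial] at h2
    rw [abs_of_nonpos ht0] at h2
    have hub := (abs_le.mp h2).2
    have ha : 0 ≤ -x := by linarith
    have hb : 0 ≤ x + 0.7 := by linarith
    have hpoly : 1 + (x - x^2/2) + (x - x^2/2)^2/2 + (x - x^2/2)^3/6
        + (-(x - x^2/2))^4 * (5/(24*4)) ≤ 1 + x - 0.38*x^3 := by
      nlinarith [mul_nonneg ha hb, mul_nonneg (mul_nonneg ha ha) hb,
        mul_nonneg (mul_nonneg ha ha) (mul_nonneg ha hb),
        mul_nonneg (mul_nonneg (mul_nonneg ha ha) ha) (mul_nonneg ha hb),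
        mul_nonneg (mul_nonneg (mul_nonneg ha ha) (mul_nonneg ha ha)) (mul_nonneg ha hb),
        mul_nonneg (mul_nonneg (mul_nonneg ha ha) (mul_nonneg ha ha)) (mul_nonneg (mul_nonneg ha ha) hb),
        sq_nonneg x, mul_nonneg (mul_nonneg ha ha) ha,
        mul_nonneg (mul_nonneg (mul_nonneg ha ha) (mul_nonneg ha ha)) ha]
    linarith

private lemma l3aux_core {x m : ℝ} (hx : |x| ≤ 1) (hm : 0 ≤ m) :
    |(x^2 - m) * (Real.exp (x - x^2/2) - 1) + m * x| ≤ (1 + 0.38*m) * |x|^3 := by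
  rcases le_or_gt 0 x with hx0 | hx0
  · have h1 : x ≤ 1 := le_trans (le_abs_self x) hx
    have hA := l3aux_lemA hx0 h1
    have hB := l3aux_lemB hx0 h1
    have e1 : 0 ≤ -(Real.exp (x - x^2/2) - 1 - x) := by linarith
    have e2 : 0 ≤ (Real.exp (x - x^2/2) - 1 - x) + 0.38*x^3 := by linarith
    rw [abs_of_nonneg hx0, abs_le]
    constructor
    · nlinarith [mul_nonneg (sq_nonneg x) e2, mul_nonneg hm e1,
        mul_nonneg (mul_nonneg hx0 (mul_nonneg hx0 hx0)) hm,
        mul_nonneg (mul_nonneg (mul_nonneg hx0 hx0) (mul_nonneg hx0 hx0)) e2,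
        mul_nonneg (mul_nonneg hx0 (mul_nonneg hx0 hx0)) (by linarith : 0 ≤ 1 - x),
        mul_nonneg (mul_nonneg (mul_nonneg hx0 hx0) hx0) (mul_nonneg (mul_nonneg hx0 hx0) (by linarith : 0 ≤ 1 - x))]
    · nlinarith [mul_nonneg (sq_nonneg x) e1, mul_nonneg hm e2,
        mul_nonneg (mul_nonneg hx0 (mul_nonneg hx0 hx0)) hm]
  · have h0 : -1 ≤ x := by
      rcases abs_le.mp hx with ⟨h,_⟩; linarith
    have hC := l3aux_lemC h0 hx0.le
    have hD := l3aux_lemD h0 hx0.le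
    have e1 : 0 ≤ (Real.exp (x - x^2/2) - 1 - x) := hC
    have e2 : 0 ≤ -(0.38*x^3) - (Real.exp (x - x^2/2) - 1 - x) := by linarith
    have hxn : 0 ≤ -x := by linarith
    rw [abs_of_neg hx0, abs_le]
    constructor
    · nlinarith [mul_nonneg (sq_nonneg x) e1, mul_nonneg hm e2,
        mul_nonneg (mul_nonneg hxn (mul_nonneg hxn hxn)) hm]
    · nlinarith [mul_nonneg hm e1, mul_nonneg (sq_nonneg x) e2,
        mul_nonneg (mul_nonneg hxn (mul_nonneg hxn hxn)) hm,
        mul_nonneg (mul_nonneg (mul_nonneg hxn hxn) (mul_nonneg hxn hxn)) e2,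
        mul_nonneg (mul_nonneg hxn (mul_nonneg hxn hxn)) (by linarith : 0 ≤ 1 + x),
        mul_nonneg (mul_nonneg (mul_nonneg hxn hxn) hxn) (mul_nonneg (mul_nonneg hxn hxn) (by linarith : 0 ≤ 1 + x))]

private lemma l3aux_expHalf (x : ℝ) : Real.exp (x - x^2/2) ≤ Real.exp (1/2) :=
  Real.exp_le_exp.mpr (by nlinarith [sq_nonneg (x-1)])

private lemma l3aux_E5 : Real.exp (1/2) ≤ 1.64874 := by
  have h1 : Real.exp (1/2) * Real.exp (1/2) = Real.exp 1 := by
    rw [← Real.exp_add]; norm_num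
  have h2 := Real.exp_one_lt_d9
  have h3 := Real.exp_pos (1/2 : ℝ)
  nlinarith

private lemma l3aux_E5' : (1:ℝ) ≤ Real.exp (1/2) := Real.one_le_exp (by norm_num)

private lemma l3aux_expLe2 (x : ℝ) : Real.exp (x - x^2/2) ≤ 2 :=
  le_trans (l3aux_expHalf x) (by linarith [l3aux_E5])

private lemma l3aux_expNeg {x : ℝ} (hx : x ≤ -1) : Real.exp (x - x^2/2) ≤ 0.4 := by
  have ht : x - x^2/2 ≤ -(3/2) := by
    nlinarith [mul_nonneg (by linarith : 0 ≤ -(x+1)) (by linarith : 0 ≤ 3-x)]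
  have h1 : (5/2:ℝ) ≤ Real.exp (-(x - x^2/2)) := by
    have := Real.add_one_le_exp (-(x - x^2/2)); linarith
  have h2 := Real.exp_pos (x - x^2/2)
  have h3 : Real.exp (x - x^2/2) * Real.exp (-(x - x^2/2)) = 1 := by
    rw [← Real.exp_add]; norm_num
  nlinarith

private lemma l3aux_Bpt {x m : ℝ} (hm : 0 ≤ m) :
    |(x^2 - m) * (Real.exp (x - x^2/2) - 1)| ≤ x^2 + m := by
  rw [abs_mul]
  have h1 : |x^2 - m| ≤ x^2 + m := by
    rw [abs_le]; constructor <;> nlinarith [sq_nonneg x]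
  have h2 : |Real.exp (x - x^2/2) - 1| ≤ 1 := by
    rw [abs_le]
    constructor
    · linarith [Real.exp_pos (x - x^2/2)]
    · linarith [l3aux_expLe2 x]
  calc |x^2 - m| * |Real.exp (x - x^2/2) - 1| ≤ (x^2 + m) * 1 :=
        mul_le_mul h1 h2 (abs_nonneg _) (by nlinarith [sq_nonneg x])
    _ = x^2 + m := by ring

private lemma l3aux_midB {x m : ℝ} (hx : 1 < |x|) (hm1 : 1 ≤ m) (hm2 : m ≤ 2.5) :
    -(1.5 * Real.exp (1/2)) ≤ (x^2 - m) * Real.exp (x - x^2/2) := by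
  have hE := l3aux_E5'
  have hep := Real.exp_pos (x - x^2/2)
  rcases le_or_gt 1 x with hx1 | hx1
  · rcases le_or_gt m (x^2) with hc | hc
    · nlinarith
    · have h1 : x^2 - m ≥ -1.5 := by nlinarith
      have h2 := l3aux_expHalf x
      nlinarith
  · have hx2 : x ≤ -1 := by
      rcases abs_cases x with ⟨h,_⟩|⟨h,_⟩ <;> linarith
    have h1 := l3aux_expNeg hx2
    nlinarith

set_option maxHeartbeats 1000000 in
theorem lemma_l3_a {Ω : Type*} [MeasurableSpace Ω] (μ : Measure Ω) [IsProbabilityMeasure μ]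
    (X : Ω → ℝ) (hX : Measurable X) (hX2 : Integrable (fun ω => X ω ^ 2) μ)
    (hmean : ∫ ω, X ω ∂μ = 0)
    (Y Z : Ω → ℝ) (hY : ∀ ω, Y ω = X ω - X ω ^ 2 / 2)
    (hZ : ∀ ω, Z ω = X ω ^ 2 - ∫ ω, X ω ^ 2 ∂μ)
    (δ₁₁ δ₁₂ : ℝ) (hδ₁₁ : δ₁₁ = ∫ ω in {ω | 1 < |X ω|}, X ω ^ 2 ∂μ)
    (hδ₁₂ : δ₁₂ = ∫ ω in {ω | |X ω| ≤ 1}, |X ω| ^ 3 ∂μ) :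
    |∫ ω, Z ω * Real.exp (Y ω) ∂μ| ≤ 4.2 * δ₁₁ + 1.5 * δ₁₂ := by
  obtain ⟨m, hm⟩ : ∃ m, ∫ ω, X ω ^ 2 ∂μ = m := ⟨_, rfl⟩
  have hgoal_eq : (fun ω => Z ω * Real.exp (Y ω))
      = fun ω => (X ω ^ 2 - m) * Real.exp (X ω - X ω ^ 2 / 2) := by
    funext ω; rw [hZ, hY, hm]
  rw [hgoal_eq]
  -- the set A
  set A : Set Ω := {ω | |X ω| ≤ 1} with hAdef
  have hAm : MeasurableSet A := measurableSet_le hX.abs measurable_const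
  have hBA : {ω | 1 < |X ω|} = Aᶜ := by
    ext ω; simp [hAdef, not_le]
  rw [hBA] at hδ₁₁
  have hmemA : ∀ ω ∈ A, |X ω| ≤ 1 := fun ω hh => hh
  have hmemB : ∀ ω ∈ Aᶜ, 1 < |X ω| := fun ω hh => by simpa [hAdef, not_le] using hh
  -- measurability of the exponential factor
  have hEm : Measurable fun ω => Real.exp (X ω - X ω ^ 2 / 2) :=
    (hX.sub ((hX.pow_const 2).div_const 2)).exp
  -- basic integrable functions
  have hZint : Integrable (fun ω => X ω ^ 2 - m) μ := hX2.sub (integrable_const m)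
  have hZeY : Integrable (fun ω => (X ω ^ 2 - m) * Real.exp (X ω - X ω ^ 2 / 2)) μ := by
    have := hZint.bdd_mul (f := fun ω => Real.exp (X ω - X ω ^ 2 / 2))
      (c := 2) hEm.aestronglyMeasurable (Filter.Eventually.of_forall fun ω => by
        rw [Real.norm_eq_abs, abs_of_pos (Real.exp_pos _)]; exact l3aux_expLe2 (X ω))
    exact this.congr (Filter.Eventually.of_forall fun ω => by simp only []; ring)
  have hgint : Integrable (fun ω => (X ω ^ 2 - m) * (Real.exp (X ω - X ω ^ 2 / 2) - 1)) μ := by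
    have h := hZeY.sub hZint
    exact h.congr (Filter.Eventually.of_forall fun ω => by simp only [Pi.sub_apply]; ring)
  have hXint : Integrable X μ := by
    apply Integrable.mono ((integrable_const (1:ℝ)).add hX2) hX.aestronglyMeasurable
    refine Filter.Eventually.of_forall fun ω => ?_
    simp only [Real.norm_eq_abs, Pi.add_apply]
    rw [abs_of_nonneg (by positivity : (0:ℝ) ≤ 1 + X ω ^ 2)]
    nlinarith [sq_abs (X ω), sq_nonneg (|X ω| - 1), abs_nonneg (X ω)]
  have hmXint : Integrable (fun ω => m * X ω) μ := hXint.const_mul m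
  have hFint : Integrable
      (fun ω => (X ω ^ 2 - m) * (Real.exp (X ω - X ω ^ 2 / 2) - 1) + m * X ω) μ :=
    hgint.add hmXint
  have hX3A : IntegrableOn (fun ω => |X ω| ^ 3) A μ := by
    apply Integrable.mono hX2.integrableOn ((hX.abs.pow_const 3).aestronglyMeasurable.restrict)
    filter_upwards [ae_restrict_mem hAm] with ω hω
    have h1 : |X ω| ≤ 1 := hω
    simp only [Real.norm_eq_abs]
    rw [abs_of_nonneg (by positivity : (0:ℝ) ≤ |X ω| ^ 3),
      abs_of_nonneg (sq_nonneg (X ω))]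
    calc |X ω| ^ 3 ≤ |X ω| ^ 2 := pow_le_pow_of_le_one (abs_nonneg _) h1 (by norm_num)
      _ = X ω ^ 2 := sq_abs _
  -- scalar facts
  have hδ11nn : 0 ≤ δ₁₁ := by
    rw [hδ₁₁]; exact setIntegral_nonneg hAm.compl (fun ω _ => sq_nonneg _)
  have hδ12nn : 0 ≤ δ₁₂ := by
    rw [hδ₁₂]; exact setIntegral_nonneg hAm (fun ω _ => by positivity)
  have hmnn : 0 ≤ m := by
    rw [← hm]; exact integral_nonneg (fun ω => sq_nonneg _)
  have hmsplit : ∫ ω in A, X ω ^ 2 ∂μ + δ₁₁ = m := by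
    rw [hδ₁₁, integral_add_compl hAm hX2, hm]
  have hm1A : ∫ ω in A, X ω ^ 2 ∂μ ≤ 1 := by
    have h1 : ∫ ω in A, X ω ^ 2 ∂μ ≤ ∫ ω in A, (1:ℝ) ∂μ :=
      setIntegral_mono_on hX2.integrableOn
        (integrableOn_const (measure_lt_top _ _).ne) hAm
        (fun ω hω => by nlinarith [hmemA ω hω, sq_abs (X ω), abs_nonneg (X ω)])
    have h2 : ∫ ω in A, (1:ℝ) ∂μ = (μ A).toReal := by
      rw [setIntegral_const, measureReal_def, smul_eq_mul, mul_one]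
    have h3 : (μ A).toReal ≤ 1 := by
      have h : μ A ≤ 1 := prob_le_one
      simpa using ENNReal.toReal_mono (by norm_num) h
    linarith
  have hδ11big : m - 1 ≤ δ₁₁ := by linarith
  have hμB : (μ Aᶜ).toReal ≤ δ₁₁ := by
    have h2 : ∫ ω in Aᶜ, (1:ℝ) ∂μ = (μ Aᶜ).toReal := by
      rw [setIntegral_const, measureReal_def, smul_eq_mul, mul_one]
    rw [hδ₁₁, ← h2]
    exact setIntegral_mono_on (integrableOn_const (measure_lt_top _ _).ne)
      hX2.integrableOn hAm.compl
      (fun ω hω => by nlinarith [hmemB ω hω, sq_abs (X ω), abs_nonneg (X ω)])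
  have hμBnn : 0 ≤ (μ Aᶜ).toReal := ENNReal.toReal_nonneg
  have hXB : |∫ ω in Aᶜ, X ω ∂μ| ≤ δ₁₁ := by
    rw [hδ₁₁]
    calc |∫ ω in Aᶜ, X ω ∂μ| ≤ ∫ ω in Aᶜ, |X ω| ∂μ := by
          simpa [Real.norm_eq_abs] using norm_integral_le_integral_norm (μ := μ.restrict Aᶜ) X
      _ ≤ ∫ ω in Aᶜ, X ω ^ 2 ∂μ :=
          setIntegral_mono_on hXint.abs.integrableOn hX2.integrableOn hAm.compl
            (fun ω hω => by nlinarith [hmemB ω hω, sq_abs (X ω), abs_nonneg (X ω)])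
  have hXA : ∫ ω in A, X ω ∂μ = - ∫ ω in Aᶜ, X ω ∂μ := by
    have h := integral_add_compl hAm hXint
    rw [hmean] at h; linarith
  rcases le_or_gt m 1.3 with hc1 | hc1
  · -- fine case : m ≤ 1.3
    have hIg : ∫ ω, (X ω ^ 2 - m) * Real.exp (X ω - X ω ^ 2 / 2) ∂μ
        = ∫ ω, (X ω ^ 2 - m) * (Real.exp (X ω - X ω ^ 2 / 2) - 1) ∂μ := by
      have h0 : ∫ ω, (X ω ^ 2 - m) ∂μ = 0 := by
        rw [integral_sub hX2 (integrable_const m)]; simp [hm]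
      have h1 : ∫ ω, ((X ω ^ 2 - m) * Real.exp (X ω - X ω ^ 2 / 2) - (X ω ^ 2 - m)) ∂μ
          = ∫ ω, (X ω ^ 2 - m) * Real.exp (X ω - X ω ^ 2 / 2) ∂μ - ∫ ω, (X ω ^ 2 - m) ∂μ :=
        integral_sub hZeY hZint
      rw [h0, sub_zero] at h1
      rw [← h1]
      congr 1; funext ω; ring
    have hsplit := (integral_add_compl hAm hgint).symm
    have hAcalc : ∫ ω in A, (X ω ^ 2 - m) * (Real.exp (X ω - X ω ^ 2 / 2) - 1) ∂μ
        = (∫ ω in A, ((X ω ^ 2 - m) * (Real.exp (X ω - X ω ^ 2 / 2) - 1) + m * X ω) ∂μ)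
          - m * ∫ ω in A, X ω ∂μ := by
      rw [← integral_const_mul, ← integral_sub hFint.integrableOn hmXint.integrableOn]
      congr 1; funext ω; ring
    have hFbound : |∫ ω in A, ((X ω ^ 2 - m) * (Real.exp (X ω - X ω ^ 2 / 2) - 1) + m * X ω) ∂μ|
        ≤ (1 + 0.38 * m) * δ₁₂ := by
      calc |∫ ω in A, ((X ω ^ 2 - m) * (Real.exp (X ω - X ω ^ 2 / 2) - 1) + m * X ω) ∂μ|
          ≤ ∫ ω in A, |(X ω ^ 2 - m) * (Real.exp (X ω - X ω ^ 2 / 2) - 1) + m * X ω| ∂μ := by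
            exact norm_integral_le_integral_norm (μ := μ.restrict A)
              (fun ω => (X ω ^ 2 - m) * (Real.exp (X ω - X ω ^ 2 / 2) - 1) + m * X ω)
        _ ≤ ∫ ω in A, (1 + 0.38 * m) * |X ω| ^ 3 ∂μ :=
            setIntegral_mono_on hFint.abs.integrableOn (hX3A.const_mul _) hAm
              (fun ω hω => l3aux_core (hmemA ω hω) hmnn)
        _ = (1 + 0.38 * m) * δ₁₂ := by rw [integral_const_mul, hδ₁₂]
    have hconst : IntegrableOn (fun _ : Ω => m) Aᶜ μ :=
      integrableOn_const (measure_lt_top _ _).ne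
    have hB1 : |∫ ω in Aᶜ, (X ω ^ 2 - m) * (Real.exp (X ω - X ω ^ 2 / 2) - 1) ∂μ|
        ≤ ∫ ω in Aᶜ, |(X ω ^ 2 - m) * (Real.exp (X ω - X ω ^ 2 / 2) - 1)| ∂μ := by
      exact norm_integral_le_integral_norm (μ := μ.restrict Aᶜ)
        (fun ω => (X ω ^ 2 - m) * (Real.exp (X ω - X ω ^ 2 / 2) - 1))
    have hB2 : ∫ ω in Aᶜ, |(X ω ^ 2 - m) * (Real.exp (X ω - X ω ^ 2 / 2) - 1)| ∂μ
        ≤ ∫ ω in Aᶜ, (X ω ^ 2 + m) ∂μ := by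
      refine setIntegral_mono_on hgint.abs.integrableOn (hX2.integrableOn.add hconst) hAm.compl ?_
      exact fun ω _ => l3aux_Bpt hmnn
    have hB3 : ∫ ω in Aᶜ, (X ω ^ 2 + m) ∂μ = δ₁₁ + m * (μ Aᶜ).toReal := by
      rw [integral_add hX2.integrableOn hconst, setIntegral_const, measureReal_def, hδ₁₁, smul_eq_mul, mul_comm]
    have hBbound : |∫ ω in Aᶜ, (X ω ^ 2 - m) * (Real.exp (X ω - X ω ^ 2 / 2) - 1) ∂μ|
        ≤ δ₁₁ + m * (μ Aᶜ).toReal := by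
      rw [← hB3]; exact le_trans hB1 hB2
    rw [hIg, hsplit]
    have htri := abs_add_le (∫ ω in A, (X ω ^ 2 - m) * (Real.exp (X ω - X ω ^ 2 / 2) - 1) ∂μ)
      (∫ ω in Aᶜ, (X ω ^ 2 - m) * (Real.exp (X ω - X ω ^ 2 / 2) - 1) ∂μ)
    have hAbound : |∫ ω in A, (X ω ^ 2 - m) * (Real.exp (X ω - X ω ^ 2 / 2) - 1) ∂μ|
        ≤ (1 + 0.38 * m) * δ₁₂ + m * δ₁₁ := by
      rw [hAcalc]
      have h2 : |m * ∫ ω in A, X ω ∂μ| ≤ m * δ₁₁ := by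
        rw [abs_mul, abs_of_nonneg hmnn, hXA, abs_neg]
        exact mul_le_mul_of_nonneg_left hXB hmnn
      calc |(∫ ω in A, ((X ω ^ 2 - m) * (Real.exp (X ω - X ω ^ 2 / 2) - 1) + m * X ω) ∂μ)
            - m * ∫ ω in A, X ω ∂μ|
          ≤ |∫ ω in A, ((X ω ^ 2 - m) * (Real.exp (X ω - X ω ^ 2 / 2) - 1) + m * X ω) ∂μ|
            + |m * ∫ ω in A, X ω ∂μ| := abs_sub _ _
        _ ≤ (1 + 0.38 * m) * δ₁₂ + m * δ₁₁ := add_le_add hFbound h2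
    have hmδ12 : 0 ≤ (1.3 - m) * δ₁₂ := mul_nonneg (by linarith) hδ12nn
    have hmδ11 : 0 ≤ (1.3 - m) * δ₁₁ := mul_nonneg (by linarith) hδ11nn
    have hmμB : m * (μ Aᶜ).toReal ≤ m * δ₁₁ := mul_le_mul_of_nonneg_left hμB hmnn
    nlinarith [htri, hAbound, hBbound]
  · -- m > 1.3
    have hE5 := l3aux_E5
    have hE5' := l3aux_E5'
    have hsplit2 := (integral_add_compl hAm hZeY).symm
    -- upper bound
    have hupA : ∫ ω in A, (X ω ^ 2 - m) * Real.exp (X ω - X ω ^ 2 / 2) ∂μ ≤ 0 := by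
      refine setIntegral_nonpos hAm (fun ω hω => ?_)
      have h1 := hmemA ω hω
      have h2 : X ω ^ 2 ≤ 1 := by nlinarith [sq_abs (X ω), abs_nonneg (X ω)]
      exact mul_nonpos_of_nonpos_of_nonneg (by linarith) (Real.exp_pos _).le
    have hupB : ∫ ω in Aᶜ, (X ω ^ 2 - m) * Real.exp (X ω - X ω ^ 2 / 2) ∂μ
        ≤ ∫ ω in Aᶜ, Real.exp (1/2) * X ω ^ 2 ∂μ := by
      refine setIntegral_mono_on hZeY.integrableOn (hX2.integrableOn.const_mul _) hAm.compl ?_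
      intro ω _
      have he := l3aux_expHalf (X ω)
      have hep := (Real.exp_pos (X ω - X ω ^ 2 / 2)).le
      nlinarith [mul_nonneg hmnn hep, mul_le_mul_of_nonneg_left he (sq_nonneg (X ω))]
    have hupB2 : ∫ ω in Aᶜ, Real.exp (1/2) * X ω ^ 2 ∂μ = Real.exp (1/2) * δ₁₁ := by
      rw [integral_const_mul, hδ₁₁]
    have hupper : ∫ ω, (X ω ^ 2 - m) * Real.exp (X ω - X ω ^ 2 / 2) ∂μ
        ≤ Real.exp (1/2) * δ₁₁ := by
      rw [hsplit2]; linarith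
    rcases le_or_gt m 2.5 with hc2 | hc2
    · -- mid case : 1.3 < m ≤ 2.5
      have hconstA : IntegrableOn (fun _ : Ω => m) A μ :=
        integrableOn_const (measure_lt_top _ _).ne
      have hlowA1 : ∫ ω in A, (Real.exp (1/2) * (X ω ^ 2 - m)) ∂μ
          ≤ ∫ ω in A, (X ω ^ 2 - m) * Real.exp (X ω - X ω ^ 2 / 2) ∂μ := by
        refine setIntegral_mono_on (hZint.const_mul _).integrableOn hZeY.integrableOn hAm ?_
        intro ω hω
        have h1 := hmemA ω hω
        have h2 : X ω ^ 2 ≤ 1 := by nlinarith [sq_abs (X ω), abs_nonneg (X ω)]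
        have he := l3aux_expHalf (X ω)
        have hep := (Real.exp_pos (X ω - X ω ^ 2 / 2)).le
        nlinarith [mul_le_mul_of_nonneg_left he (by linarith : 0 ≤ m - X ω ^ 2)]
      have hlowA2 : ∫ ω in A, (Real.exp (1/2) * (X ω ^ 2 - m)) ∂μ
          = Real.exp (1/2) * ((∫ ω in A, X ω ^ 2 ∂μ) - m * (μ A).toReal) := by
        rw [integral_const_mul, integral_sub hX2.integrableOn hconstA, setIntegral_const, measureReal_def,
          smul_eq_mul, mul_comm ((μ A).toReal) m]
      have hμA1 : (μ A).toReal ≤ 1 := by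
        have h : μ A ≤ 1 := prob_le_one
        simpa using ENNReal.toReal_mono (by norm_num) h
      have hμAnn : 0 ≤ (μ A).toReal := ENNReal.toReal_nonneg
      have hlowA : -(Real.exp (1/2) * δ₁₁)
          ≤ ∫ ω in A, (X ω ^ 2 - m) * Real.exp (X ω - X ω ^ 2 / 2) ∂μ := by
        rw [hlowA2] at hlowA1
        have hexp_pos : (0:ℝ) < Real.exp (1/2) := Real.exp_pos _
        nlinarith [mul_le_mul_of_nonneg_left hμA1 (mul_nonneg hexp_pos.le hmnn)]
      have hlowB1 : ∫ ω in Aᶜ, (-(1.5 * Real.exp (1/2))) ∂μ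
          ≤ ∫ ω in Aᶜ, (X ω ^ 2 - m) * Real.exp (X ω - X ω ^ 2 / 2) ∂μ := by
        refine setIntegral_mono_on (integrableOn_const (measure_lt_top _ _).ne)
          hZeY.integrableOn hAm.compl ?_
        exact fun ω hω => l3aux_midB (hmemB ω hω) (by linarith) hc2
      have hlowB2 : ∫ ω in Aᶜ, (-(1.5 * Real.exp (1/2))) ∂μ
          = -(1.5 * Real.exp (1/2)) * (μ Aᶜ).toReal := by
        rw [setIntegral_const, measureReal_def, smul_eq_mul, mul_comm]
      have hlowB : -(1.5 * Real.exp (1/2)) * δ₁₁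
          ≤ ∫ ω in Aᶜ, (X ω ^ 2 - m) * Real.exp (X ω - X ω ^ 2 / 2) ∂μ := by
        rw [hlowB2] at hlowB1
        have hexp_pos : (0:ℝ) < Real.exp (1/2) := Real.exp_pos _
        nlinarith [mul_le_mul_of_nonneg_left hμB (by positivity : (0:ℝ) ≤ 1.5 * Real.exp (1/2))]
      have hlower : -(2.5 * Real.exp (1/2) * δ₁₁)
          ≤ ∫ ω, (X ω ^ 2 - m) * Real.exp (X ω - X ω ^ 2 / 2) ∂μ := by
        rw [hsplit2]; linarith
      rw [abs_le]
      constructor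
      · nlinarith [mul_le_mul_of_nonneg_right hE5 hδ11nn]
      · nlinarith [mul_le_mul_of_nonneg_right hE5 hδ11nn]
    · -- crude case : m > 2.5
      have hlow1 : ∫ ω, (-(m * Real.exp (1/2))) ∂μ
          ≤ ∫ ω, (X ω ^ 2 - m) * Real.exp (X ω - X ω ^ 2 / 2) ∂μ := by
        refine integral_mono (integrable_const _) hZeY (fun ω => ?_)
        have he := l3aux_expHalf (X ω)
        have hep := (Real.exp_pos (X ω - X ω ^ 2 / 2)).le
        have h2 := sq_nonneg (X ω)
        simp only []
        nlinarith [mul_le_mul_of_nonneg_left he hmnn]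
      have hlow2 : ∫ ω, (-(m * Real.exp (1/2))) ∂μ = -(m * Real.exp (1/2)) := by
        simp
      rw [abs_le]
      constructor
      · rw [hlow2] at hlow1
        nlinarith [mul_le_mul_of_nonneg_left hE5 hmnn]
      · nlinarith [mul_le_mul_of_nonneg_right hE5 hδ11nn]
end

section
/- Let X be a real random variable with E X = 0, E X² < ∞, and let Y = X - X²/2, Z = X² - E X². Set δ₁₁ = E[X² 1{|X|>1}] and δ₁₂ = E[|X|³ 1{|X|≤1}]. Then E[Z² e^Y] ≤ 4 δ₁₁ + 2 δ₁₂ + 2 δ₁₁². -/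
set_option maxHeartbeats 1000000

open MeasureTheory

private lemma exp_quad_le_four (x : ℝ) : x ^ 2 * Real.exp (x - x ^ 2 / 2) ≤ 4 := by
  have h1 : 1 + ((x - 2) + (x - 2) ^ 2 / 2) ≤ Real.exp ((x - 2) + (x - 2) ^ 2 / 2) := by
    have := Real.add_one_le_exp ((x - 2) + (x - 2) ^ 2 / 2); linarith
  have h2 : ((x - 2) + (x - 2) ^ 2 / 2) = x ^ 2 / 2 - x := by ring
  rw [h2] at h1
  have h3 : x ^ 2 / 4 ≤ Real.exp (x ^ 2 / 2 - x) := by nlinarith [sq_nonneg (x - 2)]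
  have h4 : Real.exp (x - x ^ 2 / 2) * Real.exp (x ^ 2 / 2 - x) = 1 := by
    rw [← Real.exp_add]; norm_num
  nlinarith [Real.exp_pos (x - x ^ 2 / 2), Real.exp_pos (x ^ 2 / 2 - x)]

private lemma exp_mul_quad_le_one (x : ℝ) :
    Real.exp (x - x ^ 2 / 2) * (1 - x + x ^ 2 / 2) ≤ 1 := by
  have h1 : 1 + (x ^ 2 / 2 - x) ≤ Real.exp (x ^ 2 / 2 - x) := by
    have := Real.add_one_le_exp (x ^ 2 / 2 - x); linarith
  have h4 : Real.exp (x - x ^ 2 / 2) * Real.exp (x ^ 2 / 2 - x) = 1 := by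
    rw [← Real.exp_add]; norm_num
  nlinarith [Real.exp_pos (x - x ^ 2 / 2)]

private lemma exp_self_le (x : ℝ) : Real.exp (x - x ^ 2 / 2) ≤ 1.65 := by
  have h1 : Real.exp (x - x ^ 2 / 2) ≤ Real.exp (1 / 2) :=
    Real.exp_le_exp.mpr (by nlinarith [sq_nonneg (x - 1)])
  have h2 : Real.exp (1 / 2) * Real.exp (1 / 2) = Real.exp 1 := by
    rw [← Real.exp_add]; norm_num
  have h3 := Real.exp_one_lt_d9
  nlinarith [Real.exp_pos (1 / 2)]

private lemma pointwise_bound (m : ℝ) (hm : 0 ≤ m) (x : ℝ) :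
    (x ^ 2 - m) ^ 2 * Real.exp (x - x ^ 2 / 2) ≤
      3 / 2 * m ^ 2 + (max (m - 2) 0) ^ 2 / 2 +
        (if |x| ≤ 1 then 2 * |x| ^ 3 - 2 * m * x ^ 2 else 4 * x ^ 2) := by
  have hEpos := Real.exp_pos (x - x ^ 2 / 2)
  by_cases hx : |x| ≤ 1
  · rw [if_pos hx]
    rcases abs_le.mp hx with ⟨hxl, hxr⟩
    have hD : (0 : ℝ) < 1 - x + x ^ 2 / 2 := by nlinarith [sq_nonneg (x - 1)]
    have hmax0 : 0 ≤ (max (m - 2) 0) ^ 2 / 2 := by positivity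
    -- key polynomial inequality
    have key : (x ^ 2 - m) ^ 2 ≤
        (3 / 2 * m ^ 2 + (max (m - 2) 0) ^ 2 / 2 + 2 * |x| ^ 3 - 2 * m * x ^ 2)
          * (1 - x + x ^ 2 / 2) := by
      rcases le_or_gt 0 x with hx0 | hx0
      · rw [abs_of_nonneg hx0]
        rcases le_or_gt m 2 with hm2 | hm2
        · have hmx : max (m - 2) 0 = 0 := max_eq_right (by linarith)
          rw [hmx]
          rcases le_or_gt 0 (3 * x ^ 2 - 6 * x + 2) with hq | hq
          · nlinarith [mul_nonneg (mul_nonneg hm hm) hq,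
              mul_nonneg hm (mul_nonneg (pow_nonneg hx0 3) (by linarith : (0:ℝ) ≤ 2 - x)),
              mul_nonneg (mul_nonneg (pow_nonneg hx0 3) (by linarith : (0:ℝ) ≤ 1 - x))
                (by linarith : (0:ℝ) ≤ 2 - x)]
          · nlinarith [mul_nonneg (mul_nonneg hm (by linarith : (0:ℝ) ≤ 2 - m))
                (by linarith : (0:ℝ) ≤ -(3 * x ^ 2 - 6 * x + 2)),
              mul_nonneg hm (show (0:ℝ) ≤ 2 * (1 - x) ^ 4 + x * (2 * x - 1) ^ 2 * (2 - x) by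
                nlinarith [sq_nonneg (2 * x - 1), pow_nonneg (by linarith : (0:ℝ) ≤ 1 - x) 4,
                  mul_nonneg (mul_nonneg hx0 (sq_nonneg (2 * x - 1))) (by linarith : (0:ℝ) ≤ 2 - x)]),
              mul_nonneg (mul_nonneg (pow_nonneg hx0 3) (by linarith : (0:ℝ) ≤ 1 - x))
                (by linarith : (0:ℝ) ≤ 2 - x)]
        · have hmx : max (m - 2) 0 = m - 2 := max_eq_left (by linarith)
          rw [hmx]
          have hT : (0:ℝ) ≤ 4 * (1 - x) * (1 + x) + x ^ 3 * (4 - x) := by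
            nlinarith [mul_nonneg (by linarith : (0:ℝ) ≤ 1 - x) (by linarith : (0:ℝ) ≤ 1 + x),
              mul_nonneg (pow_nonneg hx0 3) (by linarith : (0:ℝ) ≤ 4 - x)]
          nlinarith [sq_nonneg ((1 - x) * m - (x ^ 2 * (1 - x) + 2) / 2),
            mul_nonneg (sq_nonneg (1 - x)) hT]
      · rw [abs_of_neg hx0]
        have hq2 : (2:ℝ) ≤ 3 * x ^ 2 - 6 * x + 2 := by nlinarith [sq_nonneg x]
        have hx2' : x ^ 2 ≤ 1 := by nlinarith [sq_abs x, abs_nonneg x]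
        have hx4 : x ^ 4 ≤ 1 := by nlinarith [sq_nonneg x, sq_nonneg (1 - x ^ 2)]
        have hR : (0:ℝ) ≤ (-x) ^ 3 * (4 - 14 * x + 14 * x ^ 2 - 5 * x ^ 3 - x ^ 4 + x ^ 5) := by
          apply mul_nonneg (pow_nonneg (by linarith) 3)
          nlinarith [mul_nonneg (by linarith : (0:ℝ) ≤ x + 1) (by positivity : (0:ℝ) ≤ x ^ 4),
            mul_nonneg (by linarith : (0:ℝ) ≤ -x) (sq_nonneg x), sq_nonneg x, hx4]
        have hid : (3 * x ^ 2 - 6 * x + 2) *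
            ((3 / 2 * m ^ 2 + 2 * (-x) ^ 3 - 2 * m * x ^ 2) * (1 - x + x ^ 2 / 2)
              - (x ^ 2 - m) ^ 2)
            = ((3 * x ^ 2 - 6 * x + 2) * m + 2 * x ^ 3 * (2 - x)) ^ 2 / 4
              + (-x) ^ 3 * (4 - 14 * x + 14 * x ^ 2 - 5 * x ^ 3 - x ^ 4 + x ^ 5) := by
          ring
        have h0 : 0 ≤ (3 * x ^ 2 - 6 * x + 2) *
            ((3 / 2 * m ^ 2 + 2 * (-x) ^ 3 - 2 * m * x ^ 2) * (1 - x + x ^ 2 / 2)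
              - (x ^ 2 - m) ^ 2) := by
          rw [hid]
          have := sq_nonneg ((3 * x ^ 2 - 6 * x + 2) * m + 2 * x ^ 3 * (2 - x))
          linarith
        have hP : 0 ≤ (3 / 2 * m ^ 2 + 2 * (-x) ^ 3 - 2 * m * x ^ 2) * (1 - x + x ^ 2 / 2)
            - (x ^ 2 - m) ^ 2 := by nlinarith [h0, hq2]
        nlinarith [hP, mul_nonneg hmax0 hD.le]
    -- combine: H = (x²-m)² E ≤ B D E ≤ B
    have habs : (0:ℝ) ≤ |x| := abs_nonneg x
    have hx4eq : |x| ^ 4 = x ^ 4 := by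
      rw [← abs_pow]; exact abs_of_nonneg (by positivity)
    have hB : 0 ≤ 3 / 2 * m ^ 2 + (max (m - 2) 0) ^ 2 / 2 + 2 * |x| ^ 3 - 2 * m * x ^ 2 := by
      nlinarith [sq_nonneg (3 * m - 2 * x ^ 2), hmax0, hx4eq, sq_abs x,
        mul_nonneg (pow_nonneg habs 3) (by linarith : (0:ℝ) ≤ 1 - |x|)]
    have step1 : (x ^ 2 - m) ^ 2 * Real.exp (x - x ^ 2 / 2) ≤
        ((3 / 2 * m ^ 2 + (max (m - 2) 0) ^ 2 / 2 + 2 * |x| ^ 3 - 2 * m * x ^ 2)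
          * (1 - x + x ^ 2 / 2)) * Real.exp (x - x ^ 2 / 2) :=
      mul_le_mul_of_nonneg_right key hEpos.le
    have step2 := mul_le_mul_of_nonneg_left (exp_mul_quad_le_one x) hB
    nlinarith [step1, step2]
  · rw [if_neg hx]
    push_neg at hx
    have hx2 : 1 ≤ x ^ 2 := by nlinarith [sq_abs x, abs_nonneg x]
    have h4 : x ^ 2 * (x ^ 2 * Real.exp (x - x ^ 2 / 2)) ≤ x ^ 2 * 4 :=
      mul_le_mul_of_nonneg_left (exp_quad_le_four x) (sq_nonneg x)
    rcases le_or_gt m 2 with hm2 | hm2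
    · have hmx : max (m - 2) 0 = 0 := max_eq_right (by linarith)
      rw [hmx]
      have h1 : 0 ≤ m * (2 * x ^ 2 - m) * Real.exp (x - x ^ 2 / 2) :=
        mul_nonneg (mul_nonneg hm (by linarith)) hEpos.le
      nlinarith [sq_nonneg m]
    · have hmx : max (m - 2) 0 = m - 2 := max_eq_left (by linarith)
      rw [hmx]
      have h1 : m * (m - 2 * x ^ 2) * Real.exp (x - x ^ 2 / 2) ≤
          m * (m - 2) * Real.exp (x - x ^ 2 / 2) := by
        apply mul_le_mul_of_nonneg_right _ hEpos.le
        nlinarith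
      have h2 : m * (m - 2) * Real.exp (x - x ^ 2 / 2) ≤ m * (m - 2) * 1.65 :=
        mul_le_mul_of_nonneg_left (exp_self_le x) (by nlinarith)
      nlinarith [h1, h2]

theorem lemma_l3_b {Ω : Type*} [MeasurableSpace Ω] (μ : Measure Ω) [IsProbabilityMeasure μ]
    (X : Ω → ℝ) (hX : Measurable X) (hX2 : Integrable (fun ω => X ω ^ 2) μ)
    (hmean : ∫ ω, X ω ∂μ = 0)
    (Y Z : Ω → ℝ) (hY : ∀ ω, Y ω = X ω - X ω ^ 2 / 2)
    (hZ : ∀ ω, Z ω = X ω ^ 2 - ∫ ω, X ω ^ 2 ∂μ)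
    (δ₁₁ δ₁₂ : ℝ) (hδ₁₁ : δ₁₁ = ∫ ω in {ω | 1 < |X ω|}, X ω ^ 2 ∂μ)
    (hδ₁₂ : δ₁₂ = ∫ ω in {ω | |X ω| ≤ 1}, |X ω| ^ 3 ∂μ) :
    ∫ ω, Z ω ^ 2 * Real.exp (Y ω) ∂μ ≤ 4 * δ₁₁ + 2 * δ₁₂ + 2 * δ₁₁ ^ 2 := by
  set m : ℝ := ∫ ω, X ω ^ 2 ∂μ with hm_def
  have hm0 : 0 ≤ m := integral_nonneg fun ω => sq_nonneg _
  set A : Set Ω := {ω | |X ω| ≤ 1} with hA_def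
  have hA : MeasurableSet A := measurableSet_le hX.abs measurable_const
  have hAc : {ω | 1 < |X ω|} = Aᶜ := by
    ext ω; simp [hA_def, not_le]
  rw [hAc] at hδ₁₁
  set c : ℝ := (max (m - 2) 0) ^ 2 / 2 with hc_def
  have hc0 : 0 ≤ c := by positivity
  have hfg : (fun ω => Z ω ^ 2 * Real.exp (Y ω))
      = fun ω => (X ω ^ 2 - m) ^ 2 * Real.exp (X ω - X ω ^ 2 / 2) := by
    funext ω; rw [hZ ω, hY ω]
  rw [hfg]
  -- measurability
  have hgm : Measurable (fun ω =>
      if |X ω| ≤ 1 then 2 * |X ω| ^ 3 - 2 * m * X ω ^ 2 else 4 * X ω ^ 2) := by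
    apply Measurable.ite (measurableSet_le hX.abs measurable_const) <;> fun_prop
  have hfm : Measurable fun ω => (X ω ^ 2 - m) ^ 2 * Real.exp (X ω - X ω ^ 2 / 2) := by
    fun_prop
  -- integrability of the majorant
  have hg_int : Integrable (fun ω =>
      if |X ω| ≤ 1 then 2 * |X ω| ^ 3 - 2 * m * X ω ^ 2 else 4 * X ω ^ 2) μ := by
    apply Integrable.mono' (g := fun ω => (2 + 2 * m) + 4 * X ω ^ 2)
      ((integrable_const (2 + 2 * m)).add (hX2.const_mul 4)) hgm.aestronglyMeasurable
    apply ae_of_all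
    intro ω
    by_cases h : |X ω| ≤ 1
    · have h3 : |X ω| ^ 3 ≤ 1 := pow_le_one₀ (abs_nonneg _) h
      have h2 : X ω ^ 2 ≤ 1 := by nlinarith [sq_abs (X ω), abs_nonneg (X ω)]
      rw [if_pos h, Real.norm_eq_abs, abs_le]
      constructor <;> nlinarith [sq_nonneg (X ω), pow_nonneg (abs_nonneg (X ω)) 3, hm0]
    · rw [if_neg h, Real.norm_eq_abs, abs_le]
      constructor <;> nlinarith [sq_nonneg (X ω), hm0]
  have hG_int : Integrable (fun ω => 3 / 2 * m ^ 2 + c +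
      (if |X ω| ≤ 1 then 2 * |X ω| ^ 3 - 2 * m * X ω ^ 2 else 4 * X ω ^ 2)) μ :=
    (integrable_const _).add hg_int
  -- pointwise bound
  have hpt : ∀ ω, (X ω ^ 2 - m) ^ 2 * Real.exp (X ω - X ω ^ 2 / 2)
      ≤ 3 / 2 * m ^ 2 + c +
        (if |X ω| ≤ 1 then 2 * |X ω| ^ 3 - 2 * m * X ω ^ 2 else 4 * X ω ^ 2) := by
    intro ω
    rw [hc_def]
    exact pointwise_bound m hm0 (X ω)
  have hf_int : Integrable
      (fun ω => (X ω ^ 2 - m) ^ 2 * Real.exp (X ω - X ω ^ 2 / 2)) μ := by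
    apply Integrable.mono' hG_int hfm.aestronglyMeasurable
    apply ae_of_all
    intro ω
    rw [Real.norm_eq_abs, abs_of_nonneg (by positivity)]
    exact hpt ω
  have hIG : ∫ ω, (X ω ^ 2 - m) ^ 2 * Real.exp (X ω - X ω ^ 2 / 2) ∂μ
      ≤ ∫ ω, (3 / 2 * m ^ 2 + c +
        (if |X ω| ≤ 1 then 2 * |X ω| ^ 3 - 2 * m * X ω ^ 2 else 4 * X ω ^ 2)) ∂μ :=
    integral_mono hf_int hG_int hpt
  -- compute the majorant integral
  have habs3_int : IntegrableOn (fun ω => |X ω| ^ 3) A μ := by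
    apply Integrable.mono' (integrable_const (1 : ℝ))
      ((hX.abs.pow_const 3).aestronglyMeasurable)
    filter_upwards [ae_restrict_mem hA] with ω hω
    have hω' : |X ω| ≤ 1 := hω
    rw [Real.norm_eq_abs, abs_of_nonneg (by positivity)]
    exact pow_le_one₀ (abs_nonneg _) hω'
  have hX2A : IntegrableOn (fun ω => X ω ^ 2) A μ := hX2.integrableOn
  have hX2Ac : IntegrableOn (fun ω => X ω ^ 2) Aᶜ μ := hX2.integrableOn
  have hg_eq : (fun ω =>
      if |X ω| ≤ 1 then 2 * |X ω| ^ 3 - 2 * m * X ω ^ 2 else 4 * X ω ^ 2)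
      = fun ω => A.indicator (fun ω => 2 * |X ω| ^ 3 - 2 * m * X ω ^ 2) ω
        + Aᶜ.indicator (fun ω => 4 * X ω ^ 2) ω := by
    funext ω
    by_cases h : |X ω| ≤ 1
    · have hmem : ω ∈ A := h
      rw [if_pos h, Set.indicator_of_mem hmem,
        Set.indicator_of_notMem (Set.notMem_compl_iff.mpr hmem), add_zero]
    · have hmem : ω ∈ Aᶜ := h
      rw [if_neg h, Set.indicator_of_notMem (by exact h : ω ∉ A),
        Set.indicator_of_mem hmem, zero_add]
  have hpA_int : IntegrableOn (fun ω => 2 * |X ω| ^ 3 - 2 * m * X ω ^ 2) A μ :=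
    (habs3_int.const_mul 2).sub (hX2A.const_mul (2 * m))
  have hqAc_int : IntegrableOn (fun ω => 4 * X ω ^ 2) Aᶜ μ := hX2Ac.const_mul 4
  set a : ℝ := ∫ ω in A, X ω ^ 2 ∂μ with ha_def
  have hg_val : ∫ ω, (if |X ω| ≤ 1 then 2 * |X ω| ^ 3 - 2 * m * X ω ^ 2
      else 4 * X ω ^ 2) ∂μ = (2 * δ₁₂ - 2 * m * a) + 4 * δ₁₁ := by
    rw [hg_eq, integral_add ((integrable_indicator_iff hA).mpr hpA_int)
      ((integrable_indicator_iff hA.compl).mpr hqAc_int),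
      integral_indicator hA, integral_indicator hA.compl]
    rw [integral_sub (habs3_int.const_mul 2) (hX2A.const_mul (2 * m)),
      integral_const_mul, integral_const_mul, integral_const_mul, hδ₁₂, hδ₁₁]
  have hG_val : ∫ ω, (3 / 2 * m ^ 2 + c +
      (if |X ω| ≤ 1 then 2 * |X ω| ^ 3 - 2 * m * X ω ^ 2 else 4 * X ω ^ 2)) ∂μ
      = 3 / 2 * m ^ 2 + c + ((2 * δ₁₂ - 2 * m * a) + 4 * δ₁₁) := by
    rw [integral_add (integrable_const _) hg_int, integral_const, hg_val]
    simp
  -- facts about a and δ₁₁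
  have hab : a + δ₁₁ = m := by
    rw [ha_def, hδ₁₁, hm_def]
    exact integral_add_compl hA hX2
  have ha0 : 0 ≤ a := setIntegral_nonneg hA fun ω _ => sq_nonneg _
  have hb0 : 0 ≤ δ₁₁ := by
    rw [hδ₁₁]; exact setIntegral_nonneg hA.compl fun ω _ => sq_nonneg _
  have ha1 : a ≤ 1 := by
    have h1 : a ≤ ∫ ω in A, (1 : ℝ) ∂μ := by
      apply setIntegral_mono_on hX2A
        ((integrableOn_const_iff (C := (1:ℝ))).mpr (Or.inr (measure_lt_top μ A))) hA
      intro ω hω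
      have hω' : |X ω| ≤ 1 := hω
      nlinarith [sq_abs (X ω), abs_nonneg (X ω)]
    have h2 : ∫ ω in A, (1 : ℝ) ∂μ = (μ A).toReal := by simp [measureReal_def]
    have h3 : (μ A).toReal ≤ 1 := by
      have h4 : (μ A).toReal ≤ (1 : ENNReal).toReal :=
        ENNReal.toReal_mono ENNReal.one_ne_top prob_le_one
      simpa using h4
    linarith
  -- final algebra
  have hfinal : 3 / 2 * m ^ 2 + c + ((2 * δ₁₂ - 2 * m * a) + 4 * δ₁₁)
      ≤ 4 * δ₁₁ + 2 * δ₁₂ + 2 * δ₁₁ ^ 2 := by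
    rcases le_or_gt m 2 with hm2 | hm2
    · have hcz : c = 0 := by
        rw [hc_def, max_eq_right (by linarith : m - 2 ≤ 0)]; norm_num
      rw [hcz]
      nlinarith [sq_nonneg (a - δ₁₁), hab]
    · have hcz : c = (m - 2) ^ 2 / 2 := by
        rw [hc_def, max_eq_left (by linarith : (0:ℝ) ≤ m - 2)]
      rw [hcz]
      nlinarith [mul_nonneg (by linarith : (0:ℝ) ≤ 1 - a)
        (by linarith : (0:ℝ) ≤ m - 1 - a), hab]
  calc ∫ ω, (X ω ^ 2 - m) ^ 2 * Real.exp (X ω - X ω ^ 2 / 2) ∂μ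
      ≤ ∫ ω, (3 / 2 * m ^ 2 + c +
        (if |X ω| ≤ 1 then 2 * |X ω| ^ 3 - 2 * m * X ω ^ 2 else 4 * X ω ^ 2)) ∂μ := hIG
    _ = 3 / 2 * m ^ 2 + c + ((2 * δ₁₂ - 2 * m * a) + 4 * δ₁₁) := hG_val
    _ ≤ 4 * δ₁₁ + 2 * δ₁₂ + 2 * δ₁₁ ^ 2 := hfinal
end

section
/- Let X be a real random variable with E X = 0, E X² < ∞, and let Y = X - X²/2, Z = X² - E X². Set δ₁₁ = E[X² 1{|X|>1}] and δ₁₂ = E[|X|³ 1{|X|≤1}]. Then E[|Y| Z² e^Y] ≤ 3.1 δ₁₁ + δ₁₂ + δ₁₁². -/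
open MeasureTheory Real


noncomputable def gg (t : ℝ) : ℝ := |t - t^2/2| * Real.exp (t - t^2/2)

lemma gg_nonneg (t : ℝ) : 0 ≤ gg t := mul_nonneg (abs_nonneg _) (Real.exp_pos _).le

lemma exp_half_le : Real.exp (1/2) ≤ 1.65 := by
  nlinarith [Real.exp_one_lt_d9, Real.exp_pos (1/2), (Real.exp_add (1/2) (1/2)).symm, Real.exp_pos 1]

lemma exp_cubic_ub {x : ℝ} (h0 : 0 ≤ x) (h1 : x ≤ 1) :
    Real.exp x ≤ 1 + x + x^2/2 + (2/9)*x^3 := by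
  have hb := Real.exp_bound (x := x) (by rw [abs_of_nonneg h0]; exact h1) (n := 3) (by norm_num)
  have hs : ∑ m ∈ Finset.range 3, x ^ m / (m.factorial : ℝ) = 1 + x + x^2/2 := by
    norm_num [Finset.sum_range_succ, Nat.factorial]
  rw [hs, abs_of_nonneg h0] at hb
  have h2 := (abs_le.1 hb).2
  norm_num [Nat.factorial] at h2
  nlinarith [h2]

lemma exp_P6_lb {v : ℝ} (h0 : 0 ≤ v) :
    1 + v + v^2/2 + v^3/6 + v^4/24 + v^5/120 + v^6/720 ≤ Real.exp v := by
  have h := Real.sum_le_exp_of_nonneg h0 7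
  have hs : ∑ i ∈ Finset.range 7, v ^ i / (i.factorial : ℝ)
      = 1 + v + v^2/2 + v^3/6 + v^4/24 + v^5/120 + v^6/720 := by
    norm_num [Finset.sum_range_succ, Nat.factorial]
  linarith [hs ▸ h]

-- A1 : global bound
lemma gg_le (t : ℝ) : gg t ≤ 0.825 := by
  rcases le_or_gt 0 (t - t^2/2) with h | h
  · rw [gg, abs_of_nonneg h]
    have hy : t - t^2/2 ≤ 1/2 := by nlinarith [sq_nonneg (t-1)]
    have he : Real.exp (t - t^2/2) ≤ Real.exp (1/2) := Real.exp_le_exp.2 hy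
    nlinarith [exp_half_le, Real.exp_pos (t - t^2/2)]
  · rw [gg, abs_of_neg h]
    set y := t - t^2/2 with hy
    have h2 : 0 ≤ -y := by linarith
    have hq : 1 + (-y) + (-y)^2/2 ≤ Real.exp (-y) := by
      have h := Real.sum_le_exp_of_nonneg h2 3
      have hs : ∑ i ∈ Finset.range 3, (-y) ^ i / (i.factorial : ℝ) = 1 + (-y) + (-y)^2/2 := by
        norm_num [Finset.sum_range_succ, Nat.factorial]
      linarith [hs ▸ h]
    have key : -y ≤ 0.825 * Real.exp (-y) := by nlinarith [sq_nonneg (1 + y)]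
    calc -y * Real.exp y ≤ (0.825 * Real.exp (-y)) * Real.exp y := by
          apply mul_le_mul_of_nonneg_right key (Real.exp_pos y).le
      _ = 0.825 := by rw [mul_assoc, ← Real.exp_add]; simp

-- A6 : ratio bound on [-1,1]
lemma gg_ratio {t : ℝ} (h : |t| ≤ 1) : gg t ≤ 1.14 * |t| := by
  rcases le_or_gt 0 t with ht | ht
  · have ht1 : t ≤ 1 := by rwa [abs_of_nonneg ht] at h
    have hx0 : 0 ≤ t - t^2/2 := by nlinarith
    have hx1 : t - t^2/2 ≤ 1 := by nlinarith
    rw [gg, abs_of_nonneg hx0, abs_of_nonneg ht]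
    have he := exp_cubic_ub hx0 hx1
    have hgg : (t - t^2/2) * Real.exp (t-t^2/2) ≤
        (t - t^2/2) * (1 + (t-t^2/2) + (t-t^2/2)^2/2 + (2/9)*(t-t^2/2)^3) :=
      mul_le_mul_of_nonneg_left he hx0
    have h1t : 0 ≤ 1 - t := by linarith
    nlinarith [hgg, sq_nonneg (t - 2/5), sq_nonneg t,
      mul_nonneg (mul_nonneg ht ht) ht, sq_nonneg (t - 1/2),
      mul_nonneg (mul_nonneg ht ht) (sq_nonneg (t - 2/5)),
      mul_nonneg ht (sq_nonneg (t - 2/5)), mul_nonneg ht (sq_nonneg (t-1)),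
      mul_nonneg h1t (sq_nonneg (t - 2/5)), mul_nonneg (mul_nonneg h1t ht) (sq_nonneg (t - 2/5)),
      mul_nonneg (mul_nonneg (mul_nonneg h1t ht) ht) (sq_nonneg (t - 2/5)),
      mul_nonneg (mul_nonneg (mul_nonneg (mul_nonneg h1t ht) ht) ht) (sq_nonneg (t - 2/5))]
  · set s := -t with hs
    have hs0 : 0 ≤ s := by linarith
    have hs1 : s ≤ 1 := by rw [abs_of_neg ht] at h; linarith
    have habs : |t| = s := by rw [abs_of_neg ht]
    have hy : t - t^2/2 = -(s + s^2/2) := by rw [hs]; ring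
    have hyn : t - t^2/2 ≤ 0 := by rw [hy]; nlinarith
    rw [gg, abs_of_nonpos hyn, habs, hy]
    have hmono : Real.exp (-(s + s^2/2)) ≤ Real.exp (-s) := by
      apply Real.exp_le_exp.2; nlinarith
    have key : s + s^2/2 ≤ (1.14 * s) * Real.exp s := by
      nlinarith [Real.add_one_le_exp s, mul_nonneg hs0 hs0]
    have h3 : (s + s^2/2) * Real.exp (-s) ≤ 1.14 * s := by
      rw [Real.exp_neg, ← div_eq_mul_inv]
      exact (div_le_iff₀ (Real.exp_pos s)).2 key
    calc -(-(s+s^2/2)) * Real.exp (-(s+s^2/2)) = (s+s^2/2) * Real.exp (-(s+s^2/2)) := by ring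
      _ ≤ (s+s^2/2) * Real.exp (-s) := by
          apply mul_le_mul_of_nonneg_left hmono; nlinarith
      _ ≤ 1.14 * s := h3



-- A5 : gg(-t) ≤ gg(t) for t in [0,1]
lemma gg_neg_le {t : ℝ} (h0 : 0 ≤ t) (h1 : t ≤ 1) : gg (-t) ≤ gg t := by
  have hx0 : 0 ≤ t - t^2/2 := by nlinarith
  have hyn : -t - (-t)^2/2 ≤ 0 := by nlinarith
  have e1 : gg (-t) = (t + t^2/2) * Real.exp (-(t + t^2/2)) := by
    rw [gg]
    have : -t - (-t)^2/2 = -(t + t^2/2) := by ring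
    rw [this, abs_of_nonpos (by nlinarith : -(t + t^2/2) ≤ 0)]
    ring_nf
  have e2 : gg t = (t - t^2/2) * Real.exp (t - t^2/2) := by
    rw [gg, abs_of_nonneg hx0]
  rw [e1, e2]
  -- multiply both sides by exp (t + t^2/2) > 0
  have hP := exp_P6_lb (by linarith : (0:ℝ) ≤ 2*t)
  have key : t + t^2/2 ≤ (t - t^2/2) * Real.exp (2*t) := by
    have h4 : (t - t^2/2) * (1 + 2*t + (2*t)^2/2 + (2*t)^3/6) ≤ (t - t^2/2) * Real.exp (2*t) := by
      apply mul_le_mul_of_nonneg_left _ hx0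
      nlinarith [exp_P6_lb (by linarith : (0:ℝ) ≤ 2*t), pow_nonneg (by linarith : (0:ℝ) ≤ 2*t) 4,
        pow_nonneg (by linarith : (0:ℝ) ≤ 2*t) 5, pow_nonneg (by linarith : (0:ℝ) ≤ 2*t) 6]
    nlinarith [h4, mul_nonneg h0 (mul_nonneg h0 (mul_nonneg h0 h0))]
  have hpos := Real.exp_pos (t + t^2/2)
  have expand : (t - t^2/2) * Real.exp (t - t^2/2) * Real.exp (t + t^2/2)
      = (t - t^2/2) * Real.exp (2*t) := by
    rw [mul_assoc, ← Real.exp_add]; ring_nf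
  have expand2 : (t + t^2/2) * Real.exp (-(t + t^2/2)) * Real.exp (t + t^2/2) = t + t^2/2 := by
    have hz : -(t + t^2/2) + (t + t^2/2) = 0 := by ring
    rw [mul_assoc, ← Real.exp_add, hz, Real.exp_zero, mul_one]
  nlinarith [key, hpos, expand, expand2]

-- Gaux : gg s ≤ s + 0.8 s² on [0,1]
lemma gg_poly_ub {s : ℝ} (h0 : 0 ≤ s) (h1 : s ≤ 1) : gg s ≤ s + 0.8*s^2 := by
  have hx0 : 0 ≤ s - s^2/2 := by nlinarith
  have hx1 : s - s^2/2 ≤ 1 := by nlinarith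
  rw [gg, abs_of_nonneg hx0]
  have he := exp_cubic_ub hx0 hx1
  have hgg : (s - s^2/2) * Real.exp (s-s^2/2) ≤
      (s - s^2/2) * (1 + (s-s^2/2) + (s-s^2/2)^2/2 + (2/9)*(s-s^2/2)^3) :=
    mul_le_mul_of_nonneg_left he hx0
  nlinarith [hgg, mul_nonneg h0 h0, mul_nonneg (mul_nonneg h0 h0) h0,
    mul_nonneg (mul_nonneg (mul_nonneg h0 h0) h0) h0,
    pow_nonneg h0 5, pow_nonneg h0 6, pow_nonneg h0 7, pow_nonneg h0 8,
    mul_nonneg (pow_nonneg h0 4) (by linarith : (0:ℝ) ≤ 1 - s)]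



lemma master_Aneg {s u : ℝ} (h0 : 0 ≤ s) (h1 : s ≤ 1) (hu : 0 ≤ u) :
    gg s * u^2 ≤ s^3 + 0.4*(s^2+u)^2*u := by
  have hg := gg_poly_ub h0 h1
  have h5 : gg s * u^2 ≤ (s + 0.8*s^2) * u^2 :=
    mul_le_mul_of_nonneg_right hg (sq_nonneg u)
  have hid : s*u^2 ≤ 0.4*u^3 + s^3 := by
    nlinarith [mul_nonneg (sq_nonneg (3*u - 5*s)) (by nlinarith : (0:ℝ) ≤ 6*u + 5*s),
      pow_nonneg h0 3]
  nlinarith [h5, hid, mul_nonneg (mul_nonneg (sq_nonneg s) (sq_nonneg s)) hu]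

lemma master_A {t m : ℝ} (ht : |t| ≤ 1) (hm0 : 0 ≤ m) (hm1 : m ≤ 1) :
    gg t * (t^2 - m)^2 + 0.4*m^2*(t^2 - m) ≤ |t|^3 := by
  have ha0 : 0 ≤ |t| := abs_nonneg t
  have ht2 : t^2 = |t|^2 := (sq_abs t).symm
  rcases le_or_gt m (t^2) with hc | hc
  · have h1 : (t^2 - m)^2 ≤ |t|^4 := by rw [ht2] at hc ⊢; nlinarith
    have h2 : gg t * (t^2-m)^2 ≤ 0.825 * |t|^4 := by
      nlinarith [gg_le t, gg_nonneg t, h1, sq_nonneg (t^2-m), pow_nonneg ha0 4]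
    have h3 : 27*(m^2*(t^2-m)) ≤ 4*|t|^6 := by
      rw [ht2] at hc ⊢
      nlinarith [mul_nonneg (sq_nonneg (3*m - 2*|t|^2)) (by nlinarith : (0:ℝ) ≤ 3*m + |t|^2)]
    have h4 : |t|^4 ≤ |t|^3 := by nlinarith [pow_nonneg ha0 3]
    have h6 : |t|^6 ≤ |t|^3 := by nlinarith [pow_nonneg ha0 3, pow_nonneg ha0 6, sq_nonneg (|t|^3)]
    nlinarith [h2, h3, h4, h6]
  · have hgs : gg t ≤ gg |t| := by
      rcases le_or_gt 0 t with h | h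
      · rw [abs_of_nonneg h]
      · rw [abs_of_neg h]
        have := gg_neg_le (by linarith : (0:ℝ) ≤ -t) (by rw [abs_of_neg h] at ht; linarith)
        simpa using this
    have hu0 : 0 ≤ m - t^2 := by linarith
    have key := master_Aneg ha0 ht (by rw [ht2] at hu0; exact hu0 : 0 ≤ m - |t|^2)
    have hm : |t|^2 + (m - |t|^2) = m := by ring
    rw [hm] at key
    have hgt : gg t * (m - |t|^2)^2 ≤ gg |t| * (m - |t|^2)^2 :=
      mul_le_mul_of_nonneg_right hgs (sq_nonneg _)
    have he1 : (t^2 - m)^2 = (m - |t|^2)^2 := by rw [ht2]; ring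
    have he2 : 0.4*m^2*(t^2-m) = -(0.4*m^2*(m - |t|^2)) := by rw [ht2]; ring
    rw [he1, he2]
    linarith [key, hgt]



-- helper for "negative exponent" cases:  gg t = c * exp(-(v)) with v = -(t - t²/2)
lemma gg_of_neg {t : ℝ} (h : t - t^2/2 ≤ 0) :
    gg t = (t^2/2 - t) * Real.exp (-(t^2/2 - t)) := by
  rw [gg, abs_of_nonpos h]
  have : -(t^2/2 - t) = t - t^2/2 := by ring
  rw [this]; ring_nf

lemma gg_of_pos {t : ℝ} (h : 0 ≤ t - t^2/2) :
    gg t = (t - t^2/2) * Real.exp (t - t^2/2) := by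
  rw [gg, abs_of_nonneg h]

-- B0 : gg t * t² ≤ 3.05 for |t| ≥ 1
set_option maxHeartbeats 2000000 in
lemma master_B0 {t : ℝ} (ht : 1 ≤ |t|) : gg t * t^2 ≤ 3.05 := by
  rcases abs_le.mp (le_refl |t|) with _
  rcases le_or_gt 2 t with h2 | h2
  · -- t ≥ 2
    have hv0 : (0:ℝ) ≤ t^2/2 - t := by nlinarith
    rw [gg_of_neg (by linarith)]
    have hP := exp_P6_lb hv0
    have hPpos : (0:ℝ) < 1 + (t^2/2-t) + (t^2/2-t)^2/2 + (t^2/2-t)^3/6 + (t^2/2-t)^4/24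
        + (t^2/2-t)^5/120 + (t^2/2-t)^6/720 := by positivity
    have hkey : (t^2/2-t) * t^2 ≤ 3.05 * Real.exp (t^2/2-t) := by
      have hpoly : (t^2/2-t) * t^2 ≤ 3.05 * (1 + (t^2/2-t) + (t^2/2-t)^2/2 + (t^2/2-t)^3/6
          + (t^2/2-t)^4/24 + (t^2/2-t)^5/120 + (t^2/2-t)^6/720) := by
        have ht3 : t^2 ≤ 3*(t^2/2-t) + 4.5 := by nlinarith [sq_nonneg (t-3)]
        have hPB0 : (t^2/2-t)*(3*(t^2/2-t)+4.5) ≤ 3.05 * (1 + (t^2/2-t) + (t^2/2-t)^2/2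
            + (t^2/2-t)^3/6 + (t^2/2-t)^4/24 + (t^2/2-t)^5/120 + (t^2/2-t)^6/720) := by
          set v := t^2/2 - t with hv
          nlinarith [sq_nonneg (v-1.5), mul_nonneg hv0 (sq_nonneg (v-1.5)),
            mul_nonneg (mul_nonneg hv0 hv0) (sq_nonneg (v-1.5)),
            mul_nonneg (mul_nonneg (mul_nonneg hv0 hv0) hv0) (sq_nonneg (v-1.5)),
            mul_nonneg (mul_nonneg (mul_nonneg (mul_nonneg hv0 hv0) hv0) hv0) (sq_nonneg (v-1.5)),
            sq_nonneg v, mul_nonneg hv0 hv0]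
        nlinarith [mul_le_mul_of_nonneg_left ht3 hv0, hPB0]
      linarith [mul_le_mul_of_nonneg_left hP (by norm_num : (0:ℝ) ≤ 3.05)]
    rw [Real.exp_neg, mul_comm ((t^2/2-t)) _, mul_assoc]
    calc (Real.exp (t^2/2-t))⁻¹ * ((t^2/2-t) * t^2) ≤ (Real.exp (t^2/2-t))⁻¹ * (3.05 * Real.exp (t^2/2-t)) := by
          apply mul_le_mul_of_nonneg_left hkey (by positivity)
      _ = 3.05 := by field_simp
  · rcases le_or_gt 1 t with h1 | h1
    · -- 1 ≤ t < 2
      have hx0 : 0 ≤ t - t^2/2 := by nlinarith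
      rw [gg_of_pos hx0]
      have he : Real.exp (t - t^2/2) ≤ 1.65 := by
        calc Real.exp (t-t^2/2) ≤ Real.exp (1/2) := Real.exp_le_exp.2 (by nlinarith [sq_nonneg (t-1)])
          _ ≤ 1.65 := exp_half_le
      have : (t - t^2/2) * Real.exp (t-t^2/2) * t^2 ≤ (t - t^2/2) * 1.65 * t^2 := by
        apply mul_le_mul_of_nonneg_right _ (sq_nonneg t)
        exact mul_le_mul_of_nonneg_left he hx0
      nlinarith [this, sq_nonneg (t-1.5), sq_nonneg (t*(t-1.5))]
    · -- t ≤ -1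
      have htn : t ≤ -1 := by
        rcases abs_cases t with ⟨he, _⟩ | ⟨he, _⟩ <;> [skip; linarith] ; linarith
      have hv0 : (0:ℝ) ≤ t^2/2 - t := by nlinarith
      have hv15 : (1.5:ℝ) ≤ t^2/2 - t := by nlinarith
      rw [gg_of_neg (by nlinarith)]
      have hgen : ∀ v : ℝ, 1.5 ≤ v → -1.5*t ≤ v → v * t^2 ≤ 3.05 * Real.exp v := by
        intro v h15 hvt
        have hv0' : (0:ℝ) ≤ v := by linarith
        have hP' := exp_P6_lb hv0'
        have hv2 : 2.25*t^2 ≤ v^2 := by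
          nlinarith [mul_nonneg (by linarith : (0:ℝ) ≤ v - (-1.5*t)) (by nlinarith : (0:ℝ) ≤ v + (-1.5*t))]
        have hcube : v^3/6 ≤ Real.exp v := by
          linarith [hP', sq_nonneg v, pow_nonneg hv0' 4, pow_nonneg hv0' 5, pow_nonneg hv0' 6]
        have hq : v*t^2 ≤ (3.05/6)*v^3 := by
          nlinarith [mul_le_mul_of_nonneg_left hv2 hv0', pow_nonneg hv0' 3]
        nlinarith [hq, mul_le_mul_of_nonneg_left hcube (by norm_num : (0:ℝ) ≤ 3.05)]
      have hkey : (t^2/2-t) * t^2 ≤ 3.05 * Real.exp (t^2/2-t) :=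
        hgen _ (by nlinarith) (by nlinarith)
      rw [Real.exp_neg, mul_comm ((t^2/2-t)) _, mul_assoc]
      calc (Real.exp (t^2/2-t))⁻¹ * ((t^2/2-t) * t^2) ≤ (Real.exp (t^2/2-t))⁻¹ * (3.05 * Real.exp (t^2/2-t)) := by
            apply mul_le_mul_of_nonneg_left hkey (by positivity)
        _ = 3.05 := by field_simp



noncomputable def P6 (v : ℝ) : ℝ := 1 + v + v^2/2 + v^3/6 + v^4/24 + v^5/120 + v^6/720

lemma P6_le_exp {v : ℝ} (h0 : 0 ≤ v) : P6 v ≤ Real.exp v := exp_P6_lb h0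

lemma P6_pos {v : ℝ} (h0 : 0 ≤ v) : 0 < P6 v := by rw [P6]; positivity

lemma PB1 {v : ℝ} (h0 : 0 ≤ v) :
    v*(6*v^2+17*v+11) ≤ 2.45*(2*v+4)*(P6 v) := by
  rw [P6]
  nlinarith [sq_nonneg (v-1.5), mul_nonneg h0 (sq_nonneg (v-1.5)),
    mul_nonneg (mul_nonneg h0 h0) (sq_nonneg (v-1.5)),
    mul_nonneg (mul_nonneg (mul_nonneg h0 h0) h0) (sq_nonneg (v-1.5)),
    mul_nonneg (mul_nonneg (mul_nonneg (mul_nonneg h0 h0) h0) h0) (sq_nonneg (v-1.5)),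
    mul_nonneg (mul_nonneg (mul_nonneg (mul_nonneg (mul_nonneg h0 h0) h0) h0) h0) (sq_nonneg (v-1.5)),
    sq_nonneg v, mul_nonneg h0 h0]

set_option maxHeartbeats 2000000 in
lemma master_B1 {t : ℝ} (ht : 1 ≤ |t|) : gg t * (t^2-1)^2 ≤ 2.45 * t^2 := by
  rcases le_or_gt 2 t with h2 | h2
  · -- t ≥ 2
    have hv0 : (0:ℝ) ≤ t^2/2 - t := by nlinarith
    rw [gg_of_neg (by linarith)]
    have hgen : ∀ v : ℝ, v = t^2/2 - t → v*(t^2-1)^2 ≤ 2.45*t^2*Real.exp v := by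
      intro v hveq
      have hv0' : (0:ℝ) ≤ v := by rw [hveq]; exact hv0
      have hpos24 : (0:ℝ) < 2*v+4 := by nlinarith
      have p1 : t^2 - 2 ≤ 2.5 + 3*v := by nlinarith [sq_nonneg (t-3)]
      have p2 : 2*v+4 ≤ t^2 := by nlinarith
      have key1 : (t^2-1)^2*(2*v+4) ≤ t^2*((2.5+3*v)*(2*v+4)+1) := by
        nlinarith [mul_le_mul_of_nonneg_right p1 (mul_nonneg (sq_nonneg t) hpos24.le), p2]
      have key2 := mul_le_mul_of_nonneg_left key1 hv0'
      have key3 : v*(t^2*((2.5+3*v)*(2*v+4)+1)) = t^2*(v*(6*v^2+17*v+11)) := by ring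
      have key4 : t^2*(v*(6*v^2+17*v+11)) ≤ t^2*(2.45*(2*v+4)*(P6 v)) :=
        mul_le_mul_of_nonneg_left (PB1 hv0') (sq_nonneg t)
      have key5 : v*(t^2-1)^2*(2*v+4) ≤ (2.45*t^2*(P6 v))*(2*v+4) := by
        calc v*(t^2-1)^2*(2*v+4) = v*((t^2-1)^2*(2*v+4)) := by ring
          _ ≤ v*(t^2*((2.5+3*v)*(2*v+4)+1)) := key2
          _ = t^2*(v*(6*v^2+17*v+11)) := key3
          _ ≤ t^2*(2.45*(2*v+4)*(P6 v)) := key4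
          _ = (2.45*t^2*(P6 v))*(2*v+4) := by ring
      have key6 : v*(t^2-1)^2 ≤ 2.45*t^2*(P6 v) := le_of_mul_le_mul_right key5 hpos24
      calc v*(t^2-1)^2 ≤ 2.45*t^2*(P6 v) := key6
        _ ≤ 2.45*t^2*Real.exp v := by
            apply mul_le_mul_of_nonneg_left (P6_le_exp hv0') (by positivity)
    have hkey := hgen (t^2/2 - t) rfl
    rw [Real.exp_neg]
    have hepos := Real.exp_pos (t^2/2 - t)
    calc (t^2/2-t) * (Real.exp (t^2/2-t))⁻¹ * (t^2-1)^2
        = ((t^2/2-t) * (t^2-1)^2) * (Real.exp (t^2/2-t))⁻¹ := by ring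
      _ ≤ (2.45*t^2*Real.exp (t^2/2-t)) * (Real.exp (t^2/2-t))⁻¹ :=
          mul_le_mul_of_nonneg_right hkey (by positivity)
      _ = 2.45*t^2 := by
          rw [mul_assoc, mul_inv_cancel₀ (Real.exp_ne_zero _), mul_one]
  · rcases le_or_gt 1 t with h1 | h1
    · -- 1 ≤ t < 2
      have hx0 : 0 ≤ t - t^2/2 := by nlinarith
      rw [gg_of_pos hx0]
      have he : Real.exp (t - t^2/2) ≤ 1.65 := by
        calc Real.exp (t-t^2/2) ≤ Real.exp (1/2) := Real.exp_le_exp.2 (by nlinarith [sq_nonneg (t-1)])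
          _ ≤ 1.65 := exp_half_le
      have hstep : (t - t^2/2) * Real.exp (t-t^2/2) * (t^2-1)^2 ≤ (t - t^2/2) * 1.65 * (t^2-1)^2 := by
        apply mul_le_mul_of_nonneg_right _ (sq_nonneg _)
        exact mul_le_mul_of_nonneg_left he hx0
      nlinarith [hstep, sq_nonneg (t-1), sq_nonneg (t-2), mul_nonneg (by linarith : (0:ℝ) ≤ t-1) (by linarith : (0:ℝ) ≤ 2-t), sq_nonneg ((t-1)*(t-2)), mul_nonneg (mul_nonneg (by linarith : (0:ℝ) ≤ t-1) (by linarith : (0:ℝ) ≤ 2-t)) (by linarith : (0:ℝ) ≤ t)]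
    · -- t ≤ -1
      have htn : t ≤ -1 := by
        rcases abs_cases t with ⟨he, _⟩ | ⟨he, _⟩ <;> linarith
      have hv0 : (0:ℝ) ≤ t^2/2 - t := by nlinarith
      rw [gg_of_neg (by nlinarith)]
      rcases le_or_gt (-1.2) t with hcase | hcase
      · -- -1.2 ≤ t ≤ -1 : crude bound with e^{-v} ≤ 1
        have hexp : Real.exp (-(t^2/2 - t)) ≤ 1 := by
          rw [Real.exp_le_one_iff]; linarith
        have hb : (t^2/2-t) * (t^2-1)^2 ≤ 2.45*t^2 := by
          nlinarith [mul_nonneg (by linarith : (0:ℝ) ≤ t+1.2) (by linarith : (0:ℝ) ≤ -1-t),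
            sq_nonneg (t+1), sq_nonneg (t+1.2), mul_nonneg (mul_nonneg (by linarith : (0:ℝ) ≤ t+1.2) (by linarith : (0:ℝ) ≤ -1-t)) (sq_nonneg t)]
        calc (t^2/2-t) * Real.exp (-(t^2/2-t)) * (t^2-1)^2
            = ((t^2/2-t)*(t^2-1)^2) * Real.exp (-(t^2/2-t)) := by ring
          _ ≤ ((t^2/2-t)*(t^2-1)^2) * 1 := by
              apply mul_le_mul_of_nonneg_left hexp
              exact mul_nonneg hv0 (sq_nonneg _)
          _ ≤ 2.45*t^2 := by rw [mul_one]; exact hb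
      · -- t < -1.2
        have hgen : ∀ v : ℝ, 1.5 ≤ v → -1.6*t ≤ v → v * (t^2-1)^2 ≤ 2.45*t^2*Real.exp v := by
          intro v h15 hvt
          have hv0' : (0:ℝ) ≤ v := by linarith
          have hP' := exp_P6_lb hv0'
          have hv2 : 2.56*t^2 ≤ v^2 := by
            nlinarith [mul_nonneg (by linarith : (0:ℝ) ≤ v - (-1.6*t)) (by nlinarith : (0:ℝ) ≤ v + (-1.6*t))]
          have hcube : v^3/6 ≤ Real.exp v := by
            linarith [hP', sq_nonneg v, pow_nonneg hv0' 4, pow_nonneg hv0' 5, pow_nonneg hv0' 6]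
          have ht4 : (t^2-1)^2 ≤ t^2*t^2 := by nlinarith [sq_nonneg t]
          have hq : v*(t^2-1)^2 ≤ (2.45/6)*v^3*t^2 := by
            have s1 : v*(t^2-1)^2 ≤ v*(t^2*t^2) := mul_le_mul_of_nonneg_left ht4 hv0'
            have s2 : v*(t^2*t^2) ≤ (2.45/6)*v^3*t^2 := by
              nlinarith [mul_le_mul_of_nonneg_left hv2 (mul_nonneg hv0' (sq_nonneg t))]
            linarith
          have s3 : (2.45/6)*v^3*t^2 ≤ 2.45*t^2*Real.exp v := by
            nlinarith [mul_le_mul_of_nonneg_left hcube (by positivity : (0:ℝ) ≤ 2.45*t^2)]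
          linarith
        have hkey := hgen (t^2/2-t) (by nlinarith) (by nlinarith)
        rw [Real.exp_neg]
        have hepos := Real.exp_pos (t^2/2 - t)
        calc (t^2/2-t) * (Real.exp (t^2/2-t))⁻¹ * (t^2-1)^2
            = ((t^2/2-t) * (t^2-1)^2) * (Real.exp (t^2/2-t))⁻¹ := by ring
          _ ≤ (2.45*t^2*Real.exp (t^2/2-t)) * (Real.exp (t^2/2-t))⁻¹ :=
              mul_le_mul_of_nonneg_right hkey (by positivity)
          _ = 2.45*t^2 := by
              rw [mul_assoc, mul_inv_cancel₀ (Real.exp_ne_zero _), mul_one]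



-- B assembly with convexity in m
lemma master_B {t m : ℝ} (ht : 1 ≤ |t|) (hm0 : 0 ≤ m) (hm1 : m ≤ 1) :
    gg t * (t^2 - m)^2 ≤ (3.05 - 0.6*m) * t^2 := by
  have hconv : (t^2-m)^2 ≤ (1-m)*t^4 + m*(t^2-1)^2 := by nlinarith [mul_nonneg hm0 (by linarith : (0:ℝ) ≤ 1-m)]
  have h1 : gg t * (t^2-m)^2 ≤ gg t * ((1-m)*t^4 + m*(t^2-1)^2) :=
    mul_le_mul_of_nonneg_left hconv (gg_nonneg t)
  have h2 : gg t * ((1-m)*t^4 + m*(t^2-1)^2)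
      = (1-m)*((gg t * t^2)*t^2) + m*(gg t * (t^2-1)^2) := by ring
  have h3 : (gg t * t^2)*t^2 ≤ 3.05*t^2 :=
    mul_le_mul_of_nonneg_right (master_B0 ht) (sq_nonneg t)
  have h4 : (1-m)*((gg t * t^2)*t^2) ≤ (1-m)*(3.05*t^2) :=
    mul_le_mul_of_nonneg_left h3 (by linarith)
  have h5 : m*(gg t * (t^2-1)^2) ≤ m*(2.45*t^2) :=
    mul_le_mul_of_nonneg_left (master_B1 ht) hm0
  nlinarith [h1, h2, h4, h5]

-- A7 : K bound
lemma kbound {t m : ℝ} (hm0 : 0 ≤ m) (hm1 : m ≤ 1) :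
    gg t * (m - t^2) ≤ 0.439*m*Real.sqrt m := by
  have hrhs : 0 ≤ 0.439*m*Real.sqrt m := by positivity
  rcases le_or_gt (m - t^2) 0 with hc | hc
  · exact le_trans (mul_nonpos_of_nonneg_of_nonpos (gg_nonneg t) hc) hrhs
  · have ht1 : |t| ≤ 1 := by
      have h2 : t^2 ≤ 1 := by linarith
      nlinarith [abs_nonneg t, sq_abs t]
    have hg := gg_ratio ht1
    have step1 : gg t * (m - t^2) ≤ 1.14*|t| * (m - t^2) :=
      mul_le_mul_of_nonneg_right hg hc.le
    have key : |t| * (m - t^2) ≤ 0.385*m*Real.sqrt m := by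
      have ha : 0 ≤ |t| * (m - t^2) := mul_nonneg (abs_nonneg t) hc.le
      have hb : 0 ≤ 0.385*m*Real.sqrt m := by positivity
      have hsq : (|t| * (m - t^2))^2 ≤ (0.385*m*Real.sqrt m)^2 := by
        have e1 : (|t| * (m - t^2))^2 = t^2*(m-t^2)^2 := by
          rw [mul_pow, sq_abs]
        have e2 : (0.385*m*Real.sqrt m)^2 = 0.148225*m^2*m := by
          rw [mul_pow, mul_pow, Real.sq_sqrt hm0]; norm_num
        rw [e1, e2]
        nlinarith [mul_nonneg (sq_nonneg (3*t^2 - m)) (by linarith : (0:ℝ) ≤ 4*m - 3*t^2)]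
      nlinarith [hsq, ha, hb]
    calc gg t * (m - t^2) ≤ 1.14*|t| * (m - t^2) := step1
      _ = 1.14*(|t| * (m - t^2)) := by ring
      _ ≤ 1.14*(0.385*m*Real.sqrt m) := by linarith [mul_le_mul_of_nonneg_left key (by norm_num : (0:ℝ) ≤ 1.14)]
      _ ≤ 0.439*m*Real.sqrt m := by nlinarith [Real.sqrt_nonneg m, hm0, mul_nonneg hm0 (Real.sqrt_nonneg m)]

-- numeric endgame
lemma num1 {m : ℝ} (hm0 : 0 ≤ m) (hm6 : m ≤ 0.6) :
    (3.05 - 0.6*m) + 2*(0.439*m*Real.sqrt m) ≤ 3.1 := by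
  set s := Real.sqrt m with hs
  have hs0 : 0 ≤ s := Real.sqrt_nonneg m
  have hs2 : s^2 = m := Real.sq_sqrt hm0
  have hsb : s ≤ 0.775 := by nlinarith
  nlinarith [mul_nonneg hs0 hs0, mul_le_mul_of_nonneg_right hsb (sq_nonneg s)]

lemma num2 {m : ℝ} (hm6 : 0.6 ≤ m) (hm1 : m ≤ 1) :
    (3.05 - 0.6*m) + 2*(0.825*m*(1-m)) ≤ 3.1 := by nlinarith [sq_nonneg (m - 0.6)]

-- global t² bound
lemma gg_t2_le (t : ℝ) : gg t * t^2 ≤ 3.05 := by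
  rcases le_or_gt 1 (|t|) with h | h
  · exact master_B0 h
  · have h2 : t^2 ≤ 1 := by nlinarith [sq_abs t, abs_nonneg t]
    nlinarith [gg_le t, gg_nonneg t, sq_nonneg t]

-- global t⁴ bound (for integrability)
set_option maxHeartbeats 1000000 in
lemma gg_t4_le (t : ℝ) : gg t * t^4 ≤ 1920 := by
  rcases le_or_gt (|t|) 1 with h | h
  · have h2 : t^2 ≤ 1 := by nlinarith [sq_abs t, abs_nonneg t]
    nlinarith [gg_le t, gg_nonneg t, sq_nonneg t, sq_nonneg (t^2)]
  · rcases le_or_gt 1 t with h1 | h1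
    · rcases le_or_gt t 2 with h2 | h2
      · -- 1 ≤ t ≤ 2
        have hx0 : 0 ≤ t - t^2/2 := by nlinarith
        rw [gg_of_pos hx0]
        have he : Real.exp (t - t^2/2) ≤ 1.65 := by
          calc Real.exp (t-t^2/2) ≤ Real.exp (1/2) := Real.exp_le_exp.2 (by nlinarith [sq_nonneg (t-1)])
            _ ≤ 1.65 := exp_half_le
        have : (t - t^2/2) * Real.exp (t-t^2/2) * t^4 ≤ (t - t^2/2) * 1.65 * t^4 := by
          apply mul_le_mul_of_nonneg_right _ (by positivity)
          exact mul_le_mul_of_nonneg_left he hx0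
        have ha : t - t^2/2 ≤ 1/2 := by nlinarith [sq_nonneg (t-1)]
        have hb : t^4 ≤ 16 := by nlinarith
        have := mul_le_mul (by linarith : t - t^2/2 ≤ 1/2) hb (by positivity) (by norm_num)
        nlinarith [this, mul_le_mul_of_nonneg_right ha (by positivity : (0:ℝ) ≤ t^4),
          mul_le_mul_of_nonneg_left hb (by linarith : (0:ℝ) ≤ t - t^2/2)]
      · -- t ≥ 2
        rw [gg_of_neg (by nlinarith)]
        rcases le_or_gt t 3 with h3 | h3
        · -- 2 ≤ t ≤ 3 : v ≤ 1.5, e^{-v} ≤ 1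
          have hv0 : (0:ℝ) ≤ t^2/2 - t := by nlinarith
          have hexp : Real.exp (-(t^2/2 - t)) ≤ 1 := by
            rw [Real.exp_le_one_iff]; linarith
          have hb : (t^2/2-t) * t^4 ≤ 1920 := by
            have ha : t^2/2 - t ≤ 1.5 := by nlinarith
            have hb4 : t^4 ≤ 81 := by nlinarith
            nlinarith [mul_le_mul ha hb4 (by positivity) (by norm_num)]
          calc (t^2/2-t) * Real.exp (-(t^2/2-t)) * t^4
              = ((t^2/2-t)*t^4) * Real.exp (-(t^2/2-t)) := by ring
            _ ≤ ((t^2/2-t)*t^4) * 1 := mul_le_mul_of_nonneg_left hexp (by positivity)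
            _ ≤ 1920 := by rw [mul_one]; exact hb
        · -- t ≥ 3
          have hgen : ∀ v : ℝ, 1.5 ≤ v → t^2 ≤ 6*v → v * t^4 ≤ 1920 * Real.exp v := by
            intro v h15 hvt
            have hv0' : (0:ℝ) ≤ v := by linarith
            have hP' := exp_P6_lb hv0'
            have h5 : v^5/120 ≤ Real.exp v := by
              linarith [hP', sq_nonneg v, pow_nonneg hv0' 3, pow_nonneg hv0' 4, pow_nonneg hv0' 6]
            have ht4 : t^4 ≤ 36*v^2 := by nlinarith [sq_nonneg t]
            have hq : v*t^4 ≤ 36*v^3 := by nlinarith [mul_le_mul_of_nonneg_left ht4 hv0']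
            have hv2 : (2.25:ℝ) ≤ v^2 := by nlinarith
            have h36 : 36*v^3 ≤ 16*v^5 := by
              nlinarith [mul_le_mul_of_nonneg_left hv2 (pow_nonneg hv0' 3)]
            nlinarith [mul_le_mul_of_nonneg_left h5 (by norm_num : (0:ℝ) ≤ 1920)]
          have hkey := hgen (t^2/2-t) (by nlinarith) (by nlinarith)
          rw [Real.exp_neg]
          calc (t^2/2-t) * (Real.exp (t^2/2-t))⁻¹ * t^4
              = ((t^2/2-t) * t^4) * (Real.exp (t^2/2-t))⁻¹ := by ring
            _ ≤ (1920*Real.exp (t^2/2-t)) * (Real.exp (t^2/2-t))⁻¹ :=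
                mul_le_mul_of_nonneg_right hkey (by positivity)
            _ = 1920 := by rw [mul_assoc, mul_inv_cancel₀ (Real.exp_ne_zero _), mul_one]
    · -- t ≤ -1
      have htn : t ≤ -1 := by
        rcases abs_cases t with ⟨he, _⟩ | ⟨he, _⟩ <;> linarith
      rw [gg_of_neg (by nlinarith)]
      have hgen : ∀ v : ℝ, 1.5 ≤ v → -1.5*t ≤ v → v * t^4 ≤ 1920 * Real.exp v := by
        intro v h15 hvt
        have hv0' : (0:ℝ) ≤ v := by linarith
        have hP' := exp_P6_lb hv0'
        have h5 : v^5/120 ≤ Real.exp v := by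
          linarith [hP', sq_nonneg v, pow_nonneg hv0' 3, pow_nonneg hv0' 4, pow_nonneg hv0' 6]
        have hv2 : 2.25*t^2 ≤ v^2 := by
          nlinarith [mul_nonneg (by linarith : (0:ℝ) ≤ v - (-1.5*t)) (by nlinarith : (0:ℝ) ≤ v + (-1.5*t))]
        have ht4 : 5.0625*t^4 ≤ v^4 := by nlinarith [sq_nonneg t, sq_nonneg v, sq_nonneg (v^2 - 2.25*t^2)]
        have hq : v*t^4 ≤ (1/5.0625)*v^5 := by nlinarith [mul_le_mul_of_nonneg_left ht4 hv0', pow_nonneg hv0' 5]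
        nlinarith [mul_le_mul_of_nonneg_left h5 (by norm_num : (0:ℝ) ≤ 1920), pow_nonneg hv0' 5]
      have hkey := hgen (t^2/2-t) (by nlinarith) (by nlinarith)
      rw [Real.exp_neg]
      calc (t^2/2-t) * (Real.exp (t^2/2-t))⁻¹ * t^4
          = ((t^2/2-t) * t^4) * (Real.exp (t^2/2-t))⁻¹ := by ring
        _ ≤ (1920*Real.exp (t^2/2-t)) * (Real.exp (t^2/2-t))⁻¹ :=
            mul_le_mul_of_nonneg_right hkey (by positivity)
        _ = 1920 := by rw [mul_assoc, mul_inv_cancel₀ (Real.exp_ne_zero _), mul_one]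



lemma max_helper1 {g a c : ℝ} (hg0 : 0 ≤ g) (hgc : g ≤ c) (hc : 0 ≤ c) :
    max 0 (g*a) ≤ c * max 0 a := by
  rcases le_or_gt a 0 with h | h
  · have : g * a ≤ 0 := mul_nonpos_of_nonneg_of_nonpos hg0 h
    rw [max_eq_left this]
    exact mul_nonneg hc (le_max_left _ _)
  · rw [max_eq_right (mul_nonneg hg0 h.le), max_eq_right h.le]
    exact mul_le_mul_of_nonneg_right hgc h.le

lemma max_helper2 {m x : ℝ} (hm1 : m ≤ 1) (hx0 : 0 ≤ x) (hm0 : 0 ≤ m) :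
    max 0 (m - x) ≤ m * max 0 (1 - x) := by
  rcases le_or_gt (m - x) 0 with h | h
  · rw [max_eq_left h]
    exact mul_nonneg hm0 (le_max_left _ _)
  · rw [max_eq_right h.le, max_eq_right (by nlinarith : (0:ℝ) ≤ 1 - x)]
    nlinarith

set_option maxHeartbeats 4000000 in
theorem lemma_l3_d {Ω : Type*} [MeasurableSpace Ω] (μ : Measure Ω) [IsProbabilityMeasure μ]
    (X : Ω → ℝ) (hX : Measurable X) (hX2 : Integrable (fun ω => X ω ^ 2) μ)
    (hmean : ∫ ω, X ω ∂μ = 0)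
    (Y Z : Ω → ℝ) (hY : ∀ ω, Y ω = X ω - X ω ^ 2 / 2)
    (hZ : ∀ ω, Z ω = X ω ^ 2 - ∫ ω, X ω ^ 2 ∂μ)
    (δ₁₁ δ₁₂ : ℝ) (hδ₁₁ : δ₁₁ = ∫ ω in {ω | 1 < |X ω|}, X ω ^ 2 ∂μ)
    (hδ₁₂ : δ₁₂ = ∫ ω in {ω | |X ω| ≤ 1}, |X ω| ^ 3 ∂μ) :
    ∫ ω, |Y ω| * Z ω ^ 2 * Real.exp (Y ω) ∂μ ≤ 3.1 * δ₁₁ + δ₁₂ + δ₁₁ ^ 2 := by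
  classical
  set A : Set Ω := {ω | |X ω| ≤ 1} with hA
  have hAmeas : MeasurableSet A := measurableSet_le hX.abs measurable_const
  have hBeq : {ω | 1 < |X ω|} = Aᶜ := by
    ext ω; simp [hA, not_le]
  set m0 : ℝ := ∫ ω in A, X ω ^ 2 ∂μ with hm0def
  have hd : δ₁₁ = ∫ ω in Aᶜ, X ω ^ 2 ∂μ := by rw [hδ₁₁, hBeq]
  have hsplit : m0 + δ₁₁ = ∫ ω, X ω ^ 2 ∂μ := by
    rw [hd, hm0def]; exact integral_add_compl hAmeas hX2
  have hμA1 : (μ A).toReal ≤ 1 := by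
    have h := prob_le_one (μ := μ) (s := A)
    simpa using ENNReal.toReal_mono (by simp) h
  have hm00 : 0 ≤ m0 := setIntegral_nonneg hAmeas (fun ω _ => by positivity)
  have hd0 : 0 ≤ δ₁₁ := by
    rw [hd]; exact setIntegral_nonneg hAmeas.compl (fun ω _ => by positivity)
  -- integrable on A of const
  have hX2A : IntegrableOn (fun ω => X ω ^ 2) A μ := hX2.integrableOn
  have hm01 : m0 ≤ 1 := by
    have hmono : m0 ≤ ∫ _ω in A, (1:ℝ) ∂μ := by
      rw [hm0def]
      refine setIntegral_mono_on hX2A (integrableOn_const (measure_lt_top μ A).ne)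
        hAmeas (fun ω hω => ?_)
      have : |X ω| ≤ 1 := hω
      nlinarith [sq_abs (X ω), abs_nonneg (X ω)]
    rw [setIntegral_const, smul_eq_mul, mul_one] at hmono
    exact le_trans hmono hμA1
  -- measurability
  have hq : Measurable fun ω => X ω - X ω^2/2 := hX.sub ((hX.pow_const 2).div_const 2)
  have hGmeas : Measurable fun ω => gg (X ω) := by
    unfold gg
    exact hq.abs.mul hq.exp
  have hGae : AEStronglyMeasurable (fun ω => gg (X ω)) μ := hGmeas.aestronglyMeasurable
  -- integrability of the three pieces
  have hf1meas : Measurable fun ω => gg (X ω) * (X ω^2 - m0)^2 :=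
    hGmeas.mul (((hX.pow_const 2).sub_const m0).pow_const 2)
  have hf1bd : ∀ ω, ‖gg (X ω) * (X ω^2 - m0)^2‖ ≤ 3842 := by
    intro ω
    rw [Real.norm_eq_abs, abs_of_nonneg (mul_nonneg (gg_nonneg _) (sq_nonneg _))]
    have h1 : (X ω^2 - m0)^2 ≤ 2*(X ω^2)^2 + 2*m0^2 := by nlinarith [sq_nonneg (X ω^2 + m0)]
    have h2 : gg (X ω) * (X ω^2 - m0)^2 ≤ gg (X ω) * (2*(X ω^2)^2 + 2*m0^2) :=
      mul_le_mul_of_nonneg_left h1 (gg_nonneg _)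
    have h3 : gg (X ω) * (X ω ^2)^2 = gg (X ω) * (X ω)^4 := by ring
    nlinarith [gg_t4_le (X ω), gg_le (X ω), gg_nonneg (X ω), h2,
      mul_le_mul_of_nonneg_left (by nlinarith : m0^2 ≤ (1:ℝ)) (gg_nonneg (X ω))]
  have hf1int : Integrable (fun ω => gg (X ω) * (X ω^2 - m0)^2) μ :=
    (integrable_const (3842:ℝ)).mono' hf1meas.aestronglyMeasurable (Filter.Eventually.of_forall hf1bd)
  have hf2meas : Measurable fun ω => gg (X ω) * (X ω^2 - m0) :=
    hGmeas.mul ((hX.pow_const 2).sub_const m0)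
  have hf2bd : ∀ ω, ‖gg (X ω) * (X ω^2 - m0)‖ ≤ 4 := by
    intro ω
    rw [Real.norm_eq_abs, abs_le]
    constructor
    · have : gg (X ω) * (m0 - X ω^2) ≤ gg (X ω) * m0 := by
        apply mul_le_mul_of_nonneg_left _ (gg_nonneg _)
        nlinarith [sq_nonneg (X ω)]
      nlinarith [gg_le (X ω), gg_nonneg (X ω), hm01, hm00]
    · have : gg (X ω) * (X ω^2 - m0) ≤ gg (X ω) * X ω^2 := by
        apply mul_le_mul_of_nonneg_left _ (gg_nonneg _)
        linarith
      nlinarith [gg_t2_le (X ω)]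
  have hf2int : Integrable (fun ω => gg (X ω) * (X ω^2 - m0)) μ :=
    (integrable_const (4:ℝ)).mono' hf2meas.aestronglyMeasurable (Filter.Eventually.of_forall hf2bd)
  have hf3int : Integrable (fun ω => gg (X ω)) μ :=
    (integrable_const (0.825:ℝ)).mono' hGae (Filter.Eventually.of_forall (fun ω => by
      rw [Real.norm_eq_abs, abs_of_nonneg (gg_nonneg _)]; exact gg_le _))
  -- the expansion of the target integrand
  have hm : (∫ ω, X ω ^ 2 ∂μ) = m0 + δ₁₁ := hsplit.symm
  have hexpand : (fun ω => |Y ω| * Z ω ^ 2 * Real.exp (Y ω)) =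
      (fun ω => gg (X ω) * (X ω^2 - m0)^2 - (2*δ₁₁) * (gg (X ω) * (X ω^2 - m0))
        + δ₁₁^2 * gg (X ω)) := by
    funext ω
    rw [hY, hZ, hm]
    unfold gg
    ring
  rw [hexpand]
  have hint_split : ∫ ω, (gg (X ω) * (X ω^2 - m0)^2 - (2*δ₁₁) * (gg (X ω) * (X ω^2 - m0))
        + δ₁₁^2 * gg (X ω)) ∂μ
      = (∫ ω, gg (X ω) * (X ω^2 - m0)^2 ∂μ) - (2*δ₁₁) * (∫ ω, gg (X ω) * (X ω^2 - m0) ∂μ)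
        + δ₁₁^2 * (∫ ω, gg (X ω) ∂μ) := by
    have h1 := integral_sub hf1int (hf2int.const_mul (2*δ₁₁))
    have h2 := integral_add ((hf1int.sub (hf2int.const_mul (2*δ₁₁)))) (hf3int.const_mul (δ₁₁^2))
    simp only [Pi.sub_apply] at h2
    rw [h2, h1, MeasureTheory.integral_const_mul, MeasureTheory.integral_const_mul]
  rw [hint_split]
  -- split I1 over A and Aᶜ
  have hI1split : (∫ ω, gg (X ω) * (X ω^2 - m0)^2 ∂μ)
      = (∫ ω in A, gg (X ω) * (X ω^2 - m0)^2 ∂μ) + ∫ ω in Aᶜ, gg (X ω) * (X ω^2 - m0)^2 ∂μ :=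
    (integral_add_compl hAmeas hf1int).symm
  -- auxiliary integrabilities on A
  have hintA3 : IntegrableOn (fun ω => |X ω|^3) A μ := by
    refine Integrable.mono' (integrable_const (1:ℝ)).restrict
      ((hX.abs.pow_const 3).aestronglyMeasurable.restrict) ?_
    rw [ae_restrict_iff' hAmeas]
    refine Filter.Eventually.of_forall (fun ω hω => ?_)
    have h1 : |X ω| ≤ 1 := hω
    have h0 : (0:ℝ) ≤ |X ω| := abs_nonneg _
    rw [Real.norm_eq_abs, abs_of_nonneg (by positivity)]
    calc |X ω|^3 ≤ 1^3 := pow_le_pow_left₀ h0 h1 3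
      _ = 1 := one_pow 3
  have hconstA : IntegrableOn (fun _ω => m0) A μ :=
    integrableOn_const (measure_lt_top μ A).ne
  have hintAsub : IntegrableOn (fun ω => X ω^2 - m0) A μ := hX2A.sub hconstA
  have hintAf2 : IntegrableOn (fun ω => 0.4*m0^2*(X ω^2 - m0)) A μ := hintAsub.const_mul _
  -- Step A : ∫_A f1 ≤ δ₁₂
  have hAvalue : (∫ ω in A, (X ω^2 - m0) ∂μ) = m0 - m0 * (μ A).toReal := by
    rw [integral_sub hX2A hconstA, setIntegral_const, smul_eq_mul, mul_comm, ← hm0def, measureReal_def]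
  have hstepA : (∫ ω in A, gg (X ω) * (X ω^2 - m0)^2 ∂μ) ≤ δ₁₂ := by
    have hmono : (∫ ω in A, gg (X ω) * (X ω^2 - m0)^2 ∂μ)
        ≤ ∫ ω in A, (|X ω|^3 - 0.4*m0^2*(X ω^2 - m0)) ∂μ := by
      refine setIntegral_mono_on hf1int.integrableOn (hintA3.sub hintAf2) hAmeas
        (fun ω hω => ?_)
      have h1 : |X ω| ≤ 1 := hω
      linarith [master_A h1 hm00 hm01]
    rw [integral_sub hintA3 hintAf2, MeasureTheory.integral_const_mul, hAvalue] at hmono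
    have hnn : 0 ≤ m0 - m0 * (μ A).toReal := by nlinarith [hμA1, hm00]
    rw [hδ₁₂]
    nlinarith [hmono, sq_nonneg m0, mul_nonneg (mul_nonneg (by norm_num : (0:ℝ) ≤ 0.4) (sq_nonneg m0)) hnn]
  -- Step B : ∫_Aᶜ f1 ≤ (3.05 - 0.6 m0) δ₁₁
  have hstepB : (∫ ω in Aᶜ, gg (X ω) * (X ω^2 - m0)^2 ∂μ) ≤ (3.05 - 0.6*m0) * δ₁₁ := by
    have hmono : (∫ ω in Aᶜ, gg (X ω) * (X ω^2 - m0)^2 ∂μ)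
        ≤ ∫ ω in Aᶜ, (3.05 - 0.6*m0) * X ω^2 ∂μ := by
      refine setIntegral_mono_on hf1int.integrableOn (hX2.integrableOn.const_mul _)
        hAmeas.compl (fun ω hω => ?_)
      have h1 : 1 ≤ |X ω| := by
        have : ¬ (|X ω| ≤ 1) := hω
        linarith [lt_of_not_ge this]
      exact master_B h1 hm00 hm01
    rw [MeasureTheory.integral_const_mul] at hmono
    rw [hd]
    exact hmono
  -- the negative-part function n
  set n : Ω → ℝ := fun ω => max 0 (gg (X ω) * (m0 - X ω^2)) with hn
  have hnmeas : Measurable n := measurable_const.max (hGmeas.mul (measurable_const.sub (hX.pow_const 2)))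
  have hnpt : ∀ ω, n ω ≤ 0.439*m0*Real.sqrt m0 := by
    intro ω
    refine max_le (by positivity) (kbound hm00 hm01)
  have hn0 : ∀ ω, 0 ≤ n ω := fun ω => le_max_left _ _
  have hnint : Integrable n μ := by
    refine Integrable.mono' (integrable_const (0.439*m0*Real.sqrt m0)) hnmeas.aestronglyMeasurable
      (Filter.Eventually.of_forall (fun ω => ?_))
    rw [Real.norm_eq_abs, abs_of_nonneg (hn0 ω)]
    exact hnpt ω
  have hIn : (∫ ω, n ω ∂μ) ≤ 0.439*m0*Real.sqrt m0 := by
    calc (∫ ω, n ω ∂μ) ≤ ∫ _ω, (0.439*m0*Real.sqrt m0) ∂μ :=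
          integral_mono hnint (integrable_const _) hnpt
      _ = 0.439*m0*Real.sqrt m0 := by simp
  have hI2 : -(∫ ω, gg (X ω) * (X ω^2 - m0) ∂μ) ≤ ∫ ω, n ω ∂μ := by
    have hpt : ∀ ω, -(n ω) ≤ gg (X ω) * (X ω^2 - m0) := by
      intro ω
      have := le_max_right (0:ℝ) (gg (X ω) * (m0 - X ω^2))
      nlinarith [this]
    have := integral_mono hnint.neg hf2int (fun ω => hpt ω)
    simp only [Pi.neg_apply] at this
    rw [integral_neg] at this
    linarith
  -- second bound on ∫ n
  have hQint : Integrable (fun ω => max 0 (1 - X ω^2)) μ := by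
    refine Integrable.mono' (integrable_const (1:ℝ))
      (measurable_const.max (measurable_const.sub (hX.pow_const 2))).aestronglyMeasurable
      (Filter.Eventually.of_forall (fun ω => ?_))
    rw [Real.norm_eq_abs, abs_of_nonneg (le_max_left _ _)]
    refine max_le (by norm_num) (by nlinarith [sq_nonneg (X ω)])
  have hIQ : (∫ ω, max 0 (1 - X ω^2) ∂μ) ≤ 1 - m0 := by
    have hsplitQ : (∫ ω, max 0 (1 - X ω^2) ∂μ)
        = (∫ ω in A, max 0 (1 - X ω^2) ∂μ) + ∫ ω in Aᶜ, max 0 (1 - X ω^2) ∂μ :=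
      (integral_add_compl hAmeas hQint).symm
    have hQA : (∫ ω in A, max 0 (1 - X ω^2) ∂μ) = ∫ ω in A, (1 - X ω^2) ∂μ := by
      refine setIntegral_congr_fun hAmeas (fun ω hω => ?_)
      have h1 : |X ω| ≤ 1 := hω
      have : X ω^2 ≤ 1 := by nlinarith [sq_abs (X ω), abs_nonneg (X ω)]
      exact max_eq_right (by linarith)
    have hQB : (∫ ω in Aᶜ, max 0 (1 - X ω^2) ∂μ) = 0 := by
      have : (∫ ω in Aᶜ, max 0 (1 - X ω^2) ∂μ) = ∫ _ω in Aᶜ, (0:ℝ) ∂μ := by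
        refine setIntegral_congr_fun hAmeas.compl (fun ω hω => ?_)
        have h1 : 1 < |X ω| := lt_of_not_ge hω
        have : 1 - X ω^2 ≤ 0 := by nlinarith [sq_abs (X ω), abs_nonneg (X ω)]
        exact max_eq_left this
      rw [this, integral_zero]
    have hA1 : (∫ ω in A, (1 - X ω^2) ∂μ) = (μ A).toReal - m0 := by
      rw [integral_sub (integrableOn_const (C := (1:ℝ)) (measure_lt_top μ A).ne) hX2A,
        setIntegral_const, smul_eq_mul, mul_one, ← hm0def, measureReal_def]
    rw [hsplitQ, hQA, hQB, hA1]
    linarith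
  have hIn2 : (∫ ω, n ω ∂μ) ≤ 0.825*m0*(1-m0) := by
    have hpt : ∀ ω, n ω ≤ (0.825*m0) * max 0 (1 - X ω^2) := by
      intro ω
      have s1 : n ω ≤ 0.825 * max 0 (m0 - X ω^2) :=
        max_helper1 (gg_nonneg _) (gg_le _) (by norm_num)
      have s2 : max 0 (m0 - X ω^2) ≤ m0 * max 0 (1 - X ω^2) :=
        max_helper2 hm01 (sq_nonneg _) hm00
      calc n ω ≤ 0.825 * max 0 (m0 - X ω^2) := s1
        _ ≤ 0.825 * (m0 * max 0 (1 - X ω^2)) :=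
            mul_le_mul_of_nonneg_left s2 (by norm_num)
        _ = (0.825*m0) * max 0 (1 - X ω^2) := by ring
    calc (∫ ω, n ω ∂μ) ≤ ∫ ω, (0.825*m0) * max 0 (1 - X ω^2) ∂μ :=
          integral_mono hnint (hQint.const_mul _) hpt
      _ = (0.825*m0) * ∫ ω, max 0 (1 - X ω^2) ∂μ := MeasureTheory.integral_const_mul _ _
      _ ≤ (0.825*m0) * (1 - m0) := mul_le_mul_of_nonneg_left hIQ (by positivity)
      _ = 0.825*m0*(1-m0) := by ring
  -- bound on ∫ f3
  have hI30 : 0 ≤ ∫ ω, gg (X ω) ∂μ := integral_nonneg (fun ω => gg_nonneg _)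
  have hI3 : (∫ ω, gg (X ω) ∂μ) ≤ 0.825 := by
    calc (∫ ω, gg (X ω) ∂μ) ≤ ∫ _ω, (0.825:ℝ) ∂μ :=
          integral_mono hf3int (integrable_const _) (fun ω => gg_le (X ω))
      _ = 0.825 := by simp
  -- final assembly
  have p2 : δ₁₁^2 * (∫ ω, gg (X ω) ∂μ) ≤ δ₁₁^2 * 0.825 :=
    mul_le_mul_of_nonneg_left hI3 (sq_nonneg _)
  rcases le_or_gt m0 0.6 with hc | hc
  · have hnum := num1 hm00 hc
    have p1 : (2*δ₁₁) * (-(∫ ω, gg (X ω) * (X ω^2 - m0) ∂μ)) ≤ (2*δ₁₁) * (0.439*m0*Real.sqrt m0) :=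
      mul_le_mul_of_nonneg_left (le_trans hI2 hIn) (by positivity)
    have p3 : ((3.05 - 0.6*m0) + 2*(0.439*m0*Real.sqrt m0)) * δ₁₁ ≤ 3.1 * δ₁₁ :=
      mul_le_mul_of_nonneg_right hnum hd0
    nlinarith [p1, p2, p3, hI1split, hstepA, hstepB, sq_nonneg δ₁₁]
  · have hnum := num2 hc.le hm01
    have p1 : (2*δ₁₁) * (-(∫ ω, gg (X ω) * (X ω^2 - m0) ∂μ)) ≤ (2*δ₁₁) * (0.825*m0*(1-m0)) :=
      mul_le_mul_of_nonneg_left (le_trans hI2 hIn2) (by positivity)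
    have p3 : ((3.05 - 0.6*m0) + 2*(0.825*m0*(1-m0))) * δ₁₁ ≤ 3.1 * δ₁₁ :=
      mul_le_mul_of_nonneg_right hnum hd0
    nlinarith [p1, p2, p3, hI1split, hstepA, hstepB, sq_nonneg δ₁₁]
end

section
/- Let X be a real random variable with E X = 0 and E X² < ∞, and let δ₁ = E[X² 1{|X|>1}] + E[|X|³ 1{|X|≤1}]. Then for Y = X - X²/2, one has e^{-5.5 δ₁} ≤ E[e^Y] ≤ e^{2.65 δ₁}. -/
open MeasureTheory

-- cubic lower bound on whole line
lemma exp_ge_cubic (t : ℝ) : 1 + t + t^2/2 + t^3/6 ≤ Real.exp t := by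
  have hd2 : ∀ s : ℝ, HasDerivAt (fun u : ℝ => Real.exp u - (1 + u + u^2/2)) (Real.exp s - (1 + s)) s := by
    intro s
    have h1 : HasDerivAt (fun u : ℝ => 1 + u + u^2/2) (0 + 1 + (2 * s^1)/2) s :=
      ((hasDerivAt_const s (1:ℝ)).add (hasDerivAt_id s)).add ((hasDerivAt_pow 2 s).div_const 2)
    have := (Real.hasDerivAt_exp s).sub h1
    convert this using 1
    push_cast
    exacts [rfl, rfl, rfl, by ring]
  have hmono : Monotone (fun u : ℝ => Real.exp u - (1 + u + u^2/2)) := by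
    apply monotone_of_deriv_nonneg
    · exact fun s => (hd2 s).differentiableAt
    · intro s
      rw [(hd2 s).deriv]
      linarith [Real.add_one_le_exp s]
  have hq_nonneg : ∀ s : ℝ, 0 ≤ s → 1 + s + s^2/2 ≤ Real.exp s := by
    intro s hs
    have := hmono hs
    simp [Real.exp_zero] at this
    linarith
  have hq_nonpos : ∀ s : ℝ, s ≤ 0 → Real.exp s ≤ 1 + s + s^2/2 := by
    intro s hs
    have := hmono hs
    simp [Real.exp_zero] at this
    linarith
  have hd3 : ∀ s : ℝ, HasDerivAt (fun u : ℝ => Real.exp u - (1 + u + u^2/2 + u^3/6))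
      (Real.exp s - (1 + s + s^2/2)) s := by
    intro s
    have h1 : HasDerivAt (fun u : ℝ => 1 + u + u^2/2 + u^3/6) (0 + 1 + (2*s^1)/2 + (3*s^2)/6) s :=
      (((hasDerivAt_const s (1:ℝ)).add (hasDerivAt_id s)).add
        ((hasDerivAt_pow 2 s).div_const 2)).add ((hasDerivAt_pow 3 s).div_const 6)
    have := (Real.hasDerivAt_exp s).sub h1
    convert this using 1
    push_cast
    exacts [rfl, rfl, rfl, by ring]
  set f := fun u : ℝ => Real.exp u - (1 + u + u^2/2 + u^3/6) with hf
  have hcont : Continuous f := by fun_prop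
  have key : 0 ≤ f t := by
    rcases le_or_gt 0 t with h | h
    · have hmOn : MonotoneOn f (Set.Ici 0) := by
        apply monotoneOn_of_deriv_nonneg (convex_Ici 0) hcont.continuousOn
        · intro s hs
          exact (hd3 s).differentiableAt.differentiableWithinAt
        · intro s hs
          rw [(hd3 s).deriv]
          rw [interior_Ici] at hs
          linarith [hq_nonneg s (le_of_lt hs)]
      have := hmOn (Set.self_mem_Ici) h h
      simpa [hf, Real.exp_zero] using this
    · have hmOn : AntitoneOn f (Set.Iic 0) := by
        apply antitoneOn_of_deriv_nonpos (convex_Iic 0) hcont.continuousOn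
        · intro s hs
          exact (hd3 s).differentiableAt.differentiableWithinAt
        · intro s hs
          rw [(hd3 s).deriv]
          rw [interior_Iic] at hs
          linarith [hq_nonpos s (le_of_lt hs)]
      have := hmOn h.le (Set.self_mem_Iic) h.le
      simpa [hf, Real.exp_zero] using this
  simp only [hf] at key
  linarith

lemma exp_le_quad {t : ℝ} (ht : t ≤ 0) : Real.exp t ≤ 1 + t + t^2/2 := by
  have h := exp_ge_cubic (-t)
  have hpos := Real.exp_pos (-t)
  have hmul : Real.exp t * Real.exp (-t) = 1 := by
    rw [← Real.exp_add]; simp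
  have hB : (0:ℝ) < 1 + t + t^2/2 := by nlinarith [sq_nonneg (t+1)]
  have hprod : 1 ≤ (1 + t + t^2/2) * (1 + (-t) + (-t)^2/2 + (-t)^3/6) := by nlinarith [pow_nonneg (neg_nonneg.2 ht) 3, pow_nonneg (neg_nonneg.2 ht) 4, pow_nonneg (neg_nonneg.2 ht) 5]
  apply le_of_mul_le_mul_right _ hpos
  calc Real.exp t * Real.exp (-t) = 1 := hmul
    _ ≤ (1 + t + t^2/2) * (1 + (-t) + (-t)^2/2 + (-t)^3/6) := hprod
    _ ≤ (1 + t + t^2/2) * Real.exp (-t) := by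
        apply mul_le_mul_of_nonneg_left h hB.le

lemma exp_le_cubic' {t : ℝ} (h0 : 0 ≤ t) (h1 : t ≤ 1/2) :
    Real.exp t ≤ 1 + t + t^2/2 + t^3/3 := by
  have h := exp_ge_cubic (-t)
  have hpos := Real.exp_pos (-t)
  have hmul : Real.exp t * Real.exp (-t) = 1 := by
    rw [← Real.exp_add]; simp
  have hB : (0:ℝ) < 1 + t + t^2/2 + t^3/3 := by positivity
  have hprod : 1 ≤ (1 + t + t^2/2 + t^3/3) * (1 + (-t) + (-t)^2/2 + (-t)^3/6) := by
    nlinarith [pow_nonneg h0 3, pow_nonneg h0 4, pow_nonneg h0 5, pow_nonneg h0 6]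
  apply le_of_mul_le_mul_right _ hpos
  calc Real.exp t * Real.exp (-t) = 1 := hmul
    _ ≤ (1 + t + t^2/2 + t^3/3) * (1 + (-t) + (-t)^2/2 + (-t)^3/6) := hprod
    _ ≤ (1 + t + t^2/2 + t^3/3) * Real.exp (-t) := mul_le_mul_of_nonneg_left h hB.le

lemma exp_le_two {t : ℝ} (ht : t ≤ 1/2) : Real.exp t ≤ 2 := by
  have e1 : Real.exp t ≤ Real.exp (1/2) := Real.exp_le_exp.2 ht
  have e2 : (1:ℝ)/2 ≤ Real.exp (-(1/2)) := by
    have := Real.add_one_le_exp (-(1/2):ℝ); linarith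
  have e3 : Real.exp (1/2:ℝ) * Real.exp (-(1/2):ℝ) = 1 := by
    rw [← Real.exp_add]; norm_num
  nlinarith [Real.exp_pos (1/2:ℝ)]

noncomputable def gfun (x : ℝ) : ℝ := if |x| ≤ 1 then |x|^3 else x^2

lemma gfun_nonneg (x : ℝ) : 0 ≤ gfun x := by
  unfold gfun; split_ifs
  · positivity
  · positivity

lemma gfun_le_sq (x : ℝ) : gfun x ≤ x^2 := by
  unfold gfun; split_ifs with h
  · calc |x|^3 = |x|^2 * |x| := by ring
      _ ≤ |x|^2 * 1 := by nlinarith [abs_nonneg x, sq_nonneg x]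
      _ = x^2 := by rw [mul_one, sq_abs]
  · exact le_rfl

lemma pw_upper (x : ℝ) : Real.exp (x - x^2/2) ≤ 1 + x + gfun x := by
  unfold gfun
  split_ifs with h
  · rcases le_or_gt 0 x with hx | hx
    · have hx1 : x ≤ 1 := (abs_le.1 h).2
      rw [abs_of_nonneg hx]
      have ht0 : 0 ≤ x - x^2/2 := by nlinarith
      have ht1 : x - x^2/2 ≤ 1/2 := by nlinarith [sq_nonneg (x-1)]
      have := exp_le_cubic' ht0 ht1
      have htx : x - x^2/2 ≤ x := by nlinarith
      nlinarith [pow_nonneg ht0 3, pow_le_pow_left₀ ht0 htx 3, pow_nonneg hx 3, pow_nonneg hx 4]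
    · have hx1 : -1 ≤ x := (abs_le.1 h).1
      rw [abs_of_neg hx]
      have ht0 : x - x^2/2 ≤ 0 := by nlinarith
      have := exp_le_quad ht0
      nlinarith [pow_nonneg (neg_nonneg.2 hx.le) 3, pow_nonneg (neg_nonneg.2 hx.le) 4]
  · push_neg at h
    rcases le_or_gt 0 x with hx | hx
    · have hx1 : 1 < x := by rwa [abs_of_nonneg hx] at h
      have ht1 : x - x^2/2 ≤ 1/2 := by nlinarith [sq_nonneg (x-1)]
      have h2 : Real.exp (x - x^2/2) ≤ 2 := by
        have e1 : Real.exp (x - x^2/2) ≤ Real.exp (1/2) := Real.exp_le_exp.2 ht1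
        have e2 : (1:ℝ)/2 ≤ Real.exp (-(1/2)) := by
          have := Real.add_one_le_exp (-(1/2):ℝ); linarith
        have e3 : Real.exp (1/2:ℝ) * Real.exp (-(1/2):ℝ) = 1 := by
          rw [← Real.exp_add]; norm_num
        nlinarith [Real.exp_pos (1/2:ℝ)]
      nlinarith
    · have hx1 : x < -1 := by rw [abs_of_neg hx] at h; linarith
      have ht0 : x - x^2/2 ≤ 0 := by nlinarith
      have h1 : Real.exp (x - x^2/2) ≤ 1 := Real.exp_le_one_iff.2 ht0
      nlinarith

lemma pw_lower (x : ℝ) : 1 + x - gfun x ≤ Real.exp (x - x^2/2) := by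
  unfold gfun
  split_ifs with h
  · have key := exp_ge_cubic (x - x^2/2)
    rcases le_or_gt 0 x with hx | hx
    · have hx1 : x ≤ 1 := (abs_le.1 h).2
      rw [abs_of_nonneg hx]
      nlinarith [pow_nonneg hx 3, pow_nonneg hx 4, pow_nonneg hx 5, pow_nonneg hx 6]
    · have hx1 : -1 ≤ x := (abs_le.1 h).1
      rw [abs_of_neg hx]
      nlinarith [pow_nonneg (neg_nonneg.2 hx.le) 3, pow_nonneg (neg_nonneg.2 hx.le) 4,
        pow_nonneg (neg_nonneg.2 hx.le) 5, pow_nonneg (neg_nonneg.2 hx.le) 6]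
  · have := Real.add_one_le_exp (x - x^2/2)
    nlinarith [sq_nonneg x]

theorem mgf_estimate {Ω : Type*} [MeasurableSpace Ω] (μ : Measure Ω) [IsProbabilityMeasure μ]
    (X : Ω → ℝ) (hX : Measurable X) (hX2 : Integrable (fun ω => X ω ^ 2) μ)
    (hmean : ∫ ω, X ω ∂μ = 0)
    (Y : Ω → ℝ) (hY : ∀ ω, Y ω = X ω - X ω ^ 2 / 2)
    (δ₁ : ℝ)
    (hδ₁ : δ₁ = (∫ ω in {ω | 1 < |X ω|}, X ω ^ 2 ∂μ) + ∫ ω in {ω | |X ω| ≤ 1}, |X ω| ^ 3 ∂μ) :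
    Real.exp (-5.5 * δ₁) ≤ ∫ ω, Real.exp (Y ω) ∂μ ∧
    ∫ ω, Real.exp (Y ω) ∂μ ≤ Real.exp (2.65 * δ₁) := by
  have hYeq : Y = fun ω => X ω - X ω ^ 2 / 2 := funext hY
  set A : Set Ω := {ω | 1 < |X ω|} with hA_def
  have hA : MeasurableSet A := measurableSet_lt measurable_const hX.abs
  have hAc : Aᶜ = {ω | |X ω| ≤ 1} := by
    ext ω; simp [hA_def, not_lt]
  have hYm : Measurable Y := by
    rw [hYeq]; exact hX.sub ((hX.pow_const 2).div_const 2)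
  have hGm : Measurable (fun ω => gfun (X ω)) := by
    unfold gfun
    exact Measurable.ite (measurableSet_le hX.abs measurable_const)
      (hX.abs.pow_const 3) (hX.pow_const 2)
  have hGint : Integrable (fun ω => gfun (X ω)) μ := by
    apply hX2.mono' hGm.aestronglyMeasurable
    filter_upwards with ω
    rw [Real.norm_eq_abs, abs_of_nonneg (gfun_nonneg _)]
    exact gfun_le_sq _
  have hadd2 : Integrable (fun ω => 1 + X ω ^ 2) μ := (integrable_const (1:ℝ)).add hX2
  have hXint : Integrable X μ := by
    apply hadd2.mono' hX.aestronglyMeasurable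
    filter_upwards with ω
    rw [Real.norm_eq_abs]
    nlinarith [sq_nonneg (|X ω| - 1), sq_abs (X ω), abs_nonneg (X ω)]
  have hEexp : Integrable (fun ω => Real.exp (Y ω)) μ := by
    have hm : AEStronglyMeasurable (fun ω => Real.exp (Y ω)) μ :=
      (Real.measurable_exp.comp hYm).aestronglyMeasurable
    apply (integrable_const (2:ℝ)).mono' hm
    filter_upwards with ω
    rw [Real.norm_eq_abs, abs_of_pos (Real.exp_pos _)]
    apply exp_le_two
    rw [hY]; nlinarith [sq_nonneg (X ω - 1)]
  have hGsplit : ∫ ω, gfun (X ω) ∂μ = (∫ ω in A, X ω ^ 2 ∂μ) + ∫ ω in Aᶜ, |X ω| ^ 3 ∂μ := by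
    rw [← integral_add_compl hA hGint]
    congr 1
    · apply setIntegral_congr_fun hA
      intro ω hω
      have h1 : ¬ (|X ω| ≤ 1) := not_le.2 hω
      simp [gfun, h1]
    · apply setIntegral_congr_fun hA.compl
      intro ω hω
      have h1 : |X ω| ≤ 1 := by
        have := hω; rw [hAc] at this; exact this
      simp [gfun, h1]
  have hδeq : δ₁ = ∫ ω, gfun (X ω) ∂μ := by
    rw [hδ₁, hGsplit, hAc]
  have hδnonneg : 0 ≤ δ₁ := by
    rw [hδeq]; exact integral_nonneg fun ω => gfun_nonneg _
  have hconst : ∫ _ω, (1:ℝ) ∂μ = 1 := by simp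
  have hadd1 : Integrable (fun ω => 1 + X ω) μ := (integrable_const (1:ℝ)).add hXint
  have hadd3 : Integrable (fun ω => 1 + X ω + gfun (X ω)) μ := hadd1.add hGint
  have hsub3 : Integrable (fun ω => 1 + X ω - gfun (X ω)) μ := hadd1.sub hGint
  -- upper bound
  have hup : ∫ ω, Real.exp (Y ω) ∂μ ≤ 1 + δ₁ := by
    have hmono : ∫ ω, Real.exp (Y ω) ∂μ ≤ ∫ ω, (1 + X ω + gfun (X ω)) ∂μ := by
      apply integral_mono hEexp hadd3
      intro ω
      simp only
      rw [hY]
      exact pw_upper (X ω)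
    calc ∫ ω, Real.exp (Y ω) ∂μ ≤ ∫ ω, (1 + X ω + gfun (X ω)) ∂μ := hmono
      _ = (∫ _ω, (1:ℝ) ∂μ) + (∫ ω, X ω ∂μ) + ∫ ω, gfun (X ω) ∂μ := by
          rw [integral_add hadd1 hGint, integral_add (integrable_const 1) hXint]
      _ = 1 + δ₁ := by rw [hconst, hmean, hδeq]; ring
  constructor
  · -- lower bound
    have hlow1 : 1 - δ₁ ≤ ∫ ω, Real.exp (Y ω) ∂μ := by
      have hmono : ∫ ω, (1 + X ω - gfun (X ω)) ∂μ ≤ ∫ ω, Real.exp (Y ω) ∂μ := by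
        apply integral_mono hsub3 hEexp
        intro ω
        simp only
        rw [hY]
        exact pw_lower (X ω)
      calc (1:ℝ) - δ₁ = (∫ _ω, (1:ℝ) ∂μ) + (∫ ω, X ω ∂μ) - ∫ ω, gfun (X ω) ∂μ := by
            rw [hconst, hmean, hδeq]; ring
        _ = ∫ ω, (1 + X ω - gfun (X ω)) ∂μ := by
            rw [integral_sub hadd1 hGint, integral_add (integrable_const 1) hXint]
        _ ≤ ∫ ω, Real.exp (Y ω) ∂μ := hmono
    rcases le_or_gt δ₁ (1/10) with hcase | hcase
    · have h1 : Real.exp (-5.5 * δ₁) ≤ 1 - 5.5*δ₁ + (5.5*δ₁)^2/2 := by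
        have := exp_le_quad (t := -5.5 * δ₁) (by linarith)
        nlinarith
      nlinarith
    · -- tangent line at c = -5.5 δ₁
      set c : ℝ := -5.5 * δ₁ with hc
      have hYint : Integrable Y μ := by
        rw [hYeq]; exact hXint.sub (hX2.div_const 2)
      have hEY : ∫ ω, Y ω ∂μ = -(∫ ω, X ω ^ 2 ∂μ)/2 := by
        rw [hYeq, integral_sub hXint (hX2.div_const 2), hmean, integral_div]
        ring
      have hEX2 : ∫ ω, X ω ^ 2 ∂μ ≤ δ₁ + 1 := by
        rw [← integral_add_compl hA hX2]
        have h1 : ∫ ω in A, X ω ^ 2 ∂μ ≤ δ₁ := by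
          rw [hδ₁]
          have h2 : 0 ≤ ∫ ω in {ω | |X ω| ≤ 1}, |X ω| ^ 3 ∂μ := by
            rw [← hAc]
            exact setIntegral_nonneg hA.compl fun ω _ => by positivity
          linarith
        have h2 : ∫ ω in Aᶜ, X ω ^ 2 ∂μ ≤ 1 := by
          calc ∫ ω in Aᶜ, X ω ^ 2 ∂μ ≤ ∫ _ω in Aᶜ, (1:ℝ) ∂μ := by
                apply setIntegral_mono_on hX2.integrableOn (integrableOn_const (measure_ne_top μ _)) hA.compl
                intro ω hω
                have h3 : |X ω| ≤ 1 := by rw [hAc] at hω; exact hω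
                nlinarith [sq_abs (X ω), abs_nonneg (X ω)]
            _ = (μ Aᶜ).toReal := by rw [setIntegral_const, smul_eq_mul, mul_one, measureReal_def]
            _ ≤ 1 := by
                have h4 : μ Aᶜ ≤ 1 := prob_le_one
                calc (μ Aᶜ).toReal ≤ (1 : ENNReal).toReal :=
                      ENNReal.toReal_mono (by norm_num) h4
                  _ = 1 := by simp
        linarith
      have hpt : ∀ ω, Real.exp c * (1 + (Y ω - c)) ≤ Real.exp (Y ω) := by
        intro ω
        calc Real.exp c * (1 + (Y ω - c)) = Real.exp c * ((Y ω - c) + 1) := by ring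
          _ ≤ Real.exp c * Real.exp (Y ω - c) :=
              mul_le_mul_of_nonneg_left (Real.add_one_le_exp _) (Real.exp_pos c).le
          _ = Real.exp (Y ω) := by rw [← Real.exp_add]; ring_nf
      have hsubc : Integrable (fun ω => Y ω - c) μ := hYint.sub (integrable_const c)
      have haddc : Integrable (fun ω => 1 + (Y ω - c)) μ := (integrable_const 1).add hsubc
      have hint2 : Integrable (fun ω => Real.exp c * (1 + (Y ω - c))) μ :=
        haddc.const_mul _
      have hmono2 : ∫ ω, Real.exp c * (1 + (Y ω - c)) ∂μ ≤ ∫ ω, Real.exp (Y ω) ∂μ :=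
        integral_mono hint2 hEexp hpt
      have hval : ∫ ω, Real.exp c * (1 + (Y ω - c)) ∂μ
          = Real.exp c * (1 + ((∫ ω, Y ω ∂μ) - c)) := by
        rw [integral_const_mul]
        congr 1
        rw [integral_add (integrable_const 1) hsubc,
          integral_sub hYint (integrable_const c)]
        simp
      have hfac : 1 ≤ 1 + ((∫ ω, Y ω ∂μ) - c) := by
        rw [hEY, hc]
        nlinarith
      calc Real.exp (-5.5 * δ₁) = Real.exp c * 1 := by rw [hc, mul_one]
        _ ≤ Real.exp c * (1 + ((∫ ω, Y ω ∂μ) - c)) :=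
            mul_le_mul_of_nonneg_left hfac (Real.exp_pos c).le
        _ = ∫ ω, Real.exp c * (1 + (Y ω - c)) ∂μ := hval.symm
        _ ≤ ∫ ω, Real.exp (Y ω) ∂μ := hmono2
  · calc ∫ ω, Real.exp (Y ω) ∂μ ≤ 1 + δ₁ := hup
      _ ≤ Real.exp (2.65 * δ₁) := by
          have h1 := Real.add_one_le_exp (2.65 * δ₁)
          nlinarith
end

section
/- Let ξ₁,…,ξₙ be independent real random variables with E ξᵢ = 0 and Σ E ξᵢ² = 1, and set W = Σξᵢ, V² = Σξᵢ², β₃ = Σ E[|ξᵢ|³ 1{|ξᵢ|≤1}], and ξ̄ᵢ = ξᵢ 1{|ξᵢ| ≤ 1}. Then E[(Σᵢ(ξ̄ᵢ² - E ξ̄ᵢ²))²] ≤ β₃ and E[W² (Σᵢ(E ξ̄ᵢ² - ξ̄ᵢ²))²] ≤ 4 β₃. -/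
open MeasureTheory ProbabilityTheory

lemma ProbabilityTheory.IndepFun.integral_mul_of_integrable {Ω : Type*} [MeasurableSpace Ω]
    {μ : Measure Ω} {X Y : Ω → ℝ} (h : IndepFun X Y μ) (hX : Integrable X μ) (hY : Integrable Y μ) :
    ∫ ω, X ω * Y ω ∂μ = (∫ ω, X ω ∂μ) * ∫ ω, Y ω ∂μ :=
  h.integral_fun_mul_eq_mul_integral hX.aestronglyMeasurable hY.aestronglyMeasurable

lemma blockIndep {Ω : Type*} [MeasurableSpace Ω] {μ : Measure Ω}
    {ι : Type*} {ξ : ι → Ω → ℝ} (hmeas : ∀ i, Measurable (ξ i))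
    (hindep : iIndepFun ξ μ)
    (fU fV : ι → ℝ → ℝ) (hfU : ∀ i, Measurable (fU i)) (hfV : ∀ i, Measurable (fV i))
    (a : ι) (s : Finset ι) (has : a ∉ s) :
    IndepFun (fun ω => (fU a (ξ a ω), fV a (ξ a ω)))
      (fun ω => (∑ i ∈ s, fU i (ξ i ω), ∑ i ∈ s, fV i (ξ i ω))) μ := by
  classical
  have h := hindep.indepFun_finset {a} s (by simpa [Finset.disjoint_singleton_left] using has)
    hmeas
  have ha : a ∈ ({a} : Finset ι) := Finset.mem_singleton_self a
  have hφ : Measurable (fun v : (∀ _ : ({a} : Finset ι), ℝ) => (fU a (v ⟨a, ha⟩), fV a (v ⟨a, ha⟩))) :=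
    ((hfU a).comp (measurable_pi_apply _)).prodMk ((hfV a).comp (measurable_pi_apply _))
  have hψ : Measurable (fun v : (∀ _ : (s : Finset ι), ℝ) =>
      ((∑ i : (s : Finset ι), fU i (v i)), (∑ i : (s : Finset ι), fV i (v i)))) := by
    refine Measurable.prodMk ?_ ?_
    · exact Finset.measurable_sum _ fun i _ => (hfU i).comp (measurable_pi_apply i)
    · exact Finset.measurable_sum _ fun i _ => (hfV i).comp (measurable_pi_apply i)
  have key := h.comp hφ hψ
  convert key using 1
  all_goals funext ω
  all_goals simp only [Function.comp_apply]
  rw [← Finset.sum_coe_sort s (fun i => fU i (ξ i ω)), ← Finset.sum_coe_sort s (fun i => fV i (ξ i ω))]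

lemma sum_mul_sum_int {Ω : Type*} [MeasurableSpace Ω] {μ : Measure Ω}
    {ι : Type*} [DecidableEq ι] {U V : ι → Ω → ℝ}
    (hU0 : ∀ i, ∫ ω, U i ω ∂μ = 0) (hV0 : ∀ i, ∫ ω, V i ω ∂μ = 0)
    (hint : ∀ i j, Integrable (fun ω => U i ω * V j ω) μ)
    (hfac : ∀ i j, i ≠ j → ∫ ω, U i ω * V j ω ∂μ = (∫ ω, U i ω ∂μ) * ∫ ω, V j ω ∂μ)
    (s : Finset ι) :
    ∫ ω, (∑ i ∈ s, U i ω) * (∑ i ∈ s, V i ω) ∂μ = ∑ i ∈ s, ∫ ω, U i ω * V i ω ∂μ := by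
  classical
  induction s using Finset.induction_on with
  | empty => simp
  | @insert a s has IH =>
    have hintsum : ∀ (f : Ω → ℝ) (t : Finset ι), (∀ j ∈ t, Integrable (fun ω => f ω * V j ω) μ) →
        Integrable (fun ω => f ω * ∑ j ∈ t, V j ω) μ := by
      intro f t ht
      have : (fun ω => f ω * ∑ j ∈ t, V j ω) = fun ω => ∑ j ∈ t, f ω * V j ω := by
        funext ω; rw [Finset.mul_sum]
      rw [this]
      exact integrable_finset_sum _ ht
    have hI1 : Integrable (fun ω => U a ω * ∑ j ∈ s, V j ω) μ :=
      hintsum _ _ (fun j _ => hint a j)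
    have hI2 : Integrable (fun ω => (∑ i ∈ s, U i ω) * V a ω) μ := by
      have : (fun ω => (∑ i ∈ s, U i ω) * V a ω) = fun ω => ∑ i ∈ s, U i ω * V a ω := by
        funext ω; rw [Finset.sum_mul]
      rw [this]; exact integrable_finset_sum _ (fun i _ => hint i a)
    have hI3 : Integrable (fun ω => (∑ i ∈ s, U i ω) * ∑ j ∈ s, V j ω) μ := by
      have : (fun ω => (∑ i ∈ s, U i ω) * ∑ j ∈ s, V j ω)
          = fun ω => ∑ i ∈ s, ∑ j ∈ s, U i ω * V j ω := by
        funext ω; rw [Finset.sum_mul]; exact Finset.sum_congr rfl fun i _ => Finset.mul_sum _ _ _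
      rw [this]
      exact integrable_finset_sum _ fun i _ => integrable_finset_sum _ fun j _ => hint i j
    simp only [Finset.sum_insert has]
    have hexp : (fun ω => (U a ω + ∑ i ∈ s, U i ω) * (V a ω + ∑ i ∈ s, V i ω))
        = fun ω => U a ω * V a ω + (U a ω * ∑ j ∈ s, V j ω
            + ((∑ i ∈ s, U i ω) * V a ω + (∑ i ∈ s, U i ω) * ∑ j ∈ s, V j ω)) := by
      funext ω; ring
    calc ∫ ω, (U a ω + ∑ i ∈ s, U i ω) * (V a ω + ∑ i ∈ s, V i ω) ∂μ
        = ∫ ω, U a ω * V a ω ∂μ + (∫ ω, U a ω * ∑ j ∈ s, V j ω ∂μ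
            + (∫ ω, (∑ i ∈ s, U i ω) * V a ω ∂μ
              + ∫ ω, (∑ i ∈ s, U i ω) * ∑ j ∈ s, V j ω ∂μ)) := by
          have hI23 : Integrable (fun ω => (∑ i ∈ s, U i ω) * V a ω
              + (∑ i ∈ s, U i ω) * ∑ j ∈ s, V j ω) μ := hI2.add hI3
          have hI123 : Integrable (fun ω => U a ω * ∑ j ∈ s, V j ω
              + ((∑ i ∈ s, U i ω) * V a ω + (∑ i ∈ s, U i ω) * ∑ j ∈ s, V j ω)) μ :=
            hI1.add hI23
          rw [hexp, integral_add (hint a a) hI123, integral_add hI1 hI23, integral_add hI2 hI3]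
      _ = ∫ ω, U a ω * V a ω ∂μ + ∑ i ∈ s, ∫ ω, U i ω * V i ω ∂μ := by
          have e1 : ∫ ω, U a ω * ∑ j ∈ s, V j ω ∂μ = 0 := by
            have : (fun ω => U a ω * ∑ j ∈ s, V j ω) = fun ω => ∑ j ∈ s, U a ω * V j ω := by
              funext ω; rw [Finset.mul_sum]
            rw [this, integral_finset_sum _ (fun j _ => hint a j)]
            refine Finset.sum_eq_zero fun j hj => ?_
            rw [hfac a j (by rintro rfl; exact has hj), hU0 a, zero_mul]
          have e2 : ∫ ω, (∑ i ∈ s, U i ω) * V a ω ∂μ = 0 := by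
            have : (fun ω => (∑ i ∈ s, U i ω) * V a ω) = fun ω => ∑ i ∈ s, U i ω * V a ω := by
              funext ω; rw [Finset.sum_mul]
            rw [this, integral_finset_sum _ (fun i _ => hint i a)]
            refine Finset.sum_eq_zero fun i hi => ?_
            rw [hfac i a (by rintro rfl; exact has hi), hV0 a, mul_zero]
          rw [e1, e2, IH]; ring

lemma big_expand {Ω : Type*} [MeasurableSpace Ω] {μ : Measure Ω} [IsProbabilityMeasure μ]
    {ι : Type*} [DecidableEq ι] {ξ : ι → Ω → ℝ} (hmeas : ∀ i, Measurable (ξ i))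
    (hindep : iIndepFun ξ μ)
    (fV : ι → ℝ → ℝ) (hfV : ∀ i, Measurable (fV i))
    (hbd : ∀ i x, |fV i x| ≤ 1)
    (hξ0 : ∀ i, ∫ ω, ξ i ω ∂μ = 0)
    (hvar : ∀ i, Integrable (fun ω => ξ i ω ^ 2) μ)
    (hV0 : ∀ i, ∫ ω, fV i (ξ i ω) ∂μ = 0)
    (s : Finset ι) :
    ∫ ω, (∑ i ∈ s, ξ i ω)^2 * (∑ i ∈ s, fV i (ξ i ω))^2 ∂μ
      = ∑ i ∈ s, ∫ ω, ξ i ω^2 * fV i (ξ i ω)^2 ∂μ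
        + (∑ i ∈ s, ∫ ω, ξ i ω^2 ∂μ) * (∑ i ∈ s, ∫ ω, fV i (ξ i ω)^2 ∂μ)
        - ∑ i ∈ s, (∫ ω, ξ i ω^2 ∂μ) * (∫ ω, fV i (ξ i ω)^2 ∂μ)
        + 2 * (∑ i ∈ s, ∫ ω, ξ i ω * fV i (ξ i ω) ∂μ)^2
        - 2 * ∑ i ∈ s, (∫ ω, ξ i ω * fV i (ξ i ω) ∂μ)^2 := by
  classical
  have hVmeas : ∀ i, Measurable (fun ω => fV i (ξ i ω)) := fun i => (hfV i).comp (hmeas i)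
  have hml2 : ∀ i, MemLp (ξ i) 2 μ := fun i =>
    (memLp_two_iff_integrable_sq (hmeas i).aestronglyMeasurable).2 (hvar i)
  have hξint : ∀ i, Integrable (ξ i) μ := fun i => (hml2 i).integrable one_le_two
  -- bounded measurable functions are integrable
  have hBint : ∀ (f : Ω → ℝ) (C : ℝ), Measurable f → (∀ ω, |f ω| ≤ C) → Integrable f μ := by
    intro f C hf hC
    exact Integrable.mono' (integrable_const C) hf.aestronglyMeasurable
      (Filter.Eventually.of_forall fun ω => by simpa [Real.norm_eq_abs] using hC ω)
  have hMul : ∀ (g f : Ω → ℝ) (C : ℝ), Integrable g μ → Measurable f → (∀ ω, |f ω| ≤ C) →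
      Integrable (fun ω => g ω * f ω) μ := by
    intro g f C hg hf hC
    have := Integrable.bdd_mul (f := f) (g := g) hg hf.aestronglyMeasurable
      (Filter.Eventually.of_forall fun x => by simpa [Real.norm_eq_abs] using hC x)
    simpa [mul_comm] using this
  have hVint : ∀ i, Integrable (fun ω => fV i (ξ i ω)) μ :=
    fun i => hBint _ 1 (hVmeas i) (fun ω => hbd i _)
  -- pairwise product integrability
  have hmulξξ : ∀ i j, Integrable (fun ω => ξ i ω * ξ j ω) μ := by
    intro i j
    by_cases h : i = j
    · subst h; simpa [pow_two] using hvar i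
    · exact (hindep.indepFun h).integrable_mul (hξint i) (hξint j)
  have hmulξV : ∀ i j, Integrable (fun ω => ξ i ω * fV j (ξ j ω)) μ :=
    fun i j => hMul _ _ 1 (hξint i) (hVmeas j) (fun ω => hbd j _)
  have hmulVV : ∀ i j, Integrable (fun ω => fV i (ξ i ω) * fV j (ξ j ω)) μ := by
    intro i j
    refine hBint _ 1 ((hVmeas i).mul (hVmeas j)) (fun ω => ?_)
    rw [abs_mul]
    exact mul_le_one₀ (hbd i _) (abs_nonneg _) (hbd j _)
  -- pairwise factorization
  have hfacξξ : ∀ i j, i ≠ j → ∫ ω, ξ i ω * ξ j ω ∂μ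
      = (∫ ω, ξ i ω ∂μ) * ∫ ω, ξ j ω ∂μ := fun i j h =>
    (hindep.indepFun h).integral_mul_of_integrable (hξint i) (hξint j)
  have hfacξV : ∀ i j, i ≠ j → ∫ ω, ξ i ω * fV j (ξ j ω) ∂μ
      = (∫ ω, ξ i ω ∂μ) * ∫ ω, fV j (ξ j ω) ∂μ := fun i j h =>
    ((hindep.indepFun h).comp measurable_id (hfV j)).integral_mul_of_integrable
      (hξint i) (hVint j)
  have hfacVV : ∀ i j, i ≠ j → ∫ ω, fV i (ξ i ω) * fV j (ξ j ω) ∂μ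
      = (∫ ω, fV i (ξ i ω) ∂μ) * ∫ ω, fV j (ξ j ω) ∂μ := fun i j h =>
    ((hindep.indepFun h).comp (hfV i) (hfV j)).integral_mul_of_integrable
      (hVint i) (hVint j)
  -- the three second-moment identities for partial sums
  have hWW : ∀ t : Finset ι, ∫ ω, (∑ i ∈ t, ξ i ω) * (∑ i ∈ t, ξ i ω) ∂μ
      = ∑ i ∈ t, ∫ ω, ξ i ω * ξ i ω ∂μ :=
    sum_mul_sum_int hξ0 hξ0 hmulξξ hfacξξ
  have hTT : ∀ t : Finset ι, ∫ ω, (∑ i ∈ t, fV i (ξ i ω)) * (∑ i ∈ t, fV i (ξ i ω)) ∂μ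
      = ∑ i ∈ t, ∫ ω, fV i (ξ i ω) * fV i (ξ i ω) ∂μ :=
    sum_mul_sum_int hV0 hV0 hmulVV hfacVV
  have hWT : ∀ t : Finset ι, ∫ ω, (∑ i ∈ t, ξ i ω) * (∑ i ∈ t, fV i (ξ i ω)) ∂μ
      = ∑ i ∈ t, ∫ ω, ξ i ω * fV i (ξ i ω) ∂μ :=
    sum_mul_sum_int hξ0 hV0 hmulξV hfacξV
  have hW0 : ∀ t : Finset ι, ∫ ω, (∑ i ∈ t, ξ i ω) ∂μ = 0 := by
    intro t
    rw [integral_finset_sum _ (fun i _ => hξint i)]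
    exact Finset.sum_eq_zero fun i _ => hξ0 i
  have hT0 : ∀ t : Finset ι, ∫ ω, (∑ i ∈ t, fV i (ξ i ω)) ∂μ = 0 := by
    intro t
    rw [integral_finset_sum _ (fun i _ => hVint i)]
    exact Finset.sum_eq_zero fun i _ => hV0 i
  -- squared versions
  have hWW2 : ∀ t : Finset ι, ∫ ω, (∑ i ∈ t, ξ i ω)^2 ∂μ = ∑ i ∈ t, ∫ ω, ξ i ω^2 ∂μ := by
    intro t; simp_rw [pow_two]; exact hWW t
  have hTT2 : ∀ t : Finset ι, ∫ ω, (∑ i ∈ t, fV i (ξ i ω))^2 ∂μ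
      = ∑ i ∈ t, ∫ ω, fV i (ξ i ω)^2 ∂μ := by
    intro t; simp_rw [pow_two]; exact hTT t
  have habs : ∀ x y X Y : ℝ, |x| ≤ X → |y| ≤ Y → |x * y| ≤ X * Y := by
    intro x y X Y h1 h2
    rw [abs_mul]
    exact mul_le_mul h1 h2 (abs_nonneg _) (le_trans (abs_nonneg _) h1)
  have habs2 : ∀ x X : ℝ, |x| ≤ X → |x ^ 2| ≤ X ^ 2 := by
    intro x X h
    rw [abs_pow]
    exact pow_le_pow_left₀ (abs_nonneg _) h 2
  induction s using Finset.induction_on with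
  | empty => simp
  | @insert a s has IH =>
    have hTmeas : Measurable (fun ω => ∑ i ∈ s, fV i (ξ i ω)) :=
      Finset.measurable_sum _ fun i _ => hVmeas i
    have hWmeas : Measurable (fun ω => ∑ i ∈ s, ξ i ω) :=
      Finset.measurable_sum _ fun i _ => hmeas i
    have hTb : ∀ ω, |∑ i ∈ s, fV i (ξ i ω)| ≤ (s.card : ℝ) := by
      intro ω
      calc |∑ i ∈ s, fV i (ξ i ω)| ≤ ∑ i ∈ s, |fV i (ξ i ω)| := Finset.abs_sum_le_sum_abs _ _
        _ ≤ ∑ _i ∈ s, (1:ℝ) := Finset.sum_le_sum fun i _ => hbd i _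
        _ = s.card := by simp
    have hWint : Integrable (fun ω => ∑ i ∈ s, ξ i ω) μ :=
      integrable_finset_sum _ fun i _ => hξint i
    have hTint : Integrable (fun ω => ∑ i ∈ s, fV i (ξ i ω)) μ :=
      integrable_finset_sum _ fun i _ => hVint i
    have hT2int : Integrable (fun ω => (∑ i ∈ s, fV i (ξ i ω))^2) μ :=
      hBint _ ((s.card : ℝ)^2) (hTmeas.pow_const 2) (fun ω => habs2 _ _ (hTb ω))
    have hW2 : Integrable (fun ω => (∑ i ∈ s, ξ i ω)^2) μ := by
      have := (memLp_finsetSum' s (fun i (_ : i ∈ s) => hml2 i)).integrable_sq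
      simpa [Finset.sum_apply] using this
    have hξaW : Integrable (fun ω => ξ a ω * ∑ i ∈ s, ξ i ω) μ := by
      have e : (fun ω => ξ a ω * ∑ i ∈ s, ξ i ω)
          = fun ω => ∑ i ∈ s, ξ a ω * ξ i ω := by
        funext ω; rw [Finset.mul_sum]
      rw [e]
      exact integrable_finset_sum _ fun i _ => hmulξξ a i
    have hWTint : Integrable (fun ω => (∑ i ∈ s, ξ i ω) * ∑ i ∈ s, fV i (ξ i ω)) μ :=
      hMul _ _ (s.card : ℝ) hWint hTmeas hTb
    -- integrability of the nine monomials
    have I1 : Integrable (fun ω => ξ a ω^2 * fV a (ξ a ω)^2) μ :=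
      hMul _ _ 1 (hvar a) ((hfV a).comp (hmeas a) |>.pow_const 2)
        (fun ω => by simpa using habs2 _ _ (hbd a (ξ a ω)))
    have I2 : Integrable (fun ω => (ξ a ω^2 * fV a (ξ a ω)) * (∑ i ∈ s, fV i (ξ i ω))) μ := by
      have e : (fun ω => (ξ a ω^2 * fV a (ξ a ω)) * (∑ i ∈ s, fV i (ξ i ω)))
          = fun ω => ξ a ω^2 * (fV a (ξ a ω) * ∑ i ∈ s, fV i (ξ i ω)) := by
        funext ω; ring
      rw [e]
      exact hMul _ _ (1 * s.card) (hvar a) ((hVmeas a).mul hTmeas)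
        (fun ω => habs _ _ _ _ (hbd a _) (hTb ω))
    have I3 : Integrable (fun ω => ξ a ω^2 * (∑ i ∈ s, fV i (ξ i ω))^2) μ :=
      hMul _ _ ((s.card:ℝ)^2) (hvar a) (hTmeas.pow_const 2) (fun ω => habs2 _ _ (hTb ω))
    have I4 : Integrable (fun ω => (ξ a ω * fV a (ξ a ω)^2) * (∑ i ∈ s, ξ i ω)) μ := by
      have e : (fun ω => (ξ a ω * fV a (ξ a ω)^2) * (∑ i ∈ s, ξ i ω))
          = fun ω => (ξ a ω * ∑ i ∈ s, ξ i ω) * fV a (ξ a ω)^2 := by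
        funext ω; ring
      rw [e]
      exact hMul _ _ 1 hξaW ((hVmeas a).pow_const 2)
        (fun ω => by simpa using habs2 _ _ (hbd a (ξ a ω)))
    have I5 : Integrable (fun ω => (ξ a ω * fV a (ξ a ω))
        * ((∑ i ∈ s, ξ i ω) * (∑ i ∈ s, fV i (ξ i ω)))) μ := by
      have e : (fun ω => (ξ a ω * fV a (ξ a ω))
            * ((∑ i ∈ s, ξ i ω) * (∑ i ∈ s, fV i (ξ i ω))))
          = fun ω => (ξ a ω * ∑ i ∈ s, ξ i ω)
            * (fV a (ξ a ω) * ∑ i ∈ s, fV i (ξ i ω)) := by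
        funext ω; ring
      rw [e]
      exact hMul _ _ (1 * s.card) hξaW ((hVmeas a).mul hTmeas)
        (fun ω => habs _ _ _ _ (hbd a _) (hTb ω))
    have I6 : Integrable (fun ω => ξ a ω * ((∑ i ∈ s, ξ i ω) * (∑ i ∈ s, fV i (ξ i ω))^2)) μ := by
      have e : (fun ω => ξ a ω * ((∑ i ∈ s, ξ i ω) * (∑ i ∈ s, fV i (ξ i ω))^2))
          = fun ω => (ξ a ω * ∑ i ∈ s, ξ i ω) * (∑ i ∈ s, fV i (ξ i ω))^2 := by
        funext ω; ring
      rw [e]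
      exact hMul _ _ ((s.card:ℝ)^2) hξaW (hTmeas.pow_const 2) (fun ω => habs2 _ _ (hTb ω))
    have I7 : Integrable (fun ω => fV a (ξ a ω)^2 * (∑ i ∈ s, ξ i ω)^2) μ := by
      have e : (fun ω => fV a (ξ a ω)^2 * (∑ i ∈ s, ξ i ω)^2)
          = fun ω => (∑ i ∈ s, ξ i ω)^2 * fV a (ξ a ω)^2 := by
        funext ω; ring
      rw [e]
      exact hMul _ _ 1 hW2 ((hVmeas a).pow_const 2)
        (fun ω => by simpa using habs2 _ _ (hbd a (ξ a ω)))
    have I8 : Integrable (fun ω => fV a (ξ a ω)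
        * ((∑ i ∈ s, ξ i ω)^2 * (∑ i ∈ s, fV i (ξ i ω)))) μ := by
      have e : (fun ω => fV a (ξ a ω) * ((∑ i ∈ s, ξ i ω)^2 * (∑ i ∈ s, fV i (ξ i ω))))
          = fun ω => (∑ i ∈ s, ξ i ω)^2 * (fV a (ξ a ω) * ∑ i ∈ s, fV i (ξ i ω)) := by
        funext ω; ring
      rw [e]
      exact hMul _ _ (1 * s.card) hW2 ((hVmeas a).mul hTmeas)
        (fun ω => habs _ _ _ _ (hbd a _) (hTb ω))
    have I9 : Integrable (fun ω => (∑ i ∈ s, ξ i ω)^2 * (∑ i ∈ s, fV i (ξ i ω))^2) μ :=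
      hMul _ _ ((s.card:ℝ)^2) hW2 (hTmeas.pow_const 2) (fun ω => habs2 _ _ (hTb ω))
    -- block independence
    have hblock := blockIndep hmeas hindep (fun _ => id) fV (fun _ => measurable_id) hfV a s has
    -- values of the cross terms
    have v2 : ∫ ω, (ξ a ω^2 * fV a (ξ a ω)) * (∑ i ∈ s, fV i (ξ i ω)) ∂μ = 0 := by
      have h : ∫ ω, (ξ a ω^2 * fV a (ξ a ω)) * (∑ i ∈ s, fV i (ξ i ω)) ∂μ
          = (∫ ω, ξ a ω^2 * fV a (ξ a ω) ∂μ) * ∫ ω, (∑ i ∈ s, fV i (ξ i ω)) ∂μ :=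
        (hblock.comp (φ := fun p : ℝ × ℝ => p.1^2 * p.2) (ψ := fun p : ℝ × ℝ => p.2)
          (by fun_prop) (by fun_prop)).integral_mul_of_integrable
          (hMul _ _ 1 (hvar a) (hVmeas a) (fun ω => hbd a _)) hTint
      rw [h, hT0 s, mul_zero]
    have v3 : ∫ ω, ξ a ω^2 * (∑ i ∈ s, fV i (ξ i ω))^2 ∂μ
        = (∫ ω, ξ a ω^2 ∂μ) * ∑ i ∈ s, ∫ ω, fV i (ξ i ω)^2 ∂μ := by
      have h : ∫ ω, ξ a ω^2 * (∑ i ∈ s, fV i (ξ i ω))^2 ∂μ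
          = (∫ ω, ξ a ω^2 ∂μ) * ∫ ω, (∑ i ∈ s, fV i (ξ i ω))^2 ∂μ :=
        (hblock.comp (φ := fun p : ℝ × ℝ => p.1^2) (ψ := fun p : ℝ × ℝ => p.2^2)
          (by fun_prop) (by fun_prop)).integral_mul_of_integrable (hvar a) hT2int
      rw [h, hTT2 s]
    have v4 : ∫ ω, (ξ a ω * fV a (ξ a ω)^2) * (∑ i ∈ s, ξ i ω) ∂μ = 0 := by
      have h : ∫ ω, (ξ a ω * fV a (ξ a ω)^2) * (∑ i ∈ s, ξ i ω) ∂μ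
          = (∫ ω, ξ a ω * fV a (ξ a ω)^2 ∂μ) * ∫ ω, (∑ i ∈ s, ξ i ω) ∂μ :=
        (hblock.comp (φ := fun p : ℝ × ℝ => p.1 * p.2^2) (ψ := fun p : ℝ × ℝ => p.1)
          (by fun_prop) (by fun_prop)).integral_mul_of_integrable
          (hMul _ _ 1 (hξint a) ((hVmeas a).pow_const 2)
            (fun ω => by simpa using habs2 _ _ (hbd a (ξ a ω)))) hWint
      rw [h, hW0 s, mul_zero]
    have v5 : ∫ ω, (ξ a ω * fV a (ξ a ω))
        * ((∑ i ∈ s, ξ i ω) * (∑ i ∈ s, fV i (ξ i ω))) ∂μ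
        = (∫ ω, ξ a ω * fV a (ξ a ω) ∂μ) * ∑ i ∈ s, ∫ ω, ξ i ω * fV i (ξ i ω) ∂μ := by
      have h : ∫ ω, (ξ a ω * fV a (ξ a ω))
            * ((∑ i ∈ s, ξ i ω) * (∑ i ∈ s, fV i (ξ i ω))) ∂μ
          = (∫ ω, ξ a ω * fV a (ξ a ω) ∂μ)
            * ∫ ω, (∑ i ∈ s, ξ i ω) * (∑ i ∈ s, fV i (ξ i ω)) ∂μ :=
        (hblock.comp (φ := fun p : ℝ × ℝ => p.1 * p.2) (ψ := fun p : ℝ × ℝ => p.1 * p.2)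
          (by fun_prop) (by fun_prop)).integral_mul_of_integrable
          (hMul _ _ 1 (hξint a) (hVmeas a) (fun ω => hbd a _)) hWTint
      rw [h, hWT s]
    have v6 : ∫ ω, ξ a ω * ((∑ i ∈ s, ξ i ω) * (∑ i ∈ s, fV i (ξ i ω))^2) ∂μ = 0 := by
      have h : ∫ ω, ξ a ω * ((∑ i ∈ s, ξ i ω) * (∑ i ∈ s, fV i (ξ i ω))^2) ∂μ
          = (∫ ω, ξ a ω ∂μ)
            * ∫ ω, (∑ i ∈ s, ξ i ω) * (∑ i ∈ s, fV i (ξ i ω))^2 ∂μ :=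
        (hblock.comp (φ := fun p : ℝ × ℝ => p.1) (ψ := fun p : ℝ × ℝ => p.1 * p.2^2)
          (by fun_prop) (by fun_prop)).integral_mul_of_integrable (hξint a)
          (hMul _ _ ((s.card:ℝ)^2) hWint (hTmeas.pow_const 2) (fun ω => habs2 _ _ (hTb ω)))
      rw [h, hξ0 a, zero_mul]
    have v7 : ∫ ω, fV a (ξ a ω)^2 * (∑ i ∈ s, ξ i ω)^2 ∂μ
        = (∫ ω, fV a (ξ a ω)^2 ∂μ) * ∑ i ∈ s, ∫ ω, ξ i ω^2 ∂μ := by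
      have h : ∫ ω, fV a (ξ a ω)^2 * (∑ i ∈ s, ξ i ω)^2 ∂μ
          = (∫ ω, fV a (ξ a ω)^2 ∂μ) * ∫ ω, (∑ i ∈ s, ξ i ω)^2 ∂μ :=
        (hblock.comp (φ := fun p : ℝ × ℝ => p.2^2) (ψ := fun p : ℝ × ℝ => p.1^2)
          (by fun_prop) (by fun_prop)).integral_mul_of_integrable
          (hBint _ 1 ((hVmeas a).pow_const 2)
            (fun ω => by simpa using habs2 _ _ (hbd a (ξ a ω)))) hW2
      rw [h, hWW2 s]
    have v8 : ∫ ω, fV a (ξ a ω) * ((∑ i ∈ s, ξ i ω)^2 * (∑ i ∈ s, fV i (ξ i ω))) ∂μ = 0 := by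
      have h : ∫ ω, fV a (ξ a ω) * ((∑ i ∈ s, ξ i ω)^2 * (∑ i ∈ s, fV i (ξ i ω))) ∂μ
          = (∫ ω, fV a (ξ a ω) ∂μ)
            * ∫ ω, (∑ i ∈ s, ξ i ω)^2 * (∑ i ∈ s, fV i (ξ i ω)) ∂μ :=
        (hblock.comp (φ := fun p : ℝ × ℝ => p.2) (ψ := fun p : ℝ × ℝ => p.1^2 * p.2)
          (by fun_prop) (by fun_prop)).integral_mul_of_integrable (hVint a)
          (hMul _ _ (s.card:ℝ) hW2 hTmeas hTb)
      rw [h, hV0 a, zero_mul]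
    -- expand the square
    simp only [Finset.sum_insert has]
    have hexp : (fun ω => (ξ a ω + ∑ i ∈ s, ξ i ω)^2
          * (fV a (ξ a ω) + ∑ i ∈ s, fV i (ξ i ω))^2)
        = fun ω => ξ a ω^2 * fV a (ξ a ω)^2
          + (2 * ((ξ a ω^2 * fV a (ξ a ω)) * (∑ i ∈ s, fV i (ξ i ω)))
          + (ξ a ω^2 * (∑ i ∈ s, fV i (ξ i ω))^2
          + (2 * ((ξ a ω * fV a (ξ a ω)^2) * (∑ i ∈ s, ξ i ω))
          + (4 * ((ξ a ω * fV a (ξ a ω)) * ((∑ i ∈ s, ξ i ω) * (∑ i ∈ s, fV i (ξ i ω))))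
          + (2 * (ξ a ω * ((∑ i ∈ s, ξ i ω) * (∑ i ∈ s, fV i (ξ i ω))^2))
          + (fV a (ξ a ω)^2 * (∑ i ∈ s, ξ i ω)^2
          + (2 * (fV a (ξ a ω) * ((∑ i ∈ s, ξ i ω)^2 * (∑ i ∈ s, fV i (ξ i ω))))
          + (∑ i ∈ s, ξ i ω)^2 * (∑ i ∈ s, fV i (ξ i ω))^2))))))) := by
      funext ω; ring
    have J8 : Integrable (fun ω => 2 * (fV a (ξ a ω)
        * ((∑ i ∈ s, ξ i ω)^2 * (∑ i ∈ s, fV i (ξ i ω))))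
        + (∑ i ∈ s, ξ i ω)^2 * (∑ i ∈ s, fV i (ξ i ω))^2) μ := (I8.const_mul 2).add I9
    have J7 : Integrable (fun ω => fV a (ξ a ω)^2 * (∑ i ∈ s, ξ i ω)^2
        + (2 * (fV a (ξ a ω) * ((∑ i ∈ s, ξ i ω)^2 * (∑ i ∈ s, fV i (ξ i ω))))
        + (∑ i ∈ s, ξ i ω)^2 * (∑ i ∈ s, fV i (ξ i ω))^2)) μ := I7.add J8
    have J6 : Integrable (fun ω => 2 * (ξ a ω * ((∑ i ∈ s, ξ i ω) * (∑ i ∈ s, fV i (ξ i ω))^2))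
        + (fV a (ξ a ω)^2 * (∑ i ∈ s, ξ i ω)^2
        + (2 * (fV a (ξ a ω) * ((∑ i ∈ s, ξ i ω)^2 * (∑ i ∈ s, fV i (ξ i ω))))
        + (∑ i ∈ s, ξ i ω)^2 * (∑ i ∈ s, fV i (ξ i ω))^2))) μ := (I6.const_mul 2).add J7
    have J5 : Integrable (fun ω => 4 * ((ξ a ω * fV a (ξ a ω))
        * ((∑ i ∈ s, ξ i ω) * (∑ i ∈ s, fV i (ξ i ω))))
        + (2 * (ξ a ω * ((∑ i ∈ s, ξ i ω) * (∑ i ∈ s, fV i (ξ i ω))^2))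
        + (fV a (ξ a ω)^2 * (∑ i ∈ s, ξ i ω)^2
        + (2 * (fV a (ξ a ω) * ((∑ i ∈ s, ξ i ω)^2 * (∑ i ∈ s, fV i (ξ i ω))))
        + (∑ i ∈ s, ξ i ω)^2 * (∑ i ∈ s, fV i (ξ i ω))^2)))) μ := (I5.const_mul 4).add J6
    have J4 : Integrable (fun ω => 2 * ((ξ a ω * fV a (ξ a ω)^2) * (∑ i ∈ s, ξ i ω))
        + (4 * ((ξ a ω * fV a (ξ a ω)) * ((∑ i ∈ s, ξ i ω) * (∑ i ∈ s, fV i (ξ i ω))))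
        + (2 * (ξ a ω * ((∑ i ∈ s, ξ i ω) * (∑ i ∈ s, fV i (ξ i ω))^2))
        + (fV a (ξ a ω)^2 * (∑ i ∈ s, ξ i ω)^2
        + (2 * (fV a (ξ a ω) * ((∑ i ∈ s, ξ i ω)^2 * (∑ i ∈ s, fV i (ξ i ω))))
        + (∑ i ∈ s, ξ i ω)^2 * (∑ i ∈ s, fV i (ξ i ω))^2))))) μ := (I4.const_mul 2).add J5
    have J3 : Integrable (fun ω => ξ a ω^2 * (∑ i ∈ s, fV i (ξ i ω))^2
        + (2 * ((ξ a ω * fV a (ξ a ω)^2) * (∑ i ∈ s, ξ i ω))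
        + (4 * ((ξ a ω * fV a (ξ a ω)) * ((∑ i ∈ s, ξ i ω) * (∑ i ∈ s, fV i (ξ i ω))))
        + (2 * (ξ a ω * ((∑ i ∈ s, ξ i ω) * (∑ i ∈ s, fV i (ξ i ω))^2))
        + (fV a (ξ a ω)^2 * (∑ i ∈ s, ξ i ω)^2
        + (2 * (fV a (ξ a ω) * ((∑ i ∈ s, ξ i ω)^2 * (∑ i ∈ s, fV i (ξ i ω))))
        + (∑ i ∈ s, ξ i ω)^2 * (∑ i ∈ s, fV i (ξ i ω))^2)))))) μ := I3.add J4
    have J2 : Integrable (fun ω => 2 * ((ξ a ω^2 * fV a (ξ a ω)) * (∑ i ∈ s, fV i (ξ i ω)))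
        + (ξ a ω^2 * (∑ i ∈ s, fV i (ξ i ω))^2
        + (2 * ((ξ a ω * fV a (ξ a ω)^2) * (∑ i ∈ s, ξ i ω))
        + (4 * ((ξ a ω * fV a (ξ a ω)) * ((∑ i ∈ s, ξ i ω) * (∑ i ∈ s, fV i (ξ i ω))))
        + (2 * (ξ a ω * ((∑ i ∈ s, ξ i ω) * (∑ i ∈ s, fV i (ξ i ω))^2))
        + (fV a (ξ a ω)^2 * (∑ i ∈ s, ξ i ω)^2
        + (2 * (fV a (ξ a ω) * ((∑ i ∈ s, ξ i ω)^2 * (∑ i ∈ s, fV i (ξ i ω))))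
        + (∑ i ∈ s, ξ i ω)^2 * (∑ i ∈ s, fV i (ξ i ω))^2))))))) μ := (I2.const_mul 2).add J3
    rw [hexp, integral_add I1 J2, integral_add (I2.const_mul 2) J3,
      integral_add I3 J4, integral_add (I4.const_mul 2) J5,
      integral_add (I5.const_mul 4) J6, integral_add (I6.const_mul 2) J7,
      integral_add I7 J8, integral_add (I8.const_mul 2) I9,
      integral_const_mul, integral_const_mul, integral_const_mul, integral_const_mul,
      integral_const_mul, v2, v3, v4, v5, v6, v7, v8, IH]
    ring


lemma p4le (x : ℝ) (h : |x| ≤ 1) : x^4 ≤ |x|^3 := by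
  nlinarith [sq_abs x, abs_nonneg x,
    mul_nonneg (mul_nonneg (abs_nonneg x) (abs_nonneg x)) (abs_nonneg x)]

lemma p3le (x : ℝ) (h : |x| ≤ 1) : |x|^3 ≤ x^2 := by
  nlinarith [sq_abs x, abs_nonneg x]

lemma p6le (x : ℝ) (h : |x| ≤ 1) : x^6 ≤ x^4 := by
  have h2 : x^2 ≤ 1 := by nlinarith [sq_abs x, abs_nonneg x]
  nlinarith [mul_nonneg (pow_nonneg (sq_nonneg x) 2) (sub_nonneg.2 h2)]

lemma Dbound (m q h6 b S : ℝ) (hm0 : 0 ≤ m) (hS0 : 0 ≤ S) (hS1 : S ≤ 1)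
    (hh0 : 0 ≤ h6) (hhq : h6 ≤ q) (hqb : q ≤ b) (hm2q : m^2 ≤ q) :
    h6 - 2*m*q + m^2*S + (q - m^2) - S*(q - m^2) ≤ 2*b := by
  rcases le_or_gt (2 - 2*m - S) 0 with hc | hc
  · nlinarith [mul_nonneg hm0 hm0]
  · nlinarith [mul_nonneg hm0 hm0]

noncomputable def truncR : ℝ → ℝ := fun x => if |x| ≤ 1 then x else 0

lemma truncR_meas : Measurable truncR :=
  Measurable.ite (measurableSet_le measurable_abs measurable_const)
    measurable_id measurable_const

lemma truncR_abs (x : ℝ) : |truncR x| ≤ 1 := by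
  unfold truncR; split_ifs with h
  · exact h
  · simp

theorem truncated_variance_bounds {Ω : Type*} [MeasurableSpace Ω]
    (μ : Measure Ω) [IsProbabilityMeasure μ] (n : ℕ)
    (ξ : Fin n → Ω → ℝ) (hmeas : ∀ i, Measurable (ξ i))
    (hindep : iIndepFun ξ μ)
    (hmean : ∀ i, ∫ ω, ξ i ω ∂μ = 0)
    (hvar : ∀ i, Integrable (fun ω => ξ i ω ^ 2) μ)
    (hnorm : ∑ i, ∫ ω, ξ i ω ^ 2 ∂μ = 1)
    (W : Ω → ℝ) (hW : ∀ ω, W ω = ∑ i, ξ i ω)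
    (ξb : Fin n → Ω → ℝ)
    (hξb : ∀ i ω, ξb i ω = if |ξ i ω| ≤ 1 then ξ i ω else 0)
    (β₃ : ℝ) (hβ₃ : β₃ = ∑ i, ∫ ω in {ω | |ξ i ω| ≤ 1}, |ξ i ω| ^ 3 ∂μ) :
    (∫ ω, (∑ i, (ξb i ω ^ 2 - ∫ ω', ξb i ω' ^ 2 ∂μ)) ^ 2 ∂μ) ≤ β₃ ∧
    (∫ ω, W ω ^ 2 * (∑ i, ((∫ ω', ξb i ω' ^ 2 ∂μ) - ξb i ω ^ 2)) ^ 2 ∂μ) ≤ 4 * β₃ := by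
  classical
  set m : Fin n → ℝ := fun i => ∫ ω', ξb i ω' ^ 2 ∂μ with hmdef
  have hξbeq : ∀ i ω, ξb i ω = truncR (ξ i ω) := fun i ω => by
    rw [hξb i ω]; rfl
  have hξbmeas : ∀ i, Measurable (ξb i) := by
    intro i
    have e : ξb i = fun ω => truncR (ξ i ω) := funext (hξbeq i)
    rw [e]; exact truncR_meas.comp (hmeas i)
  have hξbabs : ∀ i ω, |ξb i ω| ≤ 1 := fun i ω => by
    rw [hξbeq]; exact truncR_abs _
  have hBint : ∀ (f : Ω → ℝ) (C : ℝ), Measurable f → (∀ ω, |f ω| ≤ C) → Integrable f μ := by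
    intro f C hf hC
    exact Integrable.mono' (integrable_const C) hf.aestronglyMeasurable
      (Filter.Eventually.of_forall fun ω => by simpa [Real.norm_eq_abs] using hC ω)
  have hml2 : ∀ i, MemLp (ξ i) 2 μ := fun i =>
    (memLp_two_iff_integrable_sq (hmeas i).aestronglyMeasurable).2 (hvar i)
  have hξint : ∀ i, Integrable (ξ i) μ := fun i => (hml2 i).integrable one_le_two
  have habs_pow : ∀ (i : Fin n) (ω : Ω) (k : ℕ), |ξb i ω ^ k| ≤ 1 := by
    intro i ω k
    rw [abs_pow]
    exact pow_le_one₀ (abs_nonneg _) (hξbabs i ω)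
  have hIb2 : ∀ i, Integrable (fun ω => ξb i ω ^ 2) μ := fun i =>
    hBint _ 1 ((hξbmeas i).pow_const 2) (fun ω => habs_pow i ω 2)
  have hIb3 : ∀ i, Integrable (fun ω => ξb i ω ^ 3) μ := fun i =>
    hBint _ 1 ((hξbmeas i).pow_const 3) (fun ω => habs_pow i ω 3)
  have hIb4 : ∀ i, Integrable (fun ω => ξb i ω ^ 4) μ := fun i =>
    hBint _ 1 ((hξbmeas i).pow_const 4) (fun ω => habs_pow i ω 4)
  have hIb6 : ∀ i, Integrable (fun ω => ξb i ω ^ 6) μ := fun i =>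
    hBint _ 1 ((hξbmeas i).pow_const 6) (fun ω => habs_pow i ω 6)
  have hIabs3 : ∀ i, Integrable (fun ω => |ξb i ω| ^ 3) μ := fun i =>
    hBint _ 1 (((hξbmeas i).abs).pow_const 3) (fun ω => by
      rw [abs_pow, abs_abs]
      exact pow_le_one₀ (abs_nonneg _) (hξbabs i ω))
  set q : Fin n → ℝ := fun i => ∫ ω, ξb i ω ^ 4 ∂μ with hqdef
  set h6 : Fin n → ℝ := fun i => ∫ ω, ξb i ω ^ 6 ∂μ with hh6def
  set b : Fin n → ℝ := fun i => ∫ ω, |ξb i ω| ^ 3 ∂μ with hbdef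
  set av : Fin n → ℝ := fun i => ∫ ω, ξb i ω ^ 3 ∂μ with havdef
  have hm0 : ∀ i, 0 ≤ m i := fun i => integral_nonneg fun ω => sq_nonneg _
  have hm1 : ∀ i, m i ≤ 1 := by
    intro i
    have h := integral_mono (hIb2 i) (integrable_const 1) (fun ω => by
      nlinarith [hξbabs i ω, abs_nonneg (ξb i ω), sq_abs (ξb i ω)])
    simpa using h
  set fV : Fin n → ℝ → ℝ := fun i x => truncR x ^ 2 - m i with hfVdef
  have hfVmeas : ∀ i, Measurable (fV i) := fun i =>
    (truncR_meas.pow_const 2).sub measurable_const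
  have hfVXi : ∀ i ω, fV i (ξ i ω) = ξb i ω ^ 2 - m i := by
    intro i ω
    rw [hξbeq i ω, hfVdef]
  have hfVbd : ∀ i x, |fV i x| ≤ 1 := by
    intro i x
    have h1 := truncR_abs x
    have h2 := hm0 i
    have h3 := hm1 i
    simp only [hfVdef, abs_le]
    constructor <;> nlinarith [sq_abs (truncR x), abs_nonneg (truncR x), sq_nonneg (truncR x)]
  have hfV0 : ∀ i, ∫ ω, fV i (ξ i ω) ∂μ = 0 := by
    intro i
    have e : (fun ω => fV i (ξ i ω)) = fun ω => ξb i ω ^ 2 - m i :=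
      funext fun ω => hfVXi i ω
    rw [e, integral_sub (hIb2 i) (integrable_const _), integral_const]
    simp [hmdef]
  -- the three per-index integral identities
  have c1 : ∀ i, ∫ ω, fV i (ξ i ω) ^ 2 ∂μ = q i - m i ^ 2 := by
    intro i
    have e : (fun ω => fV i (ξ i ω) ^ 2)
        = fun ω => ξb i ω ^ 4 - 2 * m i * ξb i ω ^ 2 + m i ^ 2 := by
      funext ω; rw [hfVXi i ω]; ring
    have iA : Integrable (fun ω => 2 * m i * ξb i ω ^ 2) μ := (hIb2 i).const_mul (2 * m i)
    have iB : Integrable (fun ω => ξb i ω ^ 4 - 2 * m i * ξb i ω ^ 2) μ := (hIb4 i).sub iA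
    rw [e, integral_add iB (integrable_const _), integral_sub (hIb4 i) iA, integral_const_mul,
      integral_const]
    simp only [hqdef, hmdef, measure_univ, probReal_univ, ENNReal.toReal_one, one_smul, smul_eq_mul, one_mul]
    ring
  have c2 : ∀ i, ∫ ω, ξ i ω ^ 2 * fV i (ξ i ω) ^ 2 ∂μ
      = h6 i - 2 * m i * q i + m i ^ 2 * ∫ ω, ξ i ω ^ 2 ∂μ := by
    intro i
    have e : (fun ω => ξ i ω ^ 2 * fV i (ξ i ω) ^ 2)
        = fun ω => ξb i ω ^ 6 - 2 * m i * ξb i ω ^ 4 + m i ^ 2 * ξ i ω ^ 2 := by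
      funext ω
      rw [hfVXi i ω, hξb i ω]
      split_ifs with h <;> ring
    have iA : Integrable (fun ω => 2 * m i * ξb i ω ^ 4) μ := (hIb4 i).const_mul (2 * m i)
    have iB : Integrable (fun ω => ξb i ω ^ 6 - 2 * m i * ξb i ω ^ 4) μ := (hIb6 i).sub iA
    have iC : Integrable (fun ω => m i ^ 2 * ξ i ω ^ 2) μ := (hvar i).const_mul (m i ^ 2)
    rw [e, integral_add iB iC, integral_sub (hIb6 i) iA, integral_const_mul, integral_const_mul]
  have c3 : ∀ i, ∫ ω, ξ i ω * fV i (ξ i ω) ∂μ = av i := by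
    intro i
    have e : (fun ω => ξ i ω * fV i (ξ i ω))
        = fun ω => ξb i ω ^ 3 - m i * ξ i ω := by
      funext ω
      rw [hfVXi i ω, hξb i ω]
      split_ifs with h <;> ring
    have iA : Integrable (fun ω => m i * ξ i ω) μ := (hξint i).const_mul (m i)
    rw [e, integral_sub (hIb3 i) iA, integral_const_mul, hmean i, mul_zero, sub_zero, havdef]
  -- moment comparisons
  have hqb : ∀ i, q i ≤ b i := fun i =>
    integral_mono (hIb4 i) (hIabs3 i) fun ω => p4le _ (hξbabs i ω)
  have hbm : ∀ i, b i ≤ m i := fun i =>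
    integral_mono (hIabs3 i) (hIb2 i) fun ω => p3le _ (hξbabs i ω)
  have hh6q : ∀ i, h6 i ≤ q i := fun i =>
    integral_mono (hIb6 i) (hIb4 i) fun ω => p6le _ (hξbabs i ω)
  have hh60 : ∀ i, 0 ≤ h6 i := fun i => integral_nonneg fun ω => by positivity
  have hb0 : ∀ i, 0 ≤ b i := fun i => integral_nonneg fun ω => by positivity
  have hq0 : ∀ i, 0 ≤ q i := fun i => integral_nonneg fun ω => by positivity
  have hmS : ∀ i, m i ≤ ∫ ω, ξ i ω ^ 2 ∂μ := by
    intro i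
    refine integral_mono (hIb2 i) (hvar i) fun ω => ?_
    rw [hξb i ω]
    split_ifs with h
    · exact le_rfl
    · simpa using sq_nonneg (ξ i ω)
  have hS0 : ∀ i, (0:ℝ) ≤ ∫ ω, ξ i ω ^ 2 ∂μ := fun i => integral_nonneg fun ω => sq_nonneg _
  have hS1 : ∀ i, ∫ ω, ξ i ω ^ 2 ∂μ ≤ 1 := by
    intro i
    calc ∫ ω, ξ i ω ^ 2 ∂μ ≤ ∑ j, ∫ ω, ξ j ω ^ 2 ∂μ :=
          Finset.single_le_sum (fun j _ => hS0 j) (Finset.mem_univ i)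
      _ = 1 := hnorm
  have hm2q : ∀ i, m i ^ 2 ≤ q i := by
    intro i
    have h := integral_nonneg (f := fun ω => fV i (ξ i ω) ^ 2) (fun ω => sq_nonneg (fV i (ξ i ω))) (μ := μ)
    rw [c1 i] at h
    linarith
  have hab : ∀ i, |av i| ≤ b i := by
    intro i
    have h := norm_integral_le_integral_norm (μ := μ) (fun ω => ξb i ω ^ 3)
    simp only [Real.norm_eq_abs, abs_pow] at h
    simpa only [havdef, hbdef] using h
  have hbeq : β₃ = ∑ i, b i := by
    rw [hβ₃]
    refine Finset.sum_congr rfl fun i _ => ?_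
    have hSm : MeasurableSet {ω | |ξ i ω| ≤ 1} :=
      measurableSet_le (hmeas i).abs measurable_const
    rw [← integral_indicator hSm, hbdef]
    congr 1
    funext ω
    by_cases h : |ξ i ω| ≤ 1 <;>
      simp [Set.indicator_apply, Set.mem_setOf_eq, h, hξb i ω]
  have hβ0 : 0 ≤ β₃ := by
    rw [hbeq]; exact Finset.sum_nonneg fun i _ => hb0 i
  have hβ1 : β₃ ≤ 1 := by
    rw [hbeq]
    calc ∑ i, b i ≤ ∑ i, m i := Finset.sum_le_sum fun i _ => hbm i
      _ ≤ ∑ i, ∫ ω, ξ i ω ^ 2 ∂μ := Finset.sum_le_sum fun i _ => hmS i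
      _ = 1 := hnorm
  have hVint : ∀ i, Integrable (fun ω => fV i (ξ i ω)) μ := fun i =>
    hBint _ 1 ((hfVmeas i).comp (hmeas i)) (fun ω => hfVbd i _)
  have hVVint : ∀ i j, Integrable (fun ω => fV i (ξ i ω) * fV j (ξ j ω)) μ := by
    intro i j
    refine hBint _ 1 (((hfVmeas i).comp (hmeas i)).mul ((hfVmeas j).comp (hmeas j)))
      (fun ω => ?_)
    rw [abs_mul]
    exact mul_le_one₀ (hfVbd i _) (abs_nonneg _) (hfVbd j _)
  have hfacVV : ∀ i j, i ≠ j → ∫ ω, fV i (ξ i ω) * fV j (ξ j ω) ∂μ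
      = (∫ ω, fV i (ξ i ω) ∂μ) * ∫ ω, fV j (ξ j ω) ∂μ := fun i j h =>
    ((hindep.indepFun h).comp (hfVmeas i) (hfVmeas j)).integral_mul_of_integrable
      (hVint i) (hVint j)
  constructor
  · -- first bound
    have e1 : (fun ω => (∑ i, (ξb i ω ^ 2 - m i)) ^ 2)
        = fun ω => (∑ i, fV i (ξ i ω)) * (∑ i, fV i (ξ i ω)) := by
      funext ω
      have hs : ∑ i, (ξb i ω ^ 2 - m i) = ∑ i, fV i (ξ i ω) :=
        Finset.sum_congr rfl fun i _ => (hfVXi i ω).symm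
      rw [pow_two, hs]
    rw [e1, sum_mul_sum_int hfV0 hfV0 hVVint hfacVV Finset.univ]
    have r0 : ∑ i, ∫ ω, fV i (ξ i ω) * fV i (ξ i ω) ∂μ = ∑ i, (q i - m i ^ 2) := by
      refine Finset.sum_congr rfl fun i _ => ?_
      have e : (fun ω => fV i (ξ i ω) * fV i (ξ i ω)) = fun ω => fV i (ξ i ω) ^ 2 := by
        funext ω; ring
      rw [e, c1 i]
    rw [r0]
    calc ∑ i, (q i - m i ^ 2) ≤ ∑ i, b i :=
          Finset.sum_le_sum fun i _ => by nlinarith [hqb i, sq_nonneg (m i)]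
      _ = β₃ := hbeq.symm
  · -- second bound
    have e2 : (fun ω => W ω ^ 2 * (∑ i, (m i - ξb i ω ^ 2)) ^ 2)
        = fun ω => (∑ i, ξ i ω) ^ 2 * (∑ i, fV i (ξ i ω)) ^ 2 := by
      funext ω
      have hsum : ∑ i, (m i - ξb i ω ^ 2) = -∑ i, fV i (ξ i ω) := by
        rw [← Finset.sum_neg_distrib]
        exact Finset.sum_congr rfl fun i _ => by rw [hfVXi i ω]; ring
      rw [hW ω, hsum]
      ring
    rw [e2, big_expand hmeas hindep fV hfVmeas hfVbd hmean hvar hfV0 Finset.univ]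
    have r1 : ∑ i, ∫ ω, ξ i ω ^ 2 * fV i (ξ i ω) ^ 2 ∂μ
        = ∑ i, (h6 i - 2 * m i * q i + m i ^ 2 * ∫ ω, ξ i ω ^ 2 ∂μ) :=
      Finset.sum_congr rfl fun i _ => c2 i
    have r2 : ∑ i, ∫ ω, fV i (ξ i ω) ^ 2 ∂μ = ∑ i, (q i - m i ^ 2) :=
      Finset.sum_congr rfl fun i _ => c1 i
    have r4 : ∑ i, (∫ ω, ξ i ω ^ 2 ∂μ) * ∫ ω, fV i (ξ i ω) ^ 2 ∂μ
        = ∑ i, (∫ ω, ξ i ω ^ 2 ∂μ) * (q i - m i ^ 2) :=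
      Finset.sum_congr rfl fun i _ => by rw [c1 i]
    have r5 : ∑ i, ∫ ω, ξ i ω * fV i (ξ i ω) ∂μ = ∑ i, av i :=
      Finset.sum_congr rfl fun i _ => c3 i
    have r6 : ∑ i, (∫ ω, ξ i ω * fV i (ξ i ω) ∂μ) ^ 2 = ∑ i, av i ^ 2 :=
      Finset.sum_congr rfl fun i _ => by rw [c3 i]
    rw [r1, r2, r4, r5, r6, hnorm, one_mul]
    have hsum1 : ∑ i, (h6 i - 2 * m i * q i + m i ^ 2 * ∫ ω, ξ i ω ^ 2 ∂μ)
        + ∑ i, (q i - m i ^ 2) - ∑ i, (∫ ω, ξ i ω ^ 2 ∂μ) * (q i - m i ^ 2) ≤ 2 * β₃ := by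
      rw [← Finset.sum_add_distrib, ← Finset.sum_sub_distrib]
      calc ∑ i, (h6 i - 2 * m i * q i + m i ^ 2 * ∫ ω, ξ i ω ^ 2 ∂μ
              + (q i - m i ^ 2) - (∫ ω, ξ i ω ^ 2 ∂μ) * (q i - m i ^ 2))
          ≤ ∑ i, 2 * b i := Finset.sum_le_sum fun i _ =>
            Dbound (m i) (q i) (h6 i) (b i) (∫ ω, ξ i ω ^ 2 ∂μ) (hm0 i) (hS0 i) (hS1 i)
              (hh60 i) (hh6q i) (hqb i) (hm2q i)
        _ = 2 * β₃ := by rw [← Finset.mul_sum, ← hbeq]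
    have ha1 : |∑ i, av i| ≤ β₃ := by
      calc |∑ i, av i| ≤ ∑ i, |av i| := Finset.abs_sum_le_sum_abs _ _
        _ ≤ ∑ i, b i := Finset.sum_le_sum fun i _ => hab i
        _ = β₃ := hbeq.symm
    have ha2 : (∑ i, av i) ^ 2 ≤ β₃ ^ 2 := by
      rw [← sq_abs]
      exact pow_le_pow_left₀ (abs_nonneg _) ha1 2
    have ha3 : 0 ≤ ∑ i, av i ^ 2 := Finset.sum_nonneg fun i _ => sq_nonneg _
    nlinarith [hsum1, ha2, ha3, mul_nonneg hβ0 (sub_nonneg.2 hβ1)]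
end
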